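/- arXiv:1305.4296 — 13 statements merged into one kernel-verified Lean document; each statement's English description precedes it below -/
import Mathlib

section
/- Let y ∈ X, let a ∈ P_A(y), let λ ∈ (0,1], and set x := (1−λ)y + λa. Then: (i) a is the unique nearest point of x in A, i.e. P_A(x) = {a}; (ii) x − y = λ(a − y), and hence ‖x − y‖ = λ‖a − y‖ = λ·d_A(y); (iii) λ(x − a) = (1−λ)(y − x). -/
open Filter Topology RealInnerProductSpace

/-- The set of nearest points of `u` in `C`. -/
def projSet {X : Type*} [NormedAddCommGroup X] (C : Set X) (u : X) : Set X :=
  {c ∈ C | ‖u - c‖ = Metric.infDist u C}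

/-- Proposition 3.2: properties of relaxed projections. -/
theorem relaxed_projection_properties
    {X : Type*} [NormedAddCommGroup X] [InnerProductSpace ℝ X] [FiniteDimensional ℝ X]
    (A : Set X) (hA : A.Nonempty) (hAclosed : IsClosed A)
    (y a : X) (ha : a ∈ projSet A y)
    (lam : ℝ) (hlam : lam ∈ Set.Ioc (0 : ℝ) 1)
    (x : X) (hx : x = (1 - lam) • y + lam • a) :
    projSet A x = {a} ∧
    x - y = lam • (a - y) ∧
    ‖x - y‖ = lam * ‖a - y‖ ∧
    ‖x - y‖ = lam * Metric.infDist y A ∧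
    lam • (x - a) = (1 - lam) • (y - x) := by
  obtain ⟨hlam0, hlam1⟩ := hlam
  obtain ⟨haA, hay⟩ := ha
  have hinf : Metric.infDist y A = ‖y - a‖ := hay.symm
  have hxy : x - y = lam • (a - y) := by rw [hx]; module
  have hnxy : ‖x - y‖ = lam * ‖a - y‖ := by
    rw [hxy, norm_smul, Real.norm_eq_abs, abs_of_pos hlam0]
  have hxa : x - a = (1 - lam) • (y - a) := by rw [hx]; module
  have hnxa : ‖x - a‖ = (1 - lam) * ‖y - a‖ := by
    rw [hxa, norm_smul, Real.norm_eq_abs, abs_of_nonneg (by linarith)]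
  have hnay : ‖a - y‖ = ‖y - a‖ := norm_sub_rev _ _
  -- infDist x A = ‖x - a‖
  have hinfx : Metric.infDist x A = ‖x - a‖ := by
    apply le_antisymm
    · simpa [dist_eq_norm] using Metric.infDist_le_dist_of_mem haA
    · by_contra h
      obtain ⟨c, hc, hlt⟩ := (Metric.infDist_lt_iff hA).mp (lt_of_not_ge h)
      have h1 : ‖y - a‖ ≤ ‖y - c‖ := by
        rw [hay, ← dist_eq_norm]
        exact Metric.infDist_le_dist_of_mem hc
      have h2 : ‖y - c‖ ≤ ‖y - x‖ + ‖x - c‖ := by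
        simpa using norm_sub_le_norm_sub_add_norm_sub y x c
      have h3 : ‖y - x‖ = lam * ‖y - a‖ := by
        rw [← norm_neg, neg_sub, hnxy, hnay]
      rw [dist_eq_norm] at hlt
      rw [hnxa] at hlt
      nlinarith
  refine ⟨?_, hxy, hnxy, by rw [hnxy, hinf, hnay], by rw [hx]; module⟩
  ext b
  simp only [projSet, Set.mem_setOf_eq, Set.mem_singleton_iff]
  constructor
  · rintro ⟨hbA, hb⟩
    rw [hinfx] at hb
    by_cases hya : y = a
    · have : ‖x - b‖ = 0 := by
        rw [hb, hnxa, hya]; simp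
      have hxb : x = b := by
        rwa [norm_sub_eq_zero_iff] at this
      rw [← hxb, hx, hya]; module
    · -- triangle equality
      have h1 : ‖y - b‖ ≤ ‖y - x‖ + ‖x - b‖ := by
        simpa using norm_sub_le_norm_sub_add_norm_sub y x b
      have h3 : ‖y - x‖ = lam * ‖y - a‖ := by
        rw [← norm_neg, neg_sub, hnxy, hnay]
      have h4 : ‖y - x‖ + ‖x - b‖ = ‖y - a‖ := by
        rw [h3, hb, hnxa]; ring
      have h5 : ‖y - a‖ ≤ ‖y - b‖ := by
        rw [hay, ← dist_eq_norm]
        exact Metric.infDist_le_dist_of_mem hbA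
      have heq : ‖(y - x) + (x - b)‖ = ‖y - x‖ + ‖x - b‖ := by
        have : (y - x) + (x - b) = y - b := by abel
        rw [this, h4]
        linarith
      have hray : SameRay ℝ (y - x) (x - b) := sameRay_iff_norm_add.mpr heq
      have hsm : ‖y - x‖ • (x - b) = ‖x - b‖ • (y - x) := by
        rwa [sameRay_iff_norm_smul_eq] at hray
      have hyx : y - x = lam • (y - a) := by rw [hx]; module
      rw [h3, hb, hnxa, hyx, smul_smul] at hsm
      have hd : ‖y - a‖ ≠ 0 := by
        simpa [sub_eq_zero] using hya
      have hsm2 : x - b = (1 - lam) • (y - a) := by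
        have hpos : (0 : ℝ) < lam * ‖y - a‖ := by
          positivity
        have := smul_right_injective X (ne_of_gt hpos)
        apply this
        show (lam * ‖y - a‖) • (x - b) = (lam * ‖y - a‖) • ((1 - lam) • (y - a))
        rw [hsm, smul_smul]
        ring_nf
      have : b = x - (1 - lam) • (y - a) := by
        rw [← hsm2]; abel
      rw [this, hx]; module
  · rintro rfl
    exact ⟨haA, by rw [hinfx]⟩
end

section
/- Let (a_n), (x_n), (b_n), (y_n) be MARP sequences with starting point y_{−1}, let n ∈ ℕ, and let θ ∈ [0,1] be such that ⟨y_n − x_n, y_{n−1} − x_n⟩ ≤ θ‖y_n − x_n‖·‖x_n − y_{n−1}‖. Then ‖x_{n+1} − y_n‖ ≤ (λ_{n+1}/λ_n)·√(λ_n² + (1−λ_n)² + 2θλ_n(1−λ_n)) · max{‖y_n − x_n‖, ‖x_n − y_{n−1}‖}. -/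
open Filter Topology RealInnerProductSpace

/-- MARP sequences: here `Y n` denotes `y_{n-1}`, so `Y 0 = y_{-1}` is the starting
point and `Y (n+1) = y_n`. -/
def IsMARP {X : Type*} [NormedAddCommGroup X] [NormedSpace ℝ X]
    (A B : Set X) (lam mu : ℕ → ℝ) (a x b Y : ℕ → X) : Prop :=
  ∀ n : ℕ, a n ∈ projSet A (Y n) ∧ x n = (1 - lam n) • Y n + lam n • a n ∧
    b n ∈ projSet B (x n) ∧ Y (n + 1) = (1 - mu n) • x n + mu n • b n

/-- Lemma 3.8: the key one-step contraction estimate for the MARP. -/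
theorem marp_one_step_estimate
    {X : Type*} [NormedAddCommGroup X] [InnerProductSpace ℝ X] [FiniteDimensional ℝ X]
    (A B : Set X) (hA : A.Nonempty) (hAclosed : IsClosed A)
    (hB : B.Nonempty) (hBclosed : IsClosed B)
    (lam mu : ℕ → ℝ) (hlam : ∀ n, lam n ∈ Set.Ioc (0 : ℝ) 1)
    (hmu : ∀ n, mu n ∈ Set.Ioc (0 : ℝ) 1)
    (a x b Y : ℕ → X) (hMARP : IsMARP A B lam mu a x b Y)
    (n : ℕ) (θ : ℝ) (hθ : θ ∈ Set.Icc (0 : ℝ) 1)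
    (hang : ⟪Y (n + 1) - x n, Y n - x n⟫ ≤ θ * ‖Y (n + 1) - x n‖ * ‖x n - Y n‖) :
    ‖x (n + 1) - Y (n + 1)‖ ≤
      (lam (n + 1) / lam n) *
        Real.sqrt ((lam n) ^ 2 + (1 - lam n) ^ 2 + 2 * θ * lam n * (1 - lam n)) *
          max (‖Y (n + 1) - x n‖) (‖x n - Y n‖) := by
  obtain ⟨hlam0, hlam1⟩ := hlam n
  obtain ⟨hlam0', hlam1'⟩ := hlam (n + 1)
  obtain ⟨haA, hax, -, -⟩ := hMARP n
  obtain ⟨haA', hax', -, -⟩ := hMARP (n + 1)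
  obtain ⟨hθ0, hθ1⟩ := hθ
  set u := Y (n + 1) - x n with hu
  set v := Y n - x n with hv
  set M := max ‖u‖ ‖v‖ with hM
  have hvnorm : ‖x n - Y n‖ = ‖v‖ := by rw [hv, norm_sub_rev]
  have huM : ‖u‖ ≤ M := le_max_left _ _
  have hvM : ‖v‖ ≤ M := le_max_right _ _
  have hM0 : 0 ≤ M := le_trans (norm_nonneg u) huM
  -- key identity: lam n • (Y (n+1) - a n) = lam n • u + (1 - lam n) • v
  have hkey : lam n • (Y (n + 1) - a n) = lam n • u + (1 - lam n) • v := by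
    have : lam n • a n = x n - (1 - lam n) • Y n := by
      rw [hax]; abel
    rw [hu, hv, smul_sub, this]
    module
  have hsq : ‖lam n • u + (1 - lam n) • v‖ ^ 2 ≤
      ((lam n) ^ 2 + (1 - lam n) ^ 2 + 2 * θ * lam n * (1 - lam n)) * M ^ 2 := by
    have hexp := norm_add_sq_real (lam n • u) ((1 - lam n) • v)
    rw [norm_smul, norm_smul, real_inner_smul_left, real_inner_smul_right,
      Real.norm_eq_abs, Real.norm_eq_abs, abs_of_pos hlam0,
      abs_of_nonneg (by linarith : (0:ℝ) ≤ 1 - lam n)] at hexp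
    rw [hexp]
    have hang' : ⟪u, v⟫ ≤ θ * ‖u‖ * ‖v‖ := by rw [← hvnorm]; exact hang
    have huM2 : ‖u‖ ^ 2 ≤ M ^ 2 := pow_le_pow_left₀ (norm_nonneg u) huM 2
    have hvM2 : ‖v‖ ^ 2 ≤ M ^ 2 := pow_le_pow_left₀ (norm_nonneg v) hvM 2
    have hiv : ⟪u, v⟫ ≤ θ * M ^ 2 := by
      refine hang'.trans ?_
      have : ‖u‖ * ‖v‖ ≤ M * M :=
        mul_le_mul huM hvM (norm_nonneg v) hM0
      nlinarith
    have hfac : (0:ℝ) ≤ lam n * (1 - lam n) :=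
      mul_nonneg hlam0.le (by linarith)
    nlinarith [mul_le_mul_of_nonneg_left hiv hfac,
      mul_le_mul_of_nonneg_left huM2 (sq_nonneg (lam n)),
      mul_le_mul_of_nonneg_left hvM2 (sq_nonneg (1 - lam n))]
  have hC0 : 0 ≤ (lam n) ^ 2 + (1 - lam n) ^ 2 + 2 * θ * lam n * (1 - lam n) := by
    nlinarith [sq_nonneg (lam n), sq_nonneg (1 - lam n)]
  have hle : ‖lam n • u + (1 - lam n) • v‖ ≤
      Real.sqrt ((lam n) ^ 2 + (1 - lam n) ^ 2 + 2 * θ * lam n * (1 - lam n)) * M := by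
    have := Real.sqrt_le_sqrt hsq
    rwa [Real.sqrt_sq (norm_nonneg _), Real.sqrt_mul hC0, Real.sqrt_sq hM0] at this
  -- ‖Y (n+1) - a n‖ bound
  have hYa : lam n * ‖Y (n + 1) - a n‖ ≤
      Real.sqrt ((lam n) ^ 2 + (1 - lam n) ^ 2 + 2 * θ * lam n * (1 - lam n)) * M := by
    calc lam n * ‖Y (n + 1) - a n‖ = ‖lam n • (Y (n + 1) - a n)‖ := by
          rw [norm_smul, Real.norm_eq_abs, abs_of_pos hlam0]
      _ = ‖lam n • u + (1 - lam n) • v‖ := by rw [hkey]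
      _ ≤ _ := hle
  -- projection step
  have hstep : ‖x (n + 1) - Y (n + 1)‖ = lam (n + 1) * ‖Y (n + 1) - a (n + 1)‖ := by
    have : x (n + 1) - Y (n + 1) = lam (n + 1) • (a (n + 1) - Y (n + 1)) := by
      rw [hax']; module
    rw [this, norm_smul, Real.norm_eq_abs, abs_of_pos hlam0', norm_sub_rev]
  have hproj : ‖Y (n + 1) - a (n + 1)‖ ≤ ‖Y (n + 1) - a n‖ := by
    obtain ⟨hmem', heq'⟩ := haA'
    obtain ⟨hmem, -⟩ := haA
    rw [heq']
    have := Metric.infDist_le_dist_of_mem (x := Y (n + 1)) hmem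
    rwa [dist_eq_norm] at this
  rw [hstep, hvnorm, ← hM]
  have hfinal := mul_le_mul_of_nonneg_left hYa
    (le_of_lt (div_pos hlam0' hlam0) : (0:ℝ) ≤ lam (n + 1) / lam n)
  calc lam (n + 1) * ‖Y (n + 1) - a (n + 1)‖
      ≤ lam (n + 1) * ‖Y (n + 1) - a n‖ :=
        mul_le_mul_of_nonneg_left hproj hlam0'.le
    _ = lam (n + 1) / lam n * (lam n * ‖Y (n + 1) - a n‖) := by
        field_simp
    _ ≤ lam (n + 1) / lam n *
        (Real.sqrt ((lam n) ^ 2 + (1 - lam n) ^ 2 + 2 * θ * lam n * (1 - lam n)) * M) := hfinal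
    _ = _ := by ring
end

section
/- Let (a_n), (x_n), (b_n), (y_n) be MARP sequences with starting point y_{−1}, let n ∈ ℕ, and let θ ∈ [0,1] be such that ⟨x_{n+1} − y_n, x_n − y_n⟩ ≤ θ‖x_{n+1} − y_n‖·‖y_n − x_n‖. Then ‖y_{n+1} − x_{n+1}‖ ≤ (μ_{n+1}/μ_n)·√(μ_n² + (1−μ_n)² + 2θμ_n(1−μ_n)) · max{‖x_{n+1} − y_n‖, ‖y_n − x_n‖}. -/
open Filter Topology RealInnerProductSpace

/-- Lemma 3.9: the companion one-step contraction estimate for the MARP. -/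
theorem marp_one_step_estimate'
    {X : Type*} [NormedAddCommGroup X] [InnerProductSpace ℝ X] [FiniteDimensional ℝ X]
    (A B : Set X) (hA : A.Nonempty) (hAclosed : IsClosed A)
    (hB : B.Nonempty) (hBclosed : IsClosed B)
    (lam mu : ℕ → ℝ) (hlam : ∀ n, lam n ∈ Set.Ioc (0 : ℝ) 1)
    (hmu : ∀ n, mu n ∈ Set.Ioc (0 : ℝ) 1)
    (a x b Y : ℕ → X) (hMARP : IsMARP A B lam mu a x b Y)
    (n : ℕ) (θ : ℝ) (hθ : θ ∈ Set.Icc (0 : ℝ) 1)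
    (hang : ⟪x (n + 1) - Y (n + 1), x n - Y (n + 1)⟫ ≤
      θ * ‖x (n + 1) - Y (n + 1)‖ * ‖Y (n + 1) - x n‖) :
    ‖Y (n + 2) - x (n + 1)‖ ≤
      (mu (n + 1) / mu n) *
        Real.sqrt ((mu n) ^ 2 + (1 - mu n) ^ 2 + 2 * θ * mu n * (1 - mu n)) *
          max (‖x (n + 1) - Y (n + 1)‖) (‖Y (n + 1) - x n‖) := by
  obtain ⟨haA, hx, hbB, hY⟩ := hMARP n
  obtain ⟨haA', hx', hbB', hY'⟩ := hMARP (n+1)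
  obtain ⟨hμ0, hμ1⟩ := hmu n
  obtain ⟨hν0, hν1⟩ := hmu (n+1)
  rw [show ‖Y (n+1) - x n‖ = ‖x n - Y (n+1)‖ from norm_sub_rev _ _] at hang ⊢
  set u := x (n+1) - Y (n+1) with hu
  set v := x n - Y (n+1) with hv
  set μ := mu n with hμ
  set ν := mu (n+1) with hν
  set M := max ‖u‖ ‖v‖ with hM
  set c := (1-μ)/μ with hc
  set S := μ^2 + (1-μ)^2 + 2*θ*μ*(1-μ) with hS
  have hMu : ‖u‖ ≤ M := le_max_left _ _
  have hMv : ‖v‖ ≤ M := le_max_right _ _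
  have hM0 : (0:ℝ) ≤ M := le_trans (norm_nonneg u) hMu
  have hc0 : (0:ℝ) ≤ c := div_nonneg (by linarith) hμ0.le
  have hS0 : (0:ℝ) ≤ S := by
    have h1 : 0 ≤ 2*θ*μ*(1-μ) :=
      mul_nonneg (mul_nonneg (mul_nonneg (by norm_num) hθ.1) hμ0.le) (by linarith)
    nlinarith [sq_nonneg μ, sq_nonneg (1-μ)]
  have hSc : S = μ^2 * (1 + c^2 + 2*θ*c) := by
    rw [hS, hc]; field_simp
  have hb : μ • b n = Y (n+1) - (1-μ) • x n := by rw [hY]; abel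
  have hbn : x (n+1) - b n = u + c • v := by
    apply smul_right_injective X (ne_of_gt hμ0)
    show μ • (x (n+1) - b n) = μ • (u + c • v)
    rw [hu, hv, hc, smul_sub, hb]
    match_scalars <;> field_simp <;> ring
  have hexp : ‖u + c • v‖^2 = ‖u‖^2 + 2*c*⟪u,v⟫ + c^2*‖v‖^2 := by
    rw [norm_add_sq_real, real_inner_smul_right, norm_smul, Real.norm_eq_abs,
      abs_of_nonneg hc0]
    ring
  have hsq : ‖u + c • v‖^2 ≤ (1 + c^2 + 2*θ*c) * M^2 := by
    rw [hexp]
    nlinarith [hang, hMu, hMv, norm_nonneg u, norm_nonneg v, hθ.1, hc0,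
      mul_nonneg hc0 hθ.1, mul_le_mul hMu hMv (norm_nonneg v) hM0,
      mul_le_mul hMu hMu (norm_nonneg u) hM0, mul_le_mul hMv hMv (norm_nonneg v) hM0]
  have hR0 : (0:ℝ) ≤ (1/μ) * Real.sqrt S * M := by positivity
  have hfinal : ‖u + c • v‖ ≤ (1/μ) * Real.sqrt S * M := by
    have hRsq : ((1/μ) * Real.sqrt S * M)^2 = (1 + c^2 + 2*θ*c) * M^2 := by
      rw [mul_pow, mul_pow, Real.sq_sqrt hS0, hSc]
      field_simp
    have h2 : ‖u + c • v‖^2 ≤ ((1/μ) * Real.sqrt S * M)^2 := by rw [hRsq]; exact hsq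
    have := Real.sqrt_le_sqrt h2
    rwa [Real.sqrt_sq (norm_nonneg _), Real.sqrt_sq hR0] at this
  have hgoalL : Y (n+2) - x (n+1) = ν • (b (n+1) - x (n+1)) := by
    rw [hY']; module
  calc ‖Y (n+2) - x (n+1)‖ = ν * ‖b (n+1) - x (n+1)‖ := by
        rw [hgoalL, norm_smul, Real.norm_eq_abs, abs_of_pos hν0]
    _ ≤ ν * ‖x (n+1) - b n‖ := by
        apply mul_le_mul_of_nonneg_left _ hν0.le
        rw [norm_sub_rev, hbB'.2]
        rw [show ‖x (n+1) - b n‖ = dist (x (n+1)) (b n) from (dist_eq_norm _ _).symm]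
        exact Metric.infDist_le_dist_of_mem hbB.1
    _ ≤ ν * ((1/μ) * Real.sqrt S * M) := by
        rw [hbn]; exact mul_le_mul_of_nonneg_left hfinal hν0.le
    _ = (ν/μ) * Real.sqrt S * M := by ring
end

section
/- Let (X,d) be a complete metric space, let (x_n)_{n∈ℕ} and (y_n)_{n≥−1} be sequences in X, and let r > 0 and ρ ∈ [0,1). Assume the sequences have the alternating contraction property at y_{−1} with parameters (r,ρ), and that M := max{d(y_0, x_0), d(x_0, y_{−1})} ≤ r(1−ρ)/2. Then there exists c̄ ∈ X such that for all n ∈ ℕ, max{d(x_n, c̄), d(y_n, c̄)} ≤ (M(1+ρ)/(1−ρ))·ρ^n ≤ (r(1+ρ)/2)·ρ^n; in particular (x_n) and (y_n) converge linearly to c̄ with rate ρ. Moreover, all x_n, all y_n (n ∈ ℕ) and c̄ lie in the closed ball of radius r centered at y_{−1}. -/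
open Filter Topology

/-- The alternating contraction property at `c` with parameters `(r, ρ)`.
Here `Y n` denotes `y_{n-1}`, so `Y 0 = y_{-1}` and `Y (n+1) = y_n`. -/
def AltContraction {X : Type*} [MetricSpace X] (x Y : ℕ → X) (c : X) (r ρ : ℝ) : Prop :=
  ∀ n : ℕ,
    (max (dist (x n) c) (dist (Y (n + 1)) c) ≤ r →
      dist (Y (n + 1)) (x (n + 1)) ≤ ρ * max (dist (Y n) (x n)) (dist (x n) (Y (n + 1)))) ∧
    (max (dist (Y (n + 1)) c) (dist (x (n + 1)) c) ≤ r →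
      dist (x (n + 1)) (Y (n + 2)) ≤
        ρ * max (dist (x n) (Y (n + 1))) (dist (Y (n + 1)) (x (n + 1))))

/-- Theorem 4.3 (abstract linear convergence). -/
theorem abstract_linear_convergence_of_alt_contraction
    {X : Type*} [MetricSpace X] [CompleteSpace X]
    (x Y : ℕ → X) (r ρ : ℝ) (hr : 0 < r) (hρ : ρ ∈ Set.Ico (0 : ℝ) 1)
    (hcontr : AltContraction x Y (Y 0) r ρ)
    (M : ℝ) (hMdef : M = max (dist (Y 1) (x 0)) (dist (x 0) (Y 0)))
    (hM : M ≤ r * (1 - ρ) / 2) :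
    ∃ c : X,
      (∀ n : ℕ, max (dist (x n) c) (dist (Y (n + 1)) c) ≤ M * (1 + ρ) / (1 - ρ) * ρ ^ n ∧
        M * (1 + ρ) / (1 - ρ) * ρ ^ n ≤ r * (1 + ρ) / 2 * ρ ^ n) ∧
      Tendsto x atTop (nhds c) ∧ Tendsto (fun n => Y (n + 1)) atTop (nhds c) ∧
      (∀ n : ℕ, dist (x n) (Y 0) ≤ r ∧ dist (Y (n + 1)) (Y 0) ≤ r) ∧
      dist c (Y 0) ≤ r := by
  obtain ⟨hρ0, hρ1⟩ := hρ
  have h1ρ : (0:ℝ) < 1 - ρ := by linarith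
  have hM0 : 0 ≤ M := by rw [hMdef]; exact le_trans dist_nonneg (le_max_left _ _)
  have hpow : ∀ n : ℕ, 0 ≤ ρ ^ n := fun n => pow_nonneg hρ0 n
  have hpow1 : ∀ n : ℕ, ρ ^ n ≤ 1 := fun n => pow_le_one₀ hρ0 hρ1.le
  have key : ∀ n, dist (Y n) (x n) ≤ M * ρ ^ n ∧ dist (x n) (Y (n+1)) ≤ M * ρ ^ n ∧
      dist (x n) (Y 0) * (1 - ρ) ≤ M * (2 - ρ ^ n - ρ ^ (n+1)) := by
    intro n
    induction n with
    | zero =>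
      have h0 : dist (x 0) (Y 0) ≤ M := by rw [hMdef]; exact le_max_right _ _
      have h1 : dist (x 0) (Y 1) ≤ M := by
        rw [hMdef, dist_comm]; exact le_max_left _ _
      refine ⟨by simpa [dist_comm] using h0, by simpa using h1, ?_⟩
      have e : ρ ^ (0+1) = ρ := pow_one ρ
      have e0 : ρ ^ (0:ℕ) = 1 := pow_zero ρ
      nlinarith [mul_le_mul_of_nonneg_right h0 h1ρ.le]
    | succ n ih =>
      obtain ⟨h1, h2, h3⟩ := ih
      have hps : ρ ^ (n+1) = ρ * ρ ^ n := by ring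
      have hps2 : ρ ^ (n+2) = ρ * ρ ^ (n+1) := by ring
      have hxnc : dist (x n) (Y 0) ≤ r := by nlinarith [hpow n, hpow (n+1)]
      have hYnc : dist (Y (n+1)) (Y 0) ≤ r := by
        have ht := dist_triangle (Y (n+1)) (x n) (Y 0)
        rw [dist_comm (Y (n+1)) (x n)] at ht
        nlinarith [hpow n, hpow (n+1)]
      have hD2 : dist (Y (n+1)) (x (n+1)) ≤ M * ρ ^ (n+1) := by
        have := (hcontr n).1 (max_le hxnc hYnc)
        have hmax : max (dist (Y n) (x n)) (dist (x n) (Y (n+1))) ≤ M * ρ ^ n :=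
          max_le h1 h2
        calc dist (Y (n+1)) (x (n+1)) ≤ ρ * max (dist (Y n) (x n)) (dist (x n) (Y (n+1))) := this
          _ ≤ ρ * (M * ρ ^ n) := by exact mul_le_mul_of_nonneg_left hmax hρ0
          _ = M * ρ ^ (n+1) := by ring
      have h3' : dist (x (n+1)) (Y 0) * (1 - ρ) ≤ M * (2 - ρ ^ (n+1) - ρ ^ (n+2)) := by
        have ht := dist_triangle4 (x (n+1)) (Y (n+1)) (x n) (Y 0)
        rw [dist_comm (x (n+1)) (Y (n+1)), dist_comm (Y (n+1)) (x n)] at ht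
        nlinarith [hpow n, hpow (n+1), hpow (n+2)]
      have hxn1c : dist (x (n+1)) (Y 0) ≤ r := by
        nlinarith [hpow (n+1), hpow (n+2)]
      have hD3 : dist (x (n+1)) (Y (n+2)) ≤ M * ρ ^ (n+1) := by
        have := (hcontr n).2 (max_le hYnc hxn1c)
        have hD2' : dist (Y (n+1)) (x (n+1)) ≤ M * ρ ^ n := by
          nlinarith [hD2, mul_nonneg (mul_nonneg hM0 (hpow n)) h1ρ.le, hps]
        have hmax : max (dist (x n) (Y (n+1))) (dist (Y (n+1)) (x (n+1))) ≤ M * ρ ^ n :=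
          max_le h2 hD2'
        calc dist (x (n+1)) (Y (n+2)) ≤ _ := this
          _ ≤ ρ * (M * ρ ^ n) := by exact mul_le_mul_of_nonneg_left hmax hρ0
          _ = M * ρ ^ (n+1) := by ring
      exact ⟨hD2, hD3, h3'⟩
  have hstep : ∀ n, dist (x n) (x (n+1)) ≤ M * ρ ^ n + M * ρ ^ (n+1) := by
    intro n
    have ht := dist_triangle (x n) (Y (n+1)) (x (n+1))
    have := (key n).2.1
    have := (key (n+1)).1
    linarith
  have hcauchy : CauchySeq x := by
    apply cauchySeq_of_le_geometric ρ (2*M) hρ1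
    intro n
    have := hstep n
    have hps : ρ ^ (n+1) = ρ * ρ ^ n := by ring
    nlinarith [hpow n, mul_nonneg (mul_nonneg hM0 (hpow n)) h1ρ.le]
  obtain ⟨c, hc⟩ := cauchySeq_tendsto_of_complete hcauchy
  have hxm : ∀ n k, dist (x n) (x (n+k)) * (1-ρ) ≤ M*(1+ρ)*(ρ^n - ρ^(n+k)) := by
    intro n k
    induction k with
    | zero => simp
    | succ k ih =>
      have ht := dist_triangle (x n) (x (n+k)) (x (n+k+1))
      have hs := hstep (n+k)
      have h1 : ρ ^ (n+k+1) = ρ * ρ ^ (n+k) := by ring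
      have : n + (k+1) = (n+k) + 1 := by ring
      rw [this]
      nlinarith [hpow (n+k)]
  have hxc : ∀ n, dist (x n) c * (1-ρ) ≤ M*(1+ρ)*ρ^n := by
    intro n
    have ht : Tendsto (fun m => dist (x n) (x m) * (1-ρ)) atTop
        (nhds (dist (x n) c * (1-ρ))) :=
      (tendsto_const_nhds.dist hc).mul_const _
    apply le_of_tendsto ht
    filter_upwards [eventually_ge_atTop n] with m hm
    obtain ⟨k, rfl⟩ := Nat.exists_eq_add_of_le hm
    have := hxm n k
    nlinarith [mul_nonneg (mul_nonneg hM0 (by linarith : (0:ℝ) ≤ 1+ρ)) (hpow (n+k))]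
  have hYc : ∀ n, dist (Y (n+1)) c * (1-ρ) ≤ M*(1+ρ)*ρ^n := by
    intro n
    have ht := dist_triangle (Y (n+1)) (x (n+1)) c
    have h1 := (key (n+1)).1
    have h2 := hxc (n+1)
    have hps : ρ ^ (n+1) = ρ * ρ ^ n := by ring
    nlinarith [mul_le_mul_of_nonneg_right ht h1ρ.le,
      mul_le_mul_of_nonneg_right h1 h1ρ.le, h2,
      mul_nonneg (mul_nonneg hM0 (hpow n)) h1ρ.le]
  have hbound : ∀ n, max (dist (x n) c) (dist (Y (n+1)) c) ≤ M * (1 + ρ) / (1 - ρ) * ρ ^ n := by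
    intro n
    have hgoal : ∀ d : ℝ, d * (1-ρ) ≤ M*(1+ρ)*ρ^n → d ≤ M * (1 + ρ) / (1 - ρ) * ρ ^ n := by
      intro d hd
      rw [div_mul_eq_mul_div, le_div_iff₀ h1ρ]
      linarith
    exact max_le (hgoal _ (hxc n)) (hgoal _ (hYc n))
  have hb2 : ∀ n : ℕ, M * (1 + ρ) / (1 - ρ) * ρ ^ n ≤ r * (1 + ρ) / 2 * ρ ^ n := by
    intro n
    apply mul_le_mul_of_nonneg_right _ (hpow n)
    rw [div_le_div_iff₀ h1ρ (by norm_num : (0:ℝ) < 2)]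
    nlinarith
  have hball : ∀ n : ℕ, dist (x n) (Y 0) ≤ r ∧ dist (Y (n+1)) (Y 0) ≤ r := by
    intro n
    obtain ⟨h1, h2, h3⟩ := key n
    constructor
    · nlinarith [hpow n, hpow (n+1)]
    · have ht := dist_triangle (Y (n+1)) (x n) (Y 0)
      rw [dist_comm (Y (n+1)) (x n)] at ht
      rw [← mul_le_mul_iff_of_pos_right h1ρ]
      nlinarith [mul_le_mul_of_nonneg_right ht h1ρ.le,
        mul_le_mul_of_nonneg_right h2 h1ρ.le, h3,
        mul_nonneg hM0 (hpow (n+1)), (by ring : ρ ^ (n+1) = ρ * ρ ^ n)]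
  refine ⟨c, fun n => ⟨hbound n, hb2 n⟩, hc, ?_, hball, ?_⟩
  · have hzero : Tendsto (fun n : ℕ => M * (1 + ρ) / (1 - ρ) * ρ ^ n) atTop (nhds 0) := by
      simpa using (tendsto_pow_atTop_nhds_zero_of_lt_one hρ0 hρ1).const_mul (M * (1 + ρ) / (1 - ρ))
    apply tendsto_iff_dist_tendsto_zero.2
    apply squeeze_zero (fun n => dist_nonneg)
      (fun n => le_trans (le_max_right _ _) (hbound n)) hzero
  · have ht : Tendsto (fun n => dist (x n) (Y 0)) atTop (nhds (dist c (Y 0))) :=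
      hc.dist tendsto_const_nhds
    exact le_of_tendsto ht (Filter.Eventually.of_forall fun n => (hball n).1)
end

section
/- Let (λ_n)_{n∈ℕ} and (μ_n)_{n∈ℕ} be nonincreasing sequences in (0,1] with limits λ_∞ and μ_∞, and set α_0 := max{λ_0, μ_0} and α_∞ := min{λ_∞, μ_∞}. Let θ ∈ [0,1) and define ρ̂ ≥ 0 by ρ̂² := sup_{n∈ℕ} max{ (λ_{n+1}/λ_n)²·(λ_n² + (1−λ_n)² + 2θλ_n(1−λ_n)), (μ_{n+1}/μ_n)²·(μ_n² + (1−μ_n)² + 2θμ_n(1−μ_n)) }. Then 0 < ρ̂ ≤ √(1 − 2(1−θ)·min{α_0(1−α_0), α_∞(1−α_∞)}) ≤ 1; consequently, if 1 > α_0 ≥ α_∞ > 0, then ρ̂ < 1. -/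
open Filter Topology

private lemma aux_min (a b x : ℝ) (hax : a ≤ x) (hxb : x ≤ b) :
    min (b * (1 - b)) (a * (1 - a)) ≤ x * (1 - x) := by
  rcases le_or_gt (x + a) 1 with hc | hc
  · refine le_trans (min_le_right _ _) ?_
    nlinarith [mul_nonneg (sub_nonneg.2 hax) (by linarith : (0:ℝ) ≤ 1 - x - a)]
  · refine le_trans (min_le_left _ _) ?_
    nlinarith [mul_nonneg (sub_nonneg.2 hxb) (by linarith : (0:ℝ) ≤ x + b - 1)]

/-- Lemma 5.2: bound on the rate constant ρ̂. -/
theorem rate_constant_bound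
    (lam mu : ℕ → ℝ) (hlam : ∀ n, lam n ∈ Set.Ioc (0 : ℝ) 1)
    (hmu : ∀ n, mu n ∈ Set.Ioc (0 : ℝ) 1)
    (hlam_mono : ∀ n : ℕ, lam (n + 1) ≤ lam n) (hmu_mono : ∀ n : ℕ, mu (n + 1) ≤ mu n)
    (laminf muinf : ℝ)
    (hlaminf : Tendsto lam atTop (nhds laminf)) (hmuinf : Tendsto mu atTop (nhds muinf))
    (α₀ αinf : ℝ) (hα₀ : α₀ = max (lam 0) (mu 0)) (hαinf : αinf = min laminf muinf)
    (θ : ℝ) (hθ : θ ∈ Set.Ico (0 : ℝ) 1)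
    (ρhat : ℝ)
    (hρhat : ρhat = Real.sqrt (⨆ n : ℕ, max
      ((lam (n + 1) / lam n) ^ 2 *
        ((lam n) ^ 2 + (1 - lam n) ^ 2 + 2 * θ * lam n * (1 - lam n)))
      ((mu (n + 1) / mu n) ^ 2 *
        ((mu n) ^ 2 + (1 - mu n) ^ 2 + 2 * θ * mu n * (1 - mu n))))) :
    0 < ρhat ∧
    ρhat ≤ Real.sqrt (1 - 2 * (1 - θ) * min (α₀ * (1 - α₀)) (αinf * (1 - αinf))) ∧
    Real.sqrt (1 - 2 * (1 - θ) * min (α₀ * (1 - α₀)) (αinf * (1 - αinf))) ≤ 1 ∧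
    (α₀ < 1 → 0 < αinf → ρhat < 1) := by
  obtain ⟨hθ0, hθ1⟩ := hθ
  set m : ℝ := min (α₀ * (1 - α₀)) (αinf * (1 - αinf)) with hm
  set B : ℝ := 1 - 2 * (1 - θ) * m with hB
  -- limits are lower bounds
  have hlam_anti : Antitone lam := antitone_nat_of_succ_le hlam_mono
  have hmu_anti : Antitone mu := antitone_nat_of_succ_le hmu_mono
  have hlaminf_le : ∀ n, laminf ≤ lam n := fun n =>
    le_of_tendsto hlaminf (eventually_atTop.2 ⟨n, fun k hk => hlam_anti hk⟩)
  have hmuinf_le : ∀ n, muinf ≤ mu n := fun n =>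
    le_of_tendsto hmuinf (eventually_atTop.2 ⟨n, fun k hk => hmu_anti hk⟩)
  have hlaminf0 : 0 ≤ laminf :=
    ge_of_tendsto hlaminf (Eventually.of_forall fun n => (hlam n).1.le)
  have hmuinf0 : 0 ≤ muinf :=
    ge_of_tendsto hmuinf (Eventually.of_forall fun n => (hmu n).1.le)
  have hainf0 : 0 ≤ αinf := by rw [hαinf]; exact le_min hlaminf0 hmuinf0
  have hα₀pos : 0 < α₀ := by rw [hα₀]; exact lt_max_of_lt_left (hlam 0).1
  have hα₀le1 : α₀ ≤ 1 := by rw [hα₀]; exact max_le (hlam 0).2 (hmu 0).2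
  have hainf_le_lam : ∀ n, αinf ≤ lam n := fun n => by
    rw [hαinf]; exact le_trans (min_le_left _ _) (hlaminf_le n)
  have hainf_le_mu : ∀ n, αinf ≤ mu n := fun n => by
    rw [hαinf]; exact le_trans (min_le_right _ _) (hmuinf_le n)
  have hlam_le_α₀ : ∀ n, lam n ≤ α₀ := fun n => by
    rw [hα₀]; exact le_trans (hlam_anti (Nat.zero_le n)) (le_max_left _ _)
  have hmu_le_α₀ : ∀ n, mu n ≤ α₀ := fun n => by
    rw [hα₀]; exact le_trans (hmu_anti (Nat.zero_le n)) (le_max_right _ _)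
  have hainf_le_α₀ : αinf ≤ α₀ := le_trans (hainf_le_lam 0) (hlam_le_α₀ 0)
  have hm_nonneg : 0 ≤ m := le_min (mul_nonneg hα₀pos.le (by linarith))
    (mul_nonneg hainf0 (by nlinarith))
  have hm_le : m ≤ 1 / 4 := le_trans (min_le_left _ _) (by nlinarith [sq_nonneg (2 * α₀ - 1)])
  have hB_nonneg : 0 ≤ B := by rw [hB]; nlinarith
  -- single-sequence bound
  have key : ∀ (x y : ℝ), 0 < x → x ≤ 1 → 0 < y → y ≤ x → αinf ≤ x → x ≤ α₀ →
      (y / x) ^ 2 * (x ^ 2 + (1 - x) ^ 2 + 2 * θ * x * (1 - x)) ≤ B := by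
    intro x y hx hx1 hy hyx h1 h2
    have hratio : (y / x) ^ 2 ≤ 1 := by
      rw [sq_le_one_iff_abs_le_one, abs_le]
      have : 0 < y / x := div_pos hy hx
      constructor
      · linarith
      · rw [div_le_one hx]; exact hyx
    have hinner_nonneg : 0 ≤ x ^ 2 + (1 - x) ^ 2 + 2 * θ * x * (1 - x) := by nlinarith
    have hmin : m ≤ x * (1 - x) := by
      rw [hm]; exact aux_min αinf α₀ x h1 h2
    calc (y / x) ^ 2 * (x ^ 2 + (1 - x) ^ 2 + 2 * θ * x * (1 - x))
        ≤ 1 * (x ^ 2 + (1 - x) ^ 2 + 2 * θ * x * (1 - x)) :=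
          mul_le_mul_of_nonneg_right hratio hinner_nonneg
      _ = 1 - 2 * (1 - θ) * (x * (1 - x)) := by ring
      _ ≤ B := by rw [hB]; nlinarith
  set f : ℕ → ℝ := fun n => max
      ((lam (n + 1) / lam n) ^ 2 *
        ((lam n) ^ 2 + (1 - lam n) ^ 2 + 2 * θ * lam n * (1 - lam n)))
      ((mu (n + 1) / mu n) ^ 2 *
        ((mu n) ^ 2 + (1 - mu n) ^ 2 + 2 * θ * mu n * (1 - mu n))) with hf
  have hfB : ∀ n, f n ≤ B := fun n => max_le
    (key (lam n) (lam (n + 1)) (hlam n).1 (hlam n).2 (hlam (n + 1)).1 (hlam_mono n)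
      (hainf_le_lam n) (hlam_le_α₀ n))
    (key (mu n) (mu (n + 1)) (hmu n).1 (hmu n).2 (hmu (n + 1)).1 (hmu_mono n)
      (hainf_le_mu n) (hmu_le_α₀ n))
  have hbdd : BddAbove (Set.range f) := ⟨B, fun x ⟨n, hn⟩ => hn ▸ hfB n⟩
  have hsup_le : (⨆ n, f n) ≤ B := ciSup_le hfB
  have hf0 : 0 < f 0 := by
    refine lt_max_of_lt_left ?_
    have h1 := (hlam 0).1
    have h2 := (hlam 0).2
    have h3 := (hlam 1).1
    have hr : 0 < (lam (0 + 1) / lam 0) ^ 2 := pow_pos (div_pos h3 h1) 2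
    have hinner : 0 < lam 0 ^ 2 + (1 - lam 0) ^ 2 + 2 * θ * lam 0 * (1 - lam 0) := by
      nlinarith [sq_nonneg (1 - lam 0),
        mul_nonneg (mul_nonneg hθ0 h1.le) (by linarith : (0:ℝ) ≤ 1 - lam 0)]
    exact mul_pos hr hinner
  have hsup_pos : 0 < ⨆ n, f n := lt_of_lt_of_le hf0 (le_ciSup hbdd 0)
  have hρ : ρhat = Real.sqrt (⨆ n, f n) := hρhat
  refine ⟨?_, ?_, ?_, ?_⟩
  · rw [hρ]; exact Real.sqrt_pos.2 hsup_pos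
  · rw [hρ]; exact Real.sqrt_le_sqrt hsup_le
  · calc Real.sqrt B ≤ Real.sqrt 1 := Real.sqrt_le_sqrt (by nlinarith)
      _ = 1 := Real.sqrt_one
  · intro h1 h2
    have hmpos : 0 < m := lt_min (mul_pos hα₀pos (by linarith))
      (mul_pos h2 (by nlinarith))
    have hBlt : B < 1 := by rw [hB]; nlinarith
    calc ρhat ≤ Real.sqrt B := by rw [hρ]; exact Real.sqrt_le_sqrt hsup_le
      _ < 1 := by
        rw [show (1:ℝ) = Real.sqrt 1 by simp]
        exact Real.sqrt_lt_sqrt hB_nonneg (by simpa using hBlt)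
end

section
/- Let (a_n), (x_n), (b_n), (y_n) be MARP sequences with starting point y_{−1}, where λ_n → λ_∞ and μ_n → μ_∞. Suppose both (x_n) and (y_n) converge to the same point c̄ ∈ X. Then: (i) if λ_∞ > 0, then c̄ ∈ A; (ii) if μ_∞ > 0, then c̄ ∈ B; (iii) if min{λ_∞, μ_∞} > 0, then c̄ ∈ A ∩ B. -/
open Filter Topology

/-- Proposition 5.4: location of the limit of the MARP. -/
theorem marp_limit_location
    {X : Type*} [NormedAddCommGroup X] [InnerProductSpace ℝ X] [FiniteDimensional ℝ X]
    (A B : Set X) (hA : A.Nonempty) (hAclosed : IsClosed A)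
    (hB : B.Nonempty) (hBclosed : IsClosed B)
    (lam mu : ℕ → ℝ) (hlam : ∀ n, lam n ∈ Set.Ioc (0 : ℝ) 1)
    (hmu : ∀ n, mu n ∈ Set.Ioc (0 : ℝ) 1)
    (laminf muinf : ℝ)
    (hlaminf : Tendsto lam atTop (nhds laminf)) (hmuinf : Tendsto mu atTop (nhds muinf))
    (a x b Y : ℕ → X) (hMARP : IsMARP A B lam mu a x b Y)
    (cbar : X) (hx : Tendsto x atTop (nhds cbar))
    (hy : Tendsto (fun n => Y (n + 1)) atTop (nhds cbar)) :
    (0 < laminf → cbar ∈ A) ∧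
    (0 < muinf → cbar ∈ B) ∧
    (0 < min laminf muinf → cbar ∈ A ∩ B) := by
  have hY : Tendsto Y atTop (nhds cbar) := (tendsto_add_atTop_iff_nat 1).mp hy
  have hAmem : 0 < laminf → cbar ∈ A := by
    intro hl
    have hsa : Tendsto (fun n => lam n • a n) atTop (nhds (laminf • cbar)) := by
      have : ∀ n, lam n • a n = x n - (1 - lam n) • Y n := by
        intro n
        have := (hMARP n).2.1
        rw [this]; abel
      simp only [this]
      have h1 : Tendsto (fun n => (1 - lam n) • Y n) atTop (nhds ((1 - laminf) • cbar)) :=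
        ((tendsto_const_nhds.sub hlaminf).smul hY)
      have := hx.sub h1
      convert this using 2
      module
    have ha : Tendsto a atTop (nhds cbar) := by
      have h2 : Tendsto (fun n => (lam n)⁻¹ • (lam n • a n)) atTop
          (nhds (laminf⁻¹ • (laminf • cbar))) :=
        (hlaminf.inv₀ hl.ne').smul hsa
      have h3 : ∀ n, (lam n)⁻¹ • (lam n • a n) = a n := by
        intro n
        rw [smul_smul, inv_mul_cancel₀ (hlam n).1.ne', one_smul]
      rw [smul_smul, inv_mul_cancel₀ hl.ne', one_smul] at h2
      simpa only [h3] using h2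
    exact hAclosed.mem_of_tendsto ha (Filter.Eventually.of_forall fun n => (hMARP n).1.1)
  have hBmem : 0 < muinf → cbar ∈ B := by
    intro hm
    have hsb : Tendsto (fun n => mu n • b n) atTop (nhds (muinf • cbar)) := by
      have : ∀ n, mu n • b n = Y (n + 1) - (1 - mu n) • x n := by
        intro n
        have := (hMARP n).2.2.2
        rw [this]; abel
      simp only [this]
      have h1 : Tendsto (fun n => (1 - mu n) • x n) atTop (nhds ((1 - muinf) • cbar)) :=
        ((tendsto_const_nhds.sub hmuinf).smul hx)
      have := hy.sub h1
      convert this using 2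
      module
    have hb : Tendsto b atTop (nhds cbar) := by
      have h2 : Tendsto (fun n => (mu n)⁻¹ • (mu n • b n)) atTop
          (nhds (muinf⁻¹ • (muinf • cbar))) :=
        (hmuinf.inv₀ hm.ne').smul hsb
      have h3 : ∀ n, (mu n)⁻¹ • (mu n • b n) = b n := by
        intro n
        rw [smul_smul, inv_mul_cancel₀ (hmu n).1.ne', one_smul]
      rw [smul_smul, inv_mul_cancel₀ hm.ne', one_smul] at h2
      simpa only [h3] using h2
    exact hBclosed.mem_of_tendsto hb (Filter.Eventually.of_forall fun n => (hMARP n).2.2.1.1)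
  refine ⟨hAmem, hBmem, fun h => ?_⟩
  rw [lt_min_iff] at h
  exact ⟨hAmem h.1, hBmem h.2⟩
end

section
/- Let S ⊆ X be both A-projection absorbing and B-projection absorbing, let (λ_n) and (μ_n) be nonincreasing sequences in (0,1] with limits λ_∞ and μ_∞, set α_0 := max{λ_0, μ_0}, and let (a_n), (x_n), (b_n), (y_n) be MARP sequences with starting point y_{−1} ∈ S. Let r > 0, θ ∈ [0,1), and let ρ̂ be defined by ρ̂² := sup_{n∈ℕ} max{ (λ_{n+1}/λ_n)²·(λ_n² + (1−λ_n)² + 2θλ_n(1−λ_n)), (μ_{n+1}/μ_n)²·(μ_n² + (1−μ_n)² + 2θμ_n(1−μ_n)) }. Assume: (a) α_0 < 1; (b) ρ̂ ≤ ρ < 1; (c) max{d_A(y_{−1}), d_B(y_{−1})} ≤ r(1−ρ)/(2α_0(1+α_0)); and (d) for every x ∈ S with ‖x − y_{−1}‖ ≤ r, every a ∈ P_A(x) and every b ∈ P_B(x), one has ⟨a−x, x−b⟩ ≤ θ‖a−x‖·‖x−b‖. Then (x_n) and (y_n) converge linearly with rate ρ to a point c̄ with ‖c̄ − y_{−1}‖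 ≤ r, and max{‖x_n − c̄‖, ‖y_n − c̄‖} ≤ (r(1+ρ)/2)·ρ^n for all n ∈ ℕ. Furthermore, if min{λ_∞, μ_∞} > 0, then c̄ ∈ A ∩ B. -/
open Filter Topology RealInnerProductSpace

/-- `S` is `A`-projection absorbing. -/
def ProjAbsorbing {X : Type*} [NormedAddCommGroup X] [NormedSpace ℝ X]
    (A S : Set X) : Prop :=
  ∀ s ∈ S, ∀ a ∈ projSet A s, segment ℝ s a ⊆ S

lemma marp_mem_segment {X : Type*} [NormedAddCommGroup X] [NormedSpace ℝ X]
    (y c : X) {t : ℝ} (ht0 : 0 ≤ t) (ht1 : t ≤ 1) :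
    (1 - t) • y + t • c ∈ segment ℝ y c :=
  ⟨1 - t, t, by linarith, ht0, by ring, rfl⟩

lemma marp_projSet_segment {X : Type*} [NormedAddCommGroup X] [NormedSpace ℝ X]
    {C : Set X} {y c : X} (hc : c ∈ projSet C y) {t : ℝ} (ht0 : 0 ≤ t) (ht1 : t ≤ 1) :
    c ∈ projSet C ((1 - t) • y + t • c) := by
  obtain ⟨hcC, hd⟩ := hc
  set z := (1 - t) • y + t • c with hz
  have hzc : z - c = (1 - t) • (y - c) := by rw [hz]; module
  have hyz : y - z = t • (y - c) := by rw [hz]; module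
  have h1 : ‖z - c‖ = (1 - t) * ‖y - c‖ := by
    rw [hzc, norm_smul, Real.norm_eq_abs, abs_of_nonneg (by linarith)]
  have h2 : dist y z = t * ‖y - c‖ := by
    rw [dist_eq_norm, hyz, norm_smul, Real.norm_eq_abs, abs_of_nonneg ht0]
  refine ⟨hcC, le_antisymm ?_ ?_⟩
  · have h3 := Metric.infDist_le_infDist_add_dist (x := y) (y := z) (s := C)
    rw [← hd, h2] at h3
    rw [h1]; linarith
  · have := Metric.infDist_le_dist_of_mem (x := z) hcC
    rwa [dist_eq_norm] at this

lemma marp_sq_est {X : Type*} [NormedAddCommGroup X] [InnerProductSpace ℝ X]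
    (P Q : X) (θ l l' m ρsq : ℝ)
    (hθ0 : 0 ≤ θ) (hm : 0 ≤ m)
    (hip : ⟪P, Q⟫ ≤ θ * ‖P‖ * ‖Q‖)
    (hP : ‖P‖ ≤ (1 - l) / l * m) (hQ : ‖Q‖ ≤ m)
    (hl0 : 0 < l) (hl1 : l ≤ 1) (hl'0 : 0 ≤ l') (hl'l : l' ≤ l)
    (hcoef : (l' / l) ^ 2 * (l ^ 2 + (1 - l) ^ 2 + 2 * θ * l * (1 - l)) ≤ ρsq) :
    (l' * ‖P + Q‖) ^ 2 ≤ ρsq * m ^ 2 := by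
  have hc0 : 0 ≤ (1 - l) / l * m := le_trans (norm_nonneg P) hP
  have hPQ : ‖P + Q‖ ^ 2 ≤ ‖P‖ ^ 2 + ‖Q‖ ^ 2 + 2 * θ * ‖P‖ * ‖Q‖ := by
    rw [norm_add_sq_real]; nlinarith
  have hprod : ‖P‖ * ‖Q‖ ≤ ((1 - l) / l * m) * m :=
    mul_le_mul hP hQ (norm_nonneg Q) hc0
  have h2 : ‖P + Q‖ ^ 2 ≤ ((1 - l) / l * m) ^ 2 + m ^ 2 + 2 * θ * ((1 - l) / l * m) * m := by
    nlinarith [norm_nonneg P, norm_nonneg Q]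
  have h3 : l' ^ 2 * (((1 - l) / l * m) ^ 2 + m ^ 2 + 2 * θ * ((1 - l) / l * m) * m)
      = (l' / l) ^ 2 * (l ^ 2 + (1 - l) ^ 2 + 2 * θ * l * (1 - l)) * m ^ 2 := by
    field_simp
    ring
  have h4 : (l' * ‖P + Q‖) ^ 2 = l' ^ 2 * ‖P + Q‖ ^ 2 := by ring
  rw [h4]
  calc l' ^ 2 * ‖P + Q‖ ^ 2
      ≤ l' ^ 2 * (((1 - l) / l * m) ^ 2 + m ^ 2 + 2 * θ * ((1 - l) / l * m) * m) :=
        mul_le_mul_of_nonneg_left h2 (by positivity)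
    _ = (l' / l) ^ 2 * (l ^ 2 + (1 - l) ^ 2 + 2 * θ * l * (1 - l)) * m ^ 2 := h3
    _ ≤ ρsq * m ^ 2 := mul_le_mul_of_nonneg_right hcoef (by positivity)

set_option maxHeartbeats 800000 in
/-- Theorem 5.8 (local linear convergence of the MARP). -/
theorem marp_local_linear_convergence
    {X : Type*} [NormedAddCommGroup X] [InnerProductSpace ℝ X] [FiniteDimensional ℝ X]
    (A B : Set X) (hA : A.Nonempty) (hAclosed : IsClosed A)
    (hB : B.Nonempty) (hBclosed : IsClosed B)
    (S : Set X) (hSA : ProjAbsorbing A S) (hSB : ProjAbsorbing B S)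
    (lam mu : ℕ → ℝ) (hlam : ∀ n, lam n ∈ Set.Ioc (0 : ℝ) 1)
    (hmu : ∀ n, mu n ∈ Set.Ioc (0 : ℝ) 1)
    (hlam_mono : ∀ n : ℕ, lam (n + 1) ≤ lam n) (hmu_mono : ∀ n : ℕ, mu (n + 1) ≤ mu n)
    (laminf muinf : ℝ)
    (hlaminf : Tendsto lam atTop (nhds laminf)) (hmuinf : Tendsto mu atTop (nhds muinf))
    (α₀ : ℝ) (hα₀ : α₀ = max (lam 0) (mu 0))
    (a x b Y : ℕ → X) (hMARP : IsMARP A B lam mu a x b Y) (hstart : Y 0 ∈ S)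
    (r : ℝ) (hr : 0 < r) (θ : ℝ) (hθ : θ ∈ Set.Ico (0 : ℝ) 1)
    (ρhat : ℝ)
    (hρhat : ρhat = Real.sqrt (⨆ n : ℕ, max
      ((lam (n + 1) / lam n) ^ 2 *
        ((lam n) ^ 2 + (1 - lam n) ^ 2 + 2 * θ * lam n * (1 - lam n)))
      ((mu (n + 1) / mu n) ^ 2 *
        ((mu n) ^ 2 + (1 - mu n) ^ 2 + 2 * θ * mu n * (1 - mu n)))))
    (hα₀lt : α₀ < 1)
    (ρ : ℝ) (hρhatρ : ρhat ≤ ρ) (hρlt : ρ < 1)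
    (hdist : max (Metric.infDist (Y 0) A) (Metric.infDist (Y 0) B) ≤
      r * (1 - ρ) / (2 * α₀ * (1 + α₀)))
    (hCQ : ∀ z ∈ S, ‖z - Y 0‖ ≤ r → ∀ p ∈ projSet A z, ∀ q ∈ projSet B z,
      ⟪p - z, z - q⟫ ≤ θ * ‖p - z‖ * ‖z - q‖) :
    ∃ cbar : X, ‖cbar - Y 0‖ ≤ r ∧
      (∀ n : ℕ, max (‖x n - cbar‖) (‖Y (n + 1) - cbar‖) ≤ r * (1 + ρ) / 2 * ρ ^ n) ∧
      (0 < min laminf muinf → cbar ∈ A ∩ B) := by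
  have hθ0 : (0:ℝ) ≤ θ := hθ.1
  have hθ1 : θ < 1 := hθ.2
  have hρ0 : 0 ≤ ρ := le_trans (hρhat ▸ Real.sqrt_nonneg _) hρhatρ
  have h1ρ : 0 < 1 - ρ := by linarith
  have hne : (1:ℝ) - ρ ≠ 0 := h1ρ.ne'
  have hα₀pos : 0 < α₀ := by rw [hα₀, lt_max_iff]; exact Or.inl (hlam 0).1
  have hlam0a : lam 0 ≤ α₀ := hα₀ ▸ le_max_left _ _
  have hmu0a : mu 0 ≤ α₀ := hα₀ ▸ le_max_right _ _
  set M := r * (1 - ρ) / 2 with hMdef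
  have hM0 : 0 < M := by rw [hMdef]; positivity
  -- coefficient bounds
  have e0 : ∀ l l' : ℝ, 0 < l → l ≤ 1 →
      0 ≤ (l' / l) ^ 2 * (l ^ 2 + (1 - l) ^ 2 + 2 * θ * l * (1 - l)) := by
    intro l l' h0 h1
    have hK0 : 0 ≤ l ^ 2 + (1 - l) ^ 2 + 2 * θ * l * (1 - l) := by
      nlinarith [mul_nonneg (mul_nonneg hθ0 h0.le) (sub_nonneg.2 h1)]
    positivity
  have e1 : ∀ l l' : ℝ, 0 < l → l ≤ 1 → 0 < l' → l' ≤ l →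
      (l' / l) ^ 2 * (l ^ 2 + (1 - l) ^ 2 + 2 * θ * l * (1 - l)) ≤ 1 := by
    intro l l' h0 h1 h0' hll
    have hd : l' / l ≤ 1 := by rw [div_le_one h0]; exact hll
    have hd0 : 0 ≤ l' / l := by positivity
    have hK0 : 0 ≤ l ^ 2 + (1 - l) ^ 2 + 2 * θ * l * (1 - l) := by
      nlinarith [mul_nonneg (mul_nonneg hθ0 h0.le) (sub_nonneg.2 h1)]
    have hK1 : l ^ 2 + (1 - l) ^ 2 + 2 * θ * l * (1 - l) ≤ 1 := by
      nlinarith [mul_nonneg h0.le (sub_nonneg.2 h1)]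
    have hd2 : (l' / l) ^ 2 ≤ 1 := by nlinarith
    nlinarith
  have hbddF : BddAbove (Set.range fun n : ℕ => max
      ((lam (n + 1) / lam n) ^ 2 *
        ((lam n) ^ 2 + (1 - lam n) ^ 2 + 2 * θ * lam n * (1 - lam n)))
      ((mu (n + 1) / mu n) ^ 2 *
        ((mu n) ^ 2 + (1 - mu n) ^ 2 + 2 * θ * mu n * (1 - mu n)))) := by
    refine ⟨1, ?_⟩
    rintro y ⟨n, rfl⟩
    exact max_le (e1 _ _ (hlam n).1 (hlam n).2 (hlam (n+1)).1 (hlam_mono n))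
      (e1 _ _ (hmu n).1 (hmu n).2 (hmu (n+1)).1 (hmu_mono n))
  have hsupnn : 0 ≤ ⨆ n : ℕ, max
      ((lam (n + 1) / lam n) ^ 2 *
        ((lam n) ^ 2 + (1 - lam n) ^ 2 + 2 * θ * lam n * (1 - lam n)))
      ((mu (n + 1) / mu n) ^ 2 *
        ((mu n) ^ 2 + (1 - mu n) ^ 2 + 2 * θ * mu n * (1 - mu n))) := by
    refine le_trans ?_ (le_ciSup hbddF 0)
    exact le_trans (e0 _ _ (hlam 0).1 (hlam 0).2) (le_max_left _ _)
  have hρsq : ρhat ^ 2 ≤ ρ ^ 2 := pow_le_pow_left₀ (hρhat ▸ Real.sqrt_nonneg _) hρhatρ 2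
  have hsupval : ρhat ^ 2 = ⨆ n : ℕ, max
      ((lam (n + 1) / lam n) ^ 2 *
        ((lam n) ^ 2 + (1 - lam n) ^ 2 + 2 * θ * lam n * (1 - lam n)))
      ((mu (n + 1) / mu n) ^ 2 *
        ((mu n) ^ 2 + (1 - mu n) ^ 2 + 2 * θ * mu n * (1 - mu n))) := by
    rw [hρhat, Real.sq_sqrt hsupnn]
  have hcoefA : ∀ n, (lam (n + 1) / lam n) ^ 2 *
      ((lam n) ^ 2 + (1 - lam n) ^ 2 + 2 * θ * lam n * (1 - lam n)) ≤ ρ ^ 2 := by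
    intro n
    exact le_trans (le_trans (le_max_left _ _) (le_ciSup hbddF n)) (hsupval ▸ hρsq)
  have hcoefB : ∀ n, (mu (n + 1) / mu n) ^ 2 *
      ((mu n) ^ 2 + (1 - mu n) ^ 2 + 2 * θ * mu n * (1 - mu n)) ≤ ρ ^ 2 := by
    intro n
    exact le_trans (le_trans (le_max_right _ _) (le_ciSup hbddF n)) (hsupval ▸ hρsq)
  -- basic MARP relations
  have hM1 : ∀ n, a n ∈ projSet A (Y n) := fun n => (hMARP n).1
  have hM2 : ∀ n, x n = (1 - lam n) • Y n + lam n • a n := fun n => (hMARP n).2.1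
  have hM3 : ∀ n, b n ∈ projSet B (x n) := fun n => (hMARP n).2.2.1
  have hM4 : ∀ n, Y (n + 1) = (1 - mu n) • x n + mu n • b n := fun n => (hMARP n).2.2.2
  have hxY : ∀ n, x n - Y n = lam n • (a n - Y n) := fun n => by rw [hM2 n]; module
  have hYx : ∀ n, Y (n + 1) - x n = mu n • (b n - x n) := fun n => by rw [hM4 n]; module
  have hxa : ∀ n, x n - a n = (1 - lam n) • (Y n - a n) := fun n => by rw [hM2 n]; module
  have hYb : ∀ n, Y (n + 1) - b n = (1 - mu n) • (x n - b n) := fun n => by rw [hM4 n]; module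
  have hu : ∀ n, ‖x n - Y n‖ = lam n * Metric.infDist (Y n) A := by
    intro n
    rw [hxY n, norm_smul, Real.norm_eq_abs, abs_of_pos (hlam n).1,
      norm_sub_rev (a n) (Y n), (hM1 n).2]
  have hv : ∀ n, ‖Y (n + 1) - x n‖ = mu n * Metric.infDist (x n) B := by
    intro n
    rw [hYx n, norm_smul, Real.norm_eq_abs, abs_of_pos (hmu n).1,
      norm_sub_rev (b n) (x n), (hM3 n).2]
  have haxn : ∀ n, a n ∈ projSet A (x n) := by
    intro n
    rw [hM2 n]
    exact marp_projSet_segment (hM1 n) (hlam n).1.le (hlam n).2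
  have hbYn : ∀ n, b n ∈ projSet B (Y (n + 1)) := by
    intro n
    rw [hM4 n]
    exact marp_projSet_segment (hM3 n) (hmu n).1.le (hmu n).2
  have hxS_of : ∀ n, Y n ∈ S → x n ∈ S := by
    intro n hY
    refine hSA (Y n) hY (a n) (hM1 n) ?_
    rw [hM2 n]
    exact marp_mem_segment _ _ (hlam n).1.le (hlam n).2
  have hYS_of : ∀ n, x n ∈ S → Y (n + 1) ∈ S := by
    intro n hx
    refine hSB (x n) hx (b n) (hM3 n) ?_
    rw [hM4 n]
    exact marp_mem_segment _ _ (hmu n).1.le (hmu n).2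
  -- main induction
  have key : ∀ n : ℕ, (x n ∈ S ∧ Y (n + 1) ∈ S) ∧
      (‖x n - Y n‖ ≤ M * ρ ^ n ∧ ‖Y (n + 1) - x n‖ ≤ M * ρ ^ n) ∧
      ‖x n - Y 0‖ + (1 + ρ) / (1 - ρ) * (M * ρ ^ n) ≤ 2 * M / (1 - ρ) := by
    intro n
    induction n with
    | zero =>
      have hxS0 : x 0 ∈ S := hxS_of 0 hstart
      have hYS1 : Y 1 ∈ S := hYS_of 0 hxS0
      have hDnnA : 0 ≤ Metric.infDist (Y 0) A := Metric.infDist_nonneg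
      have hDnnB : 0 ≤ Metric.infDist (Y 0) B := Metric.infDist_nonneg
      have hDnn : 0 ≤ max (Metric.infDist (Y 0) A) (Metric.infDist (Y 0) B) :=
        le_trans hDnnA (le_max_left _ _)
      have h2a : 0 < 2 * α₀ * (1 + α₀) := by nlinarith
      have hDM : α₀ * (1 + α₀) * max (Metric.infDist (Y 0) A) (Metric.infDist (Y 0) B) ≤ M := by
        rw [le_div_iff₀ h2a] at hdist
        rw [hMdef]
        nlinarith
      have hu0 : ‖x 0 - Y 0‖ ≤ α₀ * max (Metric.infDist (Y 0) A) (Metric.infDist (Y 0) B) := by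
        rw [hu 0]
        exact mul_le_mul hlam0a (le_max_left _ _) hDnnA hα₀pos.le
      have hu0M : ‖x 0 - Y 0‖ ≤ M := by nlinarith [mul_nonneg (mul_nonneg hα₀pos.le hα₀pos.le) hDnn]
      have hv0M : ‖Y 1 - x 0‖ ≤ M := by
        have h2 : Metric.infDist (x 0) B ≤ Metric.infDist (Y 0) B + dist (x 0) (Y 0) :=
          Metric.infDist_le_infDist_add_dist
        rw [dist_eq_norm] at h2
        have h3 : ‖Y 1 - x 0‖ ≤ α₀ * (Metric.infDist (Y 0) B + ‖x 0 - Y 0‖) := by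
          rw [hv 0]
          exact mul_le_mul hmu0a h2 Metric.infDist_nonneg hα₀pos.le
        have h4 : Metric.infDist (Y 0) B ≤ max (Metric.infDist (Y 0) A) (Metric.infDist (Y 0) B) :=
          le_max_right _ _
        nlinarith
      have heq0 : M + (1 + ρ) / (1 - ρ) * M = 2 * M / (1 - ρ) := by field_simp; ring
      refine ⟨⟨hxS0, hYS1⟩, ⟨by simpa using hu0M, by simpa using hv0M⟩, ?_⟩
      simp only [pow_zero, mul_one]
      linarith [hu0M]
    | succ n ih =>
      obtain ⟨⟨hxSn, hYSn⟩, ⟨hun, hvn⟩, hinv⟩ := ih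
      have hm0 : 0 ≤ M * ρ ^ n := by positivity
      have hslack : M * ρ ^ n ≤ (1 + ρ) / (1 - ρ) * (M * ρ ^ n) := by
        have h1 : (1:ℝ) ≤ (1 + ρ) / (1 - ρ) := by rw [le_div_iff₀ h1ρ]; linarith
        nlinarith
      have h2Mr : 2 * M / (1 - ρ) = r := by rw [hMdef]; field_simp
      have hxr : ‖x n - Y 0‖ ≤ r := by
        rw [← h2Mr]; linarith
      have hYr : ‖Y (n + 1) - Y 0‖ ≤ r := by
        have t1 : ‖Y (n + 1) - Y 0‖ ≤ ‖Y (n + 1) - x n‖ + ‖x n - Y 0‖ := by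
          calc ‖Y (n + 1) - Y 0‖ = ‖(Y (n + 1) - x n) + (x n - Y 0)‖ := by abel_nf
            _ ≤ ‖Y (n + 1) - x n‖ + ‖x n - Y 0‖ := norm_add_le _ _
        rw [← h2Mr]; linarith
      -- bound for u (n+1)
      have hipA : ⟪x n - a n, Y (n + 1) - x n⟫ ≤ θ * ‖x n - a n‖ * ‖Y (n + 1) - x n‖ := by
        have hcq := hCQ (x n) hxSn hxr (a n) (haxn n) (b n) (hM3 n)
        have e2 : ‖Y (n + 1) - x n‖ = mu n * ‖b n - x n‖ := by
          rw [hYx n, norm_smul, Real.norm_eq_abs, abs_of_pos (hmu n).1]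
        have e1 : ⟪x n - a n, Y (n + 1) - x n⟫ = mu n * ⟪a n - x n, x n - b n⟫ := by
          rw [hYx n, real_inner_smul_right]
          congr 1
          rw [show a n - x n = -(x n - a n) from (neg_sub _ _).symm,
            show x n - b n = -(b n - x n) from (neg_sub _ _).symm, inner_neg_neg]
        calc ⟪x n - a n, Y (n + 1) - x n⟫ = mu n * ⟪a n - x n, x n - b n⟫ := e1
          _ ≤ mu n * (θ * ‖a n - x n‖ * ‖x n - b n‖) :=
              mul_le_mul_of_nonneg_left hcq (hmu n).1.le
          _ = θ * ‖x n - a n‖ * (mu n * ‖b n - x n‖) := by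
              rw [norm_sub_rev (a n) (x n), norm_sub_rev (x n) (b n)]; ring
          _ = θ * ‖x n - a n‖ * ‖Y (n + 1) - x n‖ := by rw [e2]
      have hPA : ‖x n - a n‖ ≤ (1 - lam n) / lam n * (M * ρ ^ n) := by
        have e : ‖x n - a n‖ = (1 - lam n) / lam n * ‖x n - Y n‖ := by
          rw [hxa n, norm_smul, Real.norm_eq_abs,
            abs_of_nonneg (by linarith [(hlam n).2]), (hM1 n).2, hu n]
          field_simp [(hlam n).1.ne']
        rw [e]
        exact mul_le_mul_of_nonneg_left hun
          (div_nonneg (by linarith [(hlam n).2]) (hlam n).1.le)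
      have hsqA := marp_sq_est (x n - a n) (Y (n + 1) - x n) θ (lam n) (lam (n + 1))
        (M * ρ ^ n) (ρ ^ 2) hθ0 hm0 hipA hPA hvn (hlam n).1 (hlam n).2
        (hlam (n + 1)).1.le (hlam_mono n) (hcoefA n)
      rw [show (x n - a n) + (Y (n + 1) - x n) = Y (n + 1) - a n by abel] at hsqA
      have hun1 : ‖x (n + 1) - Y (n + 1)‖ ≤ M * ρ ^ (n + 1) := by
        have h1 : ‖x (n + 1) - Y (n + 1)‖ ≤ lam (n + 1) * ‖Y (n + 1) - a n‖ := by
          rw [hu (n + 1)]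
          refine mul_le_mul_of_nonneg_left ?_ (hlam (n + 1)).1.le
          have := Metric.infDist_le_dist_of_mem (x := Y (n + 1)) (hM1 n).1
          rwa [dist_eq_norm] at this
        have h2 : (lam (n + 1) * ‖Y (n + 1) - a n‖) ^ 2 ≤ (ρ * (M * ρ ^ n)) ^ 2 := by
          calc (lam (n + 1) * ‖Y (n + 1) - a n‖) ^ 2 ≤ ρ ^ 2 * (M * ρ ^ n) ^ 2 := hsqA
            _ = (ρ * (M * ρ ^ n)) ^ 2 := by ring
        have h3 : lam (n + 1) * ‖Y (n + 1) - a n‖ ≤ ρ * (M * ρ ^ n) :=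
          le_of_pow_le_pow_left₀ two_ne_zero (by positivity) h2
        calc ‖x (n + 1) - Y (n + 1)‖ ≤ lam (n + 1) * ‖Y (n + 1) - a n‖ := h1
          _ ≤ ρ * (M * ρ ^ n) := h3
          _ = M * ρ ^ (n + 1) := by ring
      -- bound for v (n+1)
      have hipB : ⟪Y (n + 1) - b n, x (n + 1) - Y (n + 1)⟫ ≤
          θ * ‖Y (n + 1) - b n‖ * ‖x (n + 1) - Y (n + 1)‖ := by
        have hcq := hCQ (Y (n + 1)) hYSn hYr (a (n + 1)) (hM1 (n + 1)) (b n) (hbYn n)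
        have e2 : ‖x (n + 1) - Y (n + 1)‖ = lam (n + 1) * ‖a (n + 1) - Y (n + 1)‖ := by
          rw [hxY (n + 1), norm_smul, Real.norm_eq_abs, abs_of_pos (hlam (n + 1)).1]
        have e1 : ⟪Y (n + 1) - b n, x (n + 1) - Y (n + 1)⟫ =
            lam (n + 1) * ⟪a (n + 1) - Y (n + 1), Y (n + 1) - b n⟫ := by
          rw [hxY (n + 1), real_inner_smul_right, real_inner_comm]
        calc ⟪Y (n + 1) - b n, x (n + 1) - Y (n + 1)⟫
            = lam (n + 1) * ⟪a (n + 1) - Y (n + 1), Y (n + 1) - b n⟫ := e1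
          _ ≤ lam (n + 1) * (θ * ‖a (n + 1) - Y (n + 1)‖ * ‖Y (n + 1) - b n‖) :=
              mul_le_mul_of_nonneg_left hcq (hlam (n + 1)).1.le
          _ = θ * ‖Y (n + 1) - b n‖ * (lam (n + 1) * ‖a (n + 1) - Y (n + 1)‖) := by ring
          _ = θ * ‖Y (n + 1) - b n‖ * ‖x (n + 1) - Y (n + 1)‖ := by rw [e2]
      have hPB : ‖Y (n + 1) - b n‖ ≤ (1 - mu n) / mu n * (M * ρ ^ n) := by
        have e : ‖Y (n + 1) - b n‖ = (1 - mu n) / mu n * ‖Y (n + 1) - x n‖ := by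
          rw [hYb n, norm_smul, Real.norm_eq_abs,
            abs_of_nonneg (by linarith [(hmu n).2]), (hM3 n).2, hv n]
          field_simp [(hmu n).1.ne']
        rw [e]
        exact mul_le_mul_of_nonneg_left hvn
          (div_nonneg (by linarith [(hmu n).2]) (hmu n).1.le)
      have hQB : ‖x (n + 1) - Y (n + 1)‖ ≤ M * ρ ^ n := by
        have : M * ρ ^ (n + 1) ≤ M * ρ ^ n := by
          have : ρ ^ (n + 1) ≤ ρ ^ n := pow_le_pow_of_le_one hρ0 hρlt.le (Nat.le_succ n)
          nlinarith
        linarith [hun1]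
      have hsqB := marp_sq_est (Y (n + 1) - b n) (x (n + 1) - Y (n + 1)) θ (mu n) (mu (n + 1))
        (M * ρ ^ n) (ρ ^ 2) hθ0 hm0 hipB hPB hQB (hmu n).1 (hmu n).2
        (hmu (n + 1)).1.le (hmu_mono n) (hcoefB n)
      rw [show (Y (n + 1) - b n) + (x (n + 1) - Y (n + 1)) = x (n + 1) - b n by abel] at hsqB
      have hvn1 : ‖Y (n + 2) - x (n + 1)‖ ≤ M * ρ ^ (n + 1) := by
        have h1 : ‖Y (n + 2) - x (n + 1)‖ ≤ mu (n + 1) * ‖x (n + 1) - b n‖ := by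
          rw [hv (n + 1)]
          refine mul_le_mul_of_nonneg_left ?_ (hmu (n + 1)).1.le
          have := Metric.infDist_le_dist_of_mem (x := x (n + 1)) (hbYn n).1
          rwa [dist_eq_norm] at this
        have h2 : (mu (n + 1) * ‖x (n + 1) - b n‖) ^ 2 ≤ (ρ * (M * ρ ^ n)) ^ 2 := by
          calc (mu (n + 1) * ‖x (n + 1) - b n‖) ^ 2 ≤ ρ ^ 2 * (M * ρ ^ n) ^ 2 := hsqB
            _ = (ρ * (M * ρ ^ n)) ^ 2 := by ring
        have h3 : mu (n + 1) * ‖x (n + 1) - b n‖ ≤ ρ * (M * ρ ^ n) :=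
          le_of_pow_le_pow_left₀ two_ne_zero (by positivity) h2
        calc ‖Y (n + 2) - x (n + 1)‖ ≤ mu (n + 1) * ‖x (n + 1) - b n‖ := h1
          _ ≤ ρ * (M * ρ ^ n) := h3
          _ = M * ρ ^ (n + 1) := by ring
      have hxSn1 : x (n + 1) ∈ S := hxS_of (n + 1) hYSn
      have hYSn2 : Y (n + 2) ∈ S := hYS_of (n + 1) hxSn1
      have hs : M * ρ ^ n + M * ρ ^ (n + 1) + (1 + ρ) / (1 - ρ) * (M * ρ ^ (n + 1))
          = (1 + ρ) / (1 - ρ) * (M * ρ ^ n) := by field_simp; ring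
      have t1 : ‖x (n + 1) - Y 0‖ ≤
          ‖x n - Y 0‖ + ‖Y (n + 1) - x n‖ + ‖x (n + 1) - Y (n + 1)‖ := by
        calc ‖x (n + 1) - Y 0‖
            = ‖(x n - Y 0) + (Y (n + 1) - x n) + (x (n + 1) - Y (n + 1))‖ := by abel_nf
          _ ≤ ‖x n - Y 0‖ + ‖Y (n + 1) - x n‖ + ‖x (n + 1) - Y (n + 1)‖ := norm_add₃_le
      exact ⟨⟨hxSn1, hYSn2⟩, ⟨hun1, hvn1⟩, by linarith⟩
  -- Cauchy and limit
  have hdistx : ∀ n, dist (x n) (x (n + 1)) ≤ (M * (1 + ρ)) * ρ ^ n := by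
    intro n
    have t1 : dist (x n) (x (n + 1)) ≤ ‖Y (n + 1) - x n‖ + ‖x (n + 1) - Y (n + 1)‖ := by
      rw [dist_eq_norm']
      calc ‖x (n + 1) - x n‖ = ‖(Y (n + 1) - x n) + (x (n + 1) - Y (n + 1))‖ := by abel_nf
        _ ≤ ‖Y (n + 1) - x n‖ + ‖x (n + 1) - Y (n + 1)‖ := norm_add_le _ _
    have h1 := (key n).2.1.2
    have h2 := (key (n + 1)).2.1.1
    calc dist (x n) (x (n + 1)) ≤ ‖Y (n + 1) - x n‖ + ‖x (n + 1) - Y (n + 1)‖ := t1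
      _ ≤ M * ρ ^ n + M * ρ ^ (n + 1) := add_le_add h1 h2
      _ = (M * (1 + ρ)) * ρ ^ n := by ring
  obtain ⟨cbar, hc⟩ := cauchySeq_tendsto_of_complete
    (cauchySeq_of_le_geometric ρ (M * (1 + ρ)) hρlt hdistx)
  have hxc : ∀ n, dist (x n) cbar ≤ (M * (1 + ρ)) * ρ ^ n / (1 - ρ) := fun n =>
    dist_le_of_le_geometric_of_tendsto ρ _ hρlt hdistx hc n
  have hid : ∀ n : ℕ, (M * (1 + ρ)) * ρ ^ n / (1 - ρ) = r * (1 + ρ) / 2 * ρ ^ n := by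
    intro n; rw [hMdef]; field_simp
  have hxcb : ∀ n, ‖x n - cbar‖ ≤ r * (1 + ρ) / 2 * ρ ^ n := by
    intro n
    rw [show ‖x n - cbar‖ = dist (x n) cbar from (dist_eq_norm _ _).symm, ← hid n]
    exact hxc n
  have hYcb : ∀ n, ‖Y (n + 1) - cbar‖ ≤ r * (1 + ρ) / 2 * ρ ^ n := by
    intro n
    have t1 : ‖Y (n + 1) - cbar‖ ≤ ‖x (n + 1) - Y (n + 1)‖ + ‖x (n + 1) - cbar‖ := by
      calc ‖Y (n + 1) - cbar‖ = ‖-(x (n + 1) - Y (n + 1)) + (x (n + 1) - cbar)‖ := by abel_nf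
        _ ≤ ‖-(x (n + 1) - Y (n + 1))‖ + ‖x (n + 1) - cbar‖ := norm_add_le _ _
        _ = ‖x (n + 1) - Y (n + 1)‖ + ‖x (n + 1) - cbar‖ := by rw [norm_neg]
    have h1 := (key (n + 1)).2.1.1
    have h2 := hxcb (n + 1)
    have e : M * ρ ^ (n + 1) + r * (1 + ρ) / 2 * ρ ^ (n + 1) = r * ρ * ρ ^ n := by
      rw [hMdef]; ring
    have e2 : r * ρ * ρ ^ n ≤ r * (1 + ρ) / 2 * ρ ^ n := by
      nlinarith [mul_nonneg (mul_nonneg hr.le h1ρ.le) (pow_nonneg hρ0 n)]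
    linarith
  refine ⟨cbar, ?_, fun n => max_le (hxcb n) (hYcb n), ?_⟩
  · have t1 : ‖cbar - Y 0‖ ≤ ‖x 0 - cbar‖ + ‖x 0 - Y 0‖ := by
      calc ‖cbar - Y 0‖ = ‖-(x 0 - cbar) + (x 0 - Y 0)‖ := by abel_nf
        _ ≤ ‖-(x 0 - cbar)‖ + ‖x 0 - Y 0‖ := norm_add_le _ _
        _ = ‖x 0 - cbar‖ + ‖x 0 - Y 0‖ := by rw [norm_neg]
    have h1 := hxcb 0
    have h2 := (key 0).2.1.1
    have e : r * (1 + ρ) / 2 * ρ ^ 0 + M * ρ ^ 0 = r := by rw [hMdef]; ring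
    linarith
  · intro hpos
    have hlinf : 0 < laminf := lt_of_lt_of_le hpos (min_le_left _ _)
    have hminf : 0 < muinf := lt_of_lt_of_le hpos (min_le_right _ _)
    have hlle : ∀ n, laminf ≤ lam n :=
      (antitone_nat_of_succ_le hlam_mono).le_of_tendsto hlaminf
    have hmle : ∀ n, muinf ≤ mu n :=
      (antitone_nat_of_succ_le hmu_mono).le_of_tendsto hmuinf
    constructor
    · -- cbar ∈ A
      have hbound : ∀ n : ℕ, Metric.infDist cbar A ≤
          (M * ρ / laminf + r * (1 + ρ) / 2) * ρ ^ n := by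
        intro n
        have h1 : Metric.infDist cbar A ≤
            Metric.infDist (Y (n + 1)) A + dist cbar (Y (n + 1)) :=
          Metric.infDist_le_infDist_add_dist
        have h2 : Metric.infDist (Y (n + 1)) A ≤ M * ρ ^ (n + 1) / laminf := by
          rw [le_div_iff₀ hlinf]
          have ha1 : laminf * Metric.infDist (Y (n + 1)) A ≤
              lam (n + 1) * Metric.infDist (Y (n + 1)) A :=
            mul_le_mul_of_nonneg_right (hlle (n + 1)) Metric.infDist_nonneg
          have ha2 : lam (n + 1) * Metric.infDist (Y (n + 1)) A ≤ M * ρ ^ (n + 1) := by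
            rw [← hu (n + 1)]; exact (key (n + 1)).2.1.1
          nlinarith [ha1, ha2]
        have h3 : dist cbar (Y (n + 1)) ≤ r * (1 + ρ) / 2 * ρ ^ n := by
          rw [dist_eq_norm, norm_sub_rev]
          exact hYcb n
        have e : M * ρ ^ (n + 1) / laminf + r * (1 + ρ) / 2 * ρ ^ n =
            (M * ρ / laminf + r * (1 + ρ) / 2) * ρ ^ n := by
          field_simp; ring
        linarith
      have htend : Tendsto (fun n : ℕ => (M * ρ / laminf + r * (1 + ρ) / 2) * ρ ^ n)
          atTop (nhds 0) := by
        simpa using (tendsto_pow_atTop_nhds_zero_of_lt_one hρ0 hρlt).const_mul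
          (M * ρ / laminf + r * (1 + ρ) / 2)
      have hle0 : Metric.infDist cbar A ≤ 0 :=
        ge_of_tendsto htend (Eventually.of_forall hbound)
      exact (hAclosed.mem_iff_infDist_zero hA).mpr
        (le_antisymm hle0 Metric.infDist_nonneg)
    · -- cbar ∈ B
      have hbound : ∀ n : ℕ, Metric.infDist cbar B ≤
          (M / muinf + r * (1 + ρ) / 2) * ρ ^ n := by
        intro n
        have h1 : Metric.infDist cbar B ≤
            Metric.infDist (x n) B + dist cbar (x n) :=
          Metric.infDist_le_infDist_add_dist
        have h2 : Metric.infDist (x n) B ≤ M * ρ ^ n / muinf := by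
          rw [le_div_iff₀ hminf]
          have ha1 : muinf * Metric.infDist (x n) B ≤ mu n * Metric.infDist (x n) B :=
            mul_le_mul_of_nonneg_right (hmle n) Metric.infDist_nonneg
          have ha2 : mu n * Metric.infDist (x n) B ≤ M * ρ ^ n := by
            rw [← hv n]; exact (key n).2.1.2
          nlinarith [ha1, ha2]
        have h3 : dist cbar (x n) ≤ r * (1 + ρ) / 2 * ρ ^ n := by
          rw [dist_eq_norm, norm_sub_rev]
          exact hxcb n
        have e : M * ρ ^ n / muinf + r * (1 + ρ) / 2 * ρ ^ n =
            (M / muinf + r * (1 + ρ) / 2) * ρ ^ n := by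
          field_simp
        linarith
      have htend : Tendsto (fun n : ℕ => (M / muinf + r * (1 + ρ) / 2) * ρ ^ n)
          atTop (nhds 0) := by
        simpa using (tendsto_pow_atTop_nhds_zero_of_lt_one hρ0 hρlt).const_mul
          (M / muinf + r * (1 + ρ) / 2)
      have hle0 : Metric.infDist cbar B ≤ 0 :=
        ge_of_tendsto htend (Eventually.of_forall hbound)
      exact (hBclosed.mem_iff_infDist_zero hB).mpr
        (le_antisymm hle0 Metric.infDist_nonneg)
end

section
/- Let S ⊆ X be both A-projection absorbing and B-projection absorbing, let (λ_n) and (μ_n) be nonincreasing sequences in (0,1] with limits λ_∞ and μ_∞, and assume 1 > α_0 := max{λ_0, μ_0} and α_∞ := min{λ_∞, μ_∞} > 0. Assume there exists θ ∈ [0,1) such that for every x ∈ S, every a ∈ P_A(x) and every b ∈ P_B(x), ⟨a−x, x−b⟩ ≤ θ‖a−x‖·‖x−b‖. Then for every starting point y_{−1} ∈ S, the MARP sequences (x_n) and (y_n) converge linearly with rate ρ̂ to some point of A ∩ B, where ρ̂ ∈ (0,1) is defined by ρ̂² := sup_{n∈ℕ} max{ (λ_{n+1}/λ_n)²·(λ_n²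 + (1−λ_n)² + 2θλ_n(1−λ_n)), (μ_{n+1}/μ_n)²·(μ_n² + (1−μ_n)² + 2θμ_n(1−μ_n)) }. In particular, A ∩ B ≠ ∅. -/
open Filter Topology RealInnerProductSpace

lemma marp_le_of_sq_le_sq {u v : ℝ} (h : u ^ 2 ≤ v ^ 2) (hv : 0 ≤ v) : u ≤ v := by
  nlinarith [sq_nonneg (u - v), sq_nonneg (u + v)]

lemma marp_projSet_segment_s10 {X : Type*} [NormedAddCommGroup X] [NormedSpace ℝ X]
    {A : Set X} {y c : X} (h : c ∈ projSet A y) {l : ℝ} (h0 : 0 ≤ l) (h1 : l ≤ 1) :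
    c ∈ projSet A ((1 - l) • y + l • c) ∧
      ‖(1 - l) • y + l • c - c‖ = (1 - l) * ‖y - c‖ := by
  have hz : (1 - l) • y + l • c - c = (1 - l) • (y - c) := by module
  have hnorm : ‖(1 - l) • y + l • c - c‖ = (1 - l) * ‖y - c‖ := by
    rw [hz, norm_smul, Real.norm_eq_abs, abs_of_nonneg (by linarith)]
  refine ⟨⟨h.1, ?_⟩, hnorm⟩
  have hle : Metric.infDist ((1 - l) • y + l • c) A ≤ ‖(1 - l) • y + l • c - c‖ := by
    rw [← dist_eq_norm]; exact Metric.infDist_le_dist_of_mem h.1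
  have hd : dist y ((1 - l) • y + l • c) = l * ‖y - c‖ := by
    rw [dist_eq_norm]
    have hy : y - ((1 - l) • y + l • c) = l • (y - c) := by module
    rw [hy, norm_smul, Real.norm_eq_abs, abs_of_nonneg h0]
  have hge := Metric.infDist_le_infDist_add_dist (x := y)
    (y := (1 - l) • y + l • c) (s := A)
  rw [hd, ← h.2] at hge
  linarith [hnorm, hle, hge]

lemma marp_aux_alg (L L' c θ al be m : ℝ) (hL : 0 < L) (hL' : 0 ≤ L')
    (hc : 0 ≤ c) (hθ : 0 ≤ θ) (hL1 : L ≤ 1) (hal : 0 ≤ al) (hbe : 0 ≤ be)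
    (h1 : L * al ≤ m) (h2 : c * be ≤ m) :
    L' ^ 2 * ((1 - L) ^ 2 * al ^ 2 + c ^ 2 * be ^ 2 + 2 * θ * c * (1 - L) * al * be)
      ≤ (L' / L) ^ 2 * (L ^ 2 + (1 - L) ^ 2 + 2 * θ * L * (1 - L)) * m ^ 2 := by
  have hm : 0 ≤ m := le_trans (mul_nonneg hL.le hal) h1
  rw [div_pow, div_mul_eq_mul_div, div_mul_eq_mul_div, le_div_iff₀ (by positivity)]
  have k1 : (L * al) * (L * al) ≤ m * m := mul_le_mul h1 h1 (mul_nonneg hL.le hal) hm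
  have k2 : (c * be) * (c * be) ≤ m * m := mul_le_mul h2 h2 (mul_nonneg hc hbe) hm
  have k3 : (L * al) * (c * be) ≤ m * m := mul_le_mul h1 h2 (mul_nonneg hc hbe) hm
  linarith [mul_le_mul_of_nonneg_left k1 (by positivity : (0:ℝ) ≤ L' ^ 2 * (1 - L) ^ 2),
    mul_le_mul_of_nonneg_left k2 (by positivity : (0:ℝ) ≤ L' ^ 2 * L ^ 2),
    mul_le_mul_of_nonneg_left k3
      (show (0:ℝ) ≤ 2 * θ * L' ^ 2 * L * (1 - L) from
        mul_nonneg (mul_nonneg (mul_nonneg (by linarith) (sq_nonneg L')) hL.le)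
          (by linarith))]

set_option maxHeartbeats 1000000 in
/-- Corollary 5.10 (global linear convergence of the MARP). -/
theorem marp_global_linear_convergence
    {X : Type*} [NormedAddCommGroup X] [InnerProductSpace ℝ X] [FiniteDimensional ℝ X]
    (A B : Set X) (hA : A.Nonempty) (hAclosed : IsClosed A)
    (hB : B.Nonempty) (hBclosed : IsClosed B)
    (S : Set X) (hSA : ProjAbsorbing A S) (hSB : ProjAbsorbing B S)
    (lam mu : ℕ → ℝ) (hlam : ∀ n, lam n ∈ Set.Ioc (0 : ℝ) 1)
    (hmu : ∀ n, mu n ∈ Set.Ioc (0 : ℝ) 1)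
    (hlam_mono : ∀ n : ℕ, lam (n + 1) ≤ lam n) (hmu_mono : ∀ n : ℕ, mu (n + 1) ≤ mu n)
    (laminf muinf : ℝ)
    (hlaminf : Tendsto lam atTop (nhds laminf)) (hmuinf : Tendsto mu atTop (nhds muinf))
    (hα₀lt : max (lam 0) (mu 0) < 1) (hαinf : 0 < min laminf muinf)
    (θ : ℝ) (hθ : θ ∈ Set.Ico (0 : ℝ) 1)
    (hCQ : ∀ z ∈ S, ∀ p ∈ projSet A z, ∀ q ∈ projSet B z,
      ⟪p - z, z - q⟫ ≤ θ * ‖p - z‖ * ‖z - q‖)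
    (a x b Y : ℕ → X) (hMARP : IsMARP A B lam mu a x b Y) (hstart : Y 0 ∈ S)
    (ρhat : ℝ)
    (hρhat : ρhat = Real.sqrt (⨆ n : ℕ, max
      ((lam (n + 1) / lam n) ^ 2 *
        ((lam n) ^ 2 + (1 - lam n) ^ 2 + 2 * θ * lam n * (1 - lam n)))
      ((mu (n + 1) / mu n) ^ 2 *
        ((mu n) ^ 2 + (1 - mu n) ^ 2 + 2 * θ * mu n * (1 - mu n))))) :
    0 < ρhat ∧ ρhat < 1 ∧
    ∃ cbar ∈ A ∩ B, ∃ M : ℝ, 0 ≤ M ∧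
      ∀ n : ℕ, max (‖x n - cbar‖) (‖Y (n + 1) - cbar‖) ≤ M * ρhat ^ n := by
  obtain ⟨hθ0, hθ1⟩ := hθ
  have hlam_anti : Antitone lam := antitone_nat_of_succ_le hlam_mono
  have hmu_anti : Antitone mu := antitone_nat_of_succ_le hmu_mono
  have hlam_ge : ∀ n, laminf ≤ lam n := fun n =>
    le_of_tendsto hlaminf (Filter.eventually_atTop.2 ⟨n, fun k hk => hlam_anti hk⟩)
  have hmu_ge : ∀ n, muinf ≤ mu n := fun n =>
    le_of_tendsto hmuinf (Filter.eventually_atTop.2 ⟨n, fun k hk => hmu_anti hk⟩)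
  have hlaminf_pos : 0 < laminf := lt_of_lt_of_le hαinf (min_le_left _ _)
  have hmuinf_pos : 0 < muinf := lt_of_lt_of_le hαinf (min_le_right _ _)
  have hlam0 : lam 0 < 1 := lt_of_le_of_lt (le_max_left _ _) hα₀lt
  have hmu0 : mu 0 < 1 := lt_of_le_of_lt (le_max_right _ _) hα₀lt
  have hlam_le0 : ∀ n, lam n ≤ lam 0 := fun n => hlam_anti (Nat.zero_le n)
  have hmu_le0 : ∀ n, mu n ≤ mu 0 := fun n => hmu_anti (Nat.zero_le n)
  -- bound on each component of the sup
  have comp_bound : ∀ (f : ℕ → ℝ) (finf : ℝ), (∀ k, finf ≤ f k) → 0 < finf →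
      (∀ k, f k ≤ f 0) → f 0 < 1 → (∀ k : ℕ, f (k + 1) ≤ f k) → ∀ n : ℕ,
      (f (n + 1) / f n) ^ 2 * ((f n) ^ 2 + (1 - f n) ^ 2 + 2 * θ * f n * (1 - f n))
        ≤ 1 - 2 * (1 - θ) * (finf * (1 - f 0)) := by
    intro f finf hge hpos hle0 h0lt hmono n
    have hfn : 0 < f n := lt_of_lt_of_le hpos (hge n)
    have hfn1 : f n ≤ 1 := le_trans (hle0 n) h0lt.le
    have hr1 : f (n + 1) / f n ≤ 1 := div_le_one_of_le₀ (hmono n) hfn.le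
    have hr0 : 0 ≤ f (n + 1) / f n := div_nonneg (le_trans hpos.le (hge (n + 1))) hfn.le
    have hr2 : (f (n + 1) / f n) ^ 2 ≤ 1 := by nlinarith
    have hprod : finf * (1 - f 0) ≤ f n * (1 - f n) :=
      mul_le_mul (hge n) (by linarith [hle0 n]) (by linarith) hfn.le
    have hc0 : 0 ≤ (f n) ^ 2 + (1 - f n) ^ 2 + 2 * θ * f n * (1 - f n) := by
      nlinarith [mul_nonneg (mul_nonneg (show (0:ℝ) ≤ 2 * θ by linarith) hfn.le)
        (show (0:ℝ) ≤ 1 - f n by linarith), sq_nonneg (f n), sq_nonneg (1 - f n)]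
    nlinarith [mul_le_mul_of_nonneg_right hr2 hc0,
      mul_le_mul_of_nonneg_left hprod (show (0:ℝ) ≤ 2 * (1 - θ) by linarith)]
  have hFle : ∀ n : ℕ, max
      ((lam (n + 1) / lam n) ^ 2 *
        ((lam n) ^ 2 + (1 - lam n) ^ 2 + 2 * θ * lam n * (1 - lam n)))
      ((mu (n + 1) / mu n) ^ 2 *
        ((mu n) ^ 2 + (1 - mu n) ^ 2 + 2 * θ * mu n * (1 - mu n)))
      ≤ max (1 - 2 * (1 - θ) * (laminf * (1 - lam 0)))
          (1 - 2 * (1 - θ) * (muinf * (1 - mu 0))) := fun n =>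
    max_le_max (comp_bound lam laminf hlam_ge hlaminf_pos hlam_le0 hlam0 hlam_mono n)
      (comp_bound mu muinf hmu_ge hmuinf_pos hmu_le0 hmu0 hmu_mono n)
  have hbdd : BddAbove (Set.range (fun n : ℕ => max
      ((lam (n + 1) / lam n) ^ 2 *
        ((lam n) ^ 2 + (1 - lam n) ^ 2 + 2 * θ * lam n * (1 - lam n)))
      ((mu (n + 1) / mu n) ^ 2 *
        ((mu n) ^ 2 + (1 - mu n) ^ 2 + 2 * θ * mu n * (1 - mu n))))) :=
    ⟨_, by rintro _ ⟨n, rfl⟩; exact hFle n⟩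
  have hcomp0 : 0 < (lam (0 + 1) / lam 0) ^ 2 *
      ((lam 0) ^ 2 + (1 - lam 0) ^ 2 + 2 * θ * lam 0 * (1 - lam 0)) := by
    have h1 : 0 < (lam (0 + 1) / lam 0) ^ 2 :=
      pow_pos (div_pos (hlam (0 + 1)).1 (hlam 0).1) 2
    have h2 : 0 < (lam 0) ^ 2 + (1 - lam 0) ^ 2 + 2 * θ * lam 0 * (1 - lam 0) := by
      nlinarith [pow_pos (hlam 0).1 2, sq_nonneg (1 - lam 0),
        mul_nonneg (mul_nonneg (show (0:ℝ) ≤ 2 * θ by linarith) (hlam 0).1.le)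
          (show (0:ℝ) ≤ 1 - lam 0 by linarith)]
    exact mul_pos h1 h2
  have hRpos : 0 < ⨆ n : ℕ, max
      ((lam (n + 1) / lam n) ^ 2 *
        ((lam n) ^ 2 + (1 - lam n) ^ 2 + 2 * θ * lam n * (1 - lam n)))
      ((mu (n + 1) / mu n) ^ 2 *
        ((mu n) ^ 2 + (1 - mu n) ^ 2 + 2 * θ * mu n * (1 - mu n))) :=
    lt_of_lt_of_le hcomp0 (le_trans (le_max_left _ _) (le_ciSup hbdd 0))
  have hRlt1 : (⨆ n : ℕ, max
      ((lam (n + 1) / lam n) ^ 2 *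
        ((lam n) ^ 2 + (1 - lam n) ^ 2 + 2 * θ * lam n * (1 - lam n)))
      ((mu (n + 1) / mu n) ^ 2 *
        ((mu n) ^ 2 + (1 - mu n) ^ 2 + 2 * θ * mu n * (1 - mu n)))) < 1 := by
    refine lt_of_le_of_lt (ciSup_le hFle) (max_lt ?_ ?_)
    · nlinarith [mul_pos hlaminf_pos (show (0:ℝ) < 1 - lam 0 by linarith)]
    · nlinarith [mul_pos hmuinf_pos (show (0:ℝ) < 1 - mu 0 by linarith)]
  have hρpos : 0 < ρhat := by rw [hρhat]; exact Real.sqrt_pos.2 hRpos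
  have hρ0 : 0 ≤ ρhat := hρpos.le
  have hρsq : ρhat ^ 2 = ⨆ n : ℕ, max
      ((lam (n + 1) / lam n) ^ 2 *
        ((lam n) ^ 2 + (1 - lam n) ^ 2 + 2 * θ * lam n * (1 - lam n)))
      ((mu (n + 1) / mu n) ^ 2 *
        ((mu n) ^ 2 + (1 - mu n) ^ 2 + 2 * θ * mu n * (1 - mu n))) := by
    rw [hρhat]; exact Real.sq_sqrt hRpos.le
  have hρlt1 : ρhat < 1 := by
    rw [hρhat]; exact (Real.sqrt_lt' one_pos).2 (by nlinarith)
  have hcomp1 : ∀ k : ℕ, (lam (k + 1) / lam k) ^ 2 *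
      ((lam k) ^ 2 + (1 - lam k) ^ 2 + 2 * θ * lam k * (1 - lam k)) ≤ ρhat ^ 2 := by
    intro k
    rw [hρsq]; exact le_trans (le_max_left _ _) (le_ciSup hbdd k)
  have hcomp2 : ∀ k : ℕ, (mu (k + 1) / mu k) ^ 2 *
      ((mu k) ^ 2 + (1 - mu k) ^ 2 + 2 * θ * mu k * (1 - mu k)) ≤ ρhat ^ 2 := by
    intro k
    rw [hρsq]; exact le_trans (le_max_right _ _) (le_ciSup hbdd k)
  -- MARP components
  have hPa : ∀ n, a n ∈ projSet A (Y n) := fun n => (hMARP n).1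
  have hxdef : ∀ n, x n = (1 - lam n) • Y n + lam n • a n := fun n => (hMARP n).2.1
  have hPb : ∀ n, b n ∈ projSet B (x n) := fun n => (hMARP n).2.2.1
  have hYdef : ∀ n, Y (n + 1) = (1 - mu n) • x n + mu n • b n := fun n => (hMARP n).2.2.2
  have hax : ∀ n, a n ∈ projSet A (x n) := by
    intro n; rw [hxdef n]
    exact (marp_projSet_segment_s10 (hPa n) (hlam n).1.le (hlam n).2).1
  have hxa_norm : ∀ n, ‖x n - a n‖ = (1 - lam n) * ‖Y n - a n‖ := by
    intro n; rw [hxdef n]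
    exact (marp_projSet_segment_s10 (hPa n) (hlam n).1.le (hlam n).2).2
  have hbY : ∀ n, b n ∈ projSet B (Y (n + 1)) := by
    intro n; rw [hYdef n]
    exact (marp_projSet_segment_s10 (hPb n) (hmu n).1.le (hmu n).2).1
  have hYb_norm : ∀ n, ‖Y (n + 1) - b n‖ = (1 - mu n) * ‖x n - b n‖ := by
    intro n; rw [hYdef n]
    exact (marp_projSet_segment_s10 (hPb n) (hmu n).1.le (hmu n).2).2
  -- membership in S
  have hYS : ∀ n, Y n ∈ S := by
    intro n; induction n with
    | zero => exact hstart
    | succ k ih =>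
      have hxk : x k ∈ S := hSA _ ih _ (hPa k)
        ⟨1 - lam k, lam k, by linarith [(hlam k).2], (hlam k).1.le, by ring, (hxdef k).symm⟩
      exact hSB _ hxk _ (hPb k)
        ⟨1 - mu k, mu k, by linarith [(hmu k).2], (hmu k).1.le, by ring, (hYdef k).symm⟩
  have hxSmem : ∀ n, x n ∈ S := fun n => hSA _ (hYS n) _ (hPa n)
    ⟨1 - lam n, lam n, by linarith [(hlam n).2], (hlam n).1.le, by ring, (hxdef n).symm⟩
  -- nonnegativity of the max quantity
  have hmm_nonneg : ∀ k : ℕ, 0 ≤ max (lam k * ‖Y k - a k‖) (mu k * ‖x k - b k‖) :=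
    fun k => le_trans (mul_nonneg (hlam k).1.le (norm_nonneg _)) (le_max_left _ _)
  -- main one-step estimate
  have step : ∀ n : ℕ,
      lam (n + 1) * ‖Y (n + 1) - a (n + 1)‖
        ≤ ρhat * max (lam n * ‖Y n - a n‖) (mu n * ‖x n - b n‖) ∧
      mu (n + 1) * ‖x (n + 1) - b (n + 1)‖
        ≤ ρhat * max (lam n * ‖Y n - a n‖) (mu n * ‖x n - b n‖) := by
    intro n
    have hρmm : 0 ≤ ρhat * max (lam n * ‖Y n - a n‖) (mu n * ‖x n - b n‖) :=
      mul_nonneg hρ0 (hmm_nonneg n)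
    -- Claim 1
    have hproj1 : ‖Y (n + 1) - a (n + 1)‖ ≤ ‖Y (n + 1) - a n‖ := by
      rw [(hPa (n + 1)).2, ← dist_eq_norm]
      exact Metric.infDist_le_dist_of_mem (hPa n).1
    have hdecomp : Y (n + 1) - a n = (x n - a n) + mu n • (b n - x n) := by
      rw [hYdef n]; module
    have hexp : ‖Y (n + 1) - a n‖ ^ 2
        = ‖x n - a n‖ ^ 2 + 2 * (mu n * ⟪x n - a n, b n - x n⟫)
          + (mu n * ‖b n - x n‖) ^ 2 := by
      rw [hdecomp, norm_add_sq_real, real_inner_smul_right, norm_smul,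
        Real.norm_eq_abs, abs_of_nonneg (hmu n).1.le]
    have hip : ⟪x n - a n, b n - x n⟫ ≤ θ * ‖x n - a n‖ * ‖x n - b n‖ := by
      have h := hCQ (x n) (hxSmem n) (a n) (hax n) (b n) (hPb n)
      have hflip : ⟪x n - a n, b n - x n⟫ = ⟪a n - x n, x n - b n⟫ := by
        rw [← neg_sub (a n) (x n), ← neg_sub (x n) (b n), inner_neg_neg]
      rw [hflip, norm_sub_rev (x n) (a n)]
      exact h
    rw [hxa_norm n] at hexp hip
    rw [norm_sub_rev (b n) (x n)] at hexp
    have hsq1 : ‖Y (n + 1) - a n‖ ^ 2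
        ≤ (1 - lam n) ^ 2 * ‖Y n - a n‖ ^ 2 + (mu n) ^ 2 * ‖x n - b n‖ ^ 2
          + 2 * θ * mu n * (1 - lam n) * ‖Y n - a n‖ * ‖x n - b n‖ := by
      linarith [mul_le_mul_of_nonneg_left hip
        (show (0:ℝ) ≤ 2 * mu n by linarith [(hmu n).1]), hexp]
    have haux := marp_aux_alg (lam n) (lam (n + 1)) (mu n) θ ‖Y n - a n‖ ‖x n - b n‖
      (max (lam n * ‖Y n - a n‖) (mu n * ‖x n - b n‖))
      (hlam n).1 (hlam (n + 1)).1.le (hmu n).1.le hθ0 (hlam n).2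
      (norm_nonneg _) (norm_nonneg _) (le_max_left _ _) (le_max_right _ _)
    have e2 : (lam (n + 1)) ^ 2 * ‖Y (n + 1) - a (n + 1)‖ ^ 2
        ≤ (lam (n + 1)) ^ 2 * ‖Y (n + 1) - a n‖ ^ 2 :=
      mul_le_mul_of_nonneg_left (pow_le_pow_left₀ (norm_nonneg _) hproj1 2) (sq_nonneg _)
    have e3 : (lam (n + 1)) ^ 2 * ‖Y (n + 1) - a n‖ ^ 2
        ≤ (lam (n + 1)) ^ 2 * ((1 - lam n) ^ 2 * ‖Y n - a n‖ ^ 2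
          + (mu n) ^ 2 * ‖x n - b n‖ ^ 2
          + 2 * θ * mu n * (1 - lam n) * ‖Y n - a n‖ * ‖x n - b n‖) :=
      mul_le_mul_of_nonneg_left hsq1 (sq_nonneg _)
    have e5 := mul_le_mul_of_nonneg_right (hcomp1 n)
      (sq_nonneg (max (lam n * ‖Y n - a n‖) (mu n * ‖x n - b n‖)))
    have e0 : (lam (n + 1) * ‖Y (n + 1) - a (n + 1)‖) ^ 2
        ≤ (ρhat * max (lam n * ‖Y n - a n‖) (mu n * ‖x n - b n‖)) ^ 2 := by
      linarith [e2, e3, haux, e5]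
    have hclaim1 : lam (n + 1) * ‖Y (n + 1) - a (n + 1)‖
        ≤ ρhat * max (lam n * ‖Y n - a n‖) (mu n * ‖x n - b n‖) :=
      marp_le_of_sq_le_sq e0 hρmm
    refine ⟨hclaim1, ?_⟩
    -- Claim 2
    have hT_le : lam (n + 1) * ‖Y (n + 1) - a (n + 1)‖
        ≤ max (lam n * ‖Y n - a n‖) (mu n * ‖x n - b n‖) := by
      refine le_trans hclaim1 ?_
      nlinarith [hmm_nonneg n]
    have hproj2 : ‖x (n + 1) - b (n + 1)‖ ≤ ‖x (n + 1) - b n‖ := by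
      rw [(hPb (n + 1)).2, ← dist_eq_norm]
      exact Metric.infDist_le_dist_of_mem (hPb n).1
    have hdecomp2 : x (n + 1) - b n
        = (Y (n + 1) - b n) + lam (n + 1) • (a (n + 1) - Y (n + 1)) := by
      rw [hxdef (n + 1)]; module
    have hexp2 : ‖x (n + 1) - b n‖ ^ 2
        = ‖Y (n + 1) - b n‖ ^ 2
          + 2 * (lam (n + 1) * ⟪Y (n + 1) - b n, a (n + 1) - Y (n + 1)⟫)
          + (lam (n + 1) * ‖a (n + 1) - Y (n + 1)‖) ^ 2 := by
      rw [hdecomp2, norm_add_sq_real, real_inner_smul_right, norm_smul,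
        Real.norm_eq_abs, abs_of_nonneg (hlam (n + 1)).1.le]
    have hip2 : ⟪Y (n + 1) - b n, a (n + 1) - Y (n + 1)⟫
        ≤ θ * ‖a (n + 1) - Y (n + 1)‖ * ‖Y (n + 1) - b n‖ := by
      rw [real_inner_comm]
      exact hCQ (Y (n + 1)) (hYS (n + 1)) (a (n + 1)) (hPa (n + 1)) (b n) (hbY n)
    rw [norm_sub_rev (a (n + 1)) (Y (n + 1))] at hexp2 hip2
    rw [hYb_norm n] at hexp2 hip2
    have hsq2 : ‖x (n + 1) - b n‖ ^ 2
        ≤ (1 - mu n) ^ 2 * ‖x n - b n‖ ^ 2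
          + 1 ^ 2 * (lam (n + 1) * ‖Y (n + 1) - a (n + 1)‖) ^ 2
          + 2 * θ * 1 * (1 - mu n) * ‖x n - b n‖
            * (lam (n + 1) * ‖Y (n + 1) - a (n + 1)‖) := by
      linarith [mul_le_mul_of_nonneg_left hip2
        (show (0:ℝ) ≤ 2 * lam (n + 1) by linarith [(hlam (n + 1)).1]), hexp2]
    have haux2 := marp_aux_alg (mu n) (mu (n + 1)) 1 θ ‖x n - b n‖
      (lam (n + 1) * ‖Y (n + 1) - a (n + 1)‖)
      (max (lam n * ‖Y n - a n‖) (mu n * ‖x n - b n‖))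
      (hmu n).1 (hmu (n + 1)).1.le zero_le_one hθ0 (hmu n).2
      (norm_nonneg _) (mul_nonneg (hlam (n + 1)).1.le (norm_nonneg _))
      (le_max_right _ _) (by rw [one_mul]; exact hT_le)
    have f2 : (mu (n + 1)) ^ 2 * ‖x (n + 1) - b (n + 1)‖ ^ 2
        ≤ (mu (n + 1)) ^ 2 * ‖x (n + 1) - b n‖ ^ 2 :=
      mul_le_mul_of_nonneg_left (pow_le_pow_left₀ (norm_nonneg _) hproj2 2) (sq_nonneg _)
    have f3 : (mu (n + 1)) ^ 2 * ‖x (n + 1) - b n‖ ^ 2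
        ≤ (mu (n + 1)) ^ 2 * ((1 - mu n) ^ 2 * ‖x n - b n‖ ^ 2
          + 1 ^ 2 * (lam (n + 1) * ‖Y (n + 1) - a (n + 1)‖) ^ 2
          + 2 * θ * 1 * (1 - mu n) * ‖x n - b n‖
            * (lam (n + 1) * ‖Y (n + 1) - a (n + 1)‖)) :=
      mul_le_mul_of_nonneg_left hsq2 (sq_nonneg _)
    have f5 := mul_le_mul_of_nonneg_right (hcomp2 n)
      (sq_nonneg (max (lam n * ‖Y n - a n‖) (mu n * ‖x n - b n‖)))
    have f0 : (mu (n + 1) * ‖x (n + 1) - b (n + 1)‖) ^ 2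
        ≤ (ρhat * max (lam n * ‖Y n - a n‖) (mu n * ‖x n - b n‖)) ^ 2 := by
      linarith [f2, f3, haux2, f5]
    exact marp_le_of_sq_le_sq f0 hρmm
  -- geometric decay of the max quantity
  have hmrec : ∀ n : ℕ, max (lam (n + 1) * ‖Y (n + 1) - a (n + 1)‖)
      (mu (n + 1) * ‖x (n + 1) - b (n + 1)‖)
      ≤ ρhat * max (lam n * ‖Y n - a n‖) (mu n * ‖x n - b n‖) :=
    fun n => max_le (step n).1 (step n).2
  have hmgeo : ∀ n : ℕ, max (lam n * ‖Y n - a n‖) (mu n * ‖x n - b n‖)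
      ≤ max (lam 0 * ‖Y 0 - a 0‖) (mu 0 * ‖x 0 - b 0‖) * ρhat ^ n := by
    intro n; induction n with
    | zero => simp
    | succ k ih =>
      calc max (lam (k + 1) * ‖Y (k + 1) - a (k + 1)‖)
            (mu (k + 1) * ‖x (k + 1) - b (k + 1)‖)
          ≤ ρhat * max (lam k * ‖Y k - a k‖) (mu k * ‖x k - b k‖) := hmrec k
        _ ≤ ρhat * (max (lam 0 * ‖Y 0 - a 0‖) (mu 0 * ‖x 0 - b 0‖) * ρhat ^ k) :=
            mul_le_mul_of_nonneg_left ih hρ0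
        _ = max (lam 0 * ‖Y 0 - a 0‖) (mu 0 * ‖x 0 - b 0‖) * ρhat ^ (k + 1) := by ring
  set m0 : ℝ := max (lam 0 * ‖Y 0 - a 0‖) (mu 0 * ‖x 0 - b 0‖) with hm0def
  have hm0 : 0 ≤ m0 := hmm_nonneg 0
  -- step distances
  have hxY : ∀ n, dist (x n) (Y (n + 1)) = mu n * ‖x n - b n‖ := by
    intro n
    rw [dist_eq_norm']
    have h : Y (n + 1) - x n = mu n • (b n - x n) := by rw [hYdef n]; module
    rw [h, norm_smul, Real.norm_eq_abs, abs_of_nonneg (hmu n).1.le, norm_sub_rev]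
  have hYx : ∀ n, dist (Y (n + 1)) (x (n + 1)) = lam (n + 1) * ‖Y (n + 1) - a (n + 1)‖ := by
    intro n
    rw [dist_eq_norm']
    have h : x (n + 1) - Y (n + 1) = lam (n + 1) • (a (n + 1) - Y (n + 1)) := by
      rw [hxdef (n + 1)]; module
    rw [h, norm_smul, Real.norm_eq_abs, abs_of_nonneg (hlam (n + 1)).1.le, norm_sub_rev]
  have hdx : ∀ n, dist (x n) (x (n + 1)) ≤ 2 * m0 * ρhat ^ n := by
    intro n
    have h1 := dist_triangle (x n) (Y (n + 1)) (x (n + 1))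
    rw [hxY n, hYx n] at h1
    have h2 := (step n).1
    have h3 := hmgeo n
    have h4 : mu n * ‖x n - b n‖ ≤ max (lam n * ‖Y n - a n‖) (mu n * ‖x n - b n‖) :=
      le_max_right _ _
    have h5 : ρhat * max (lam n * ‖Y n - a n‖) (mu n * ‖x n - b n‖)
        ≤ max (lam n * ‖Y n - a n‖) (mu n * ‖x n - b n‖) := by
      nlinarith [hmm_nonneg n]
    linarith
  have hcauchy : CauchySeq x := cauchySeq_of_le_geometric ρhat (2 * m0) hρlt1 hdx
  obtain ⟨cbar, hctend⟩ := cauchySeq_tendsto_of_complete hcauchy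
  have hxc : ∀ n, dist (x n) cbar ≤ 2 * m0 * ρhat ^ n / (1 - ρhat) :=
    dist_le_of_le_geometric_of_tendsto ρhat (2 * m0) hρlt1 hdx hctend
  have hYc : ∀ n, dist (Y (n + 1)) cbar ≤ (m0 + 2 * m0 / (1 - ρhat)) * ρhat ^ n := by
    intro n
    have h1 := dist_triangle (Y (n + 1)) (x n) cbar
    rw [dist_comm (Y (n + 1)) (x n), hxY n] at h1
    have h2 : mu n * ‖x n - b n‖ ≤ m0 * ρhat ^ n :=
      le_trans (le_max_right _ _) (hmgeo n)
    have h3 := hxc n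
    have h5 : (m0 + 2 * m0 / (1 - ρhat)) * ρhat ^ n
        = m0 * ρhat ^ n + 2 * m0 * ρhat ^ n / (1 - ρhat) := by ring
    linarith
  have hYtend : Tendsto (fun n => Y (n + 1)) atTop (𝓝 cbar) := by
    rw [tendsto_iff_dist_tendsto_zero]
    refine squeeze_zero (fun n => dist_nonneg) hYc ?_
    have h := (tendsto_pow_atTop_nhds_zero_of_lt_one hρ0 hρlt1).const_mul
      (m0 + 2 * m0 / (1 - ρhat))
    simpa using h
  -- cbar ∈ B
  have hdBx : ∀ n, Metric.infDist (x n) B ≤ m0 * ρhat ^ n / muinf := by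
    intro n
    rw [le_div_iff₀ hmuinf_pos, show Metric.infDist (x n) B = ‖x n - b n‖ from (hPb n).2.symm]
    have h2 : mu n * ‖x n - b n‖ ≤ m0 * ρhat ^ n :=
      le_trans (le_max_right _ _) (hmgeo n)
    nlinarith [norm_nonneg (x n - b n), hmu_ge n,
      mul_nonneg (sub_nonneg.2 (hmu_ge n)) (norm_nonneg (x n - b n))]
  have htB : Tendsto (fun n => Metric.infDist (x n) B) atTop (𝓝 0) := by
    refine squeeze_zero (fun n => Metric.infDist_nonneg) hdBx ?_
    have h := ((tendsto_pow_atTop_nhds_zero_of_lt_one hρ0 hρlt1).const_mul m0).div_const muinf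
    simpa using h
  have hcB : cbar ∈ B := by
    have hcont := ((Metric.continuous_infDist_pt B).tendsto cbar).comp hctend
    exact (hBclosed.mem_iff_infDist_zero hB).2 (tendsto_nhds_unique hcont htB)
  -- cbar ∈ A
  have hdAY : ∀ n, Metric.infDist (Y (n + 1)) A ≤ m0 * ρhat ^ n / laminf := by
    intro n
    rw [le_div_iff₀ hlaminf_pos,
      show Metric.infDist (Y (n + 1)) A = ‖Y (n + 1) - a (n + 1)‖ from (hPa (n + 1)).2.symm]
    have h2 := (step n).1
    have h3 := hmgeo n
    nlinarith [norm_nonneg (Y (n + 1) - a (n + 1)),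
      mul_nonneg (sub_nonneg.2 (hlam_ge (n + 1))) (norm_nonneg (Y (n + 1) - a (n + 1))),
      mul_nonneg (sub_nonneg.2 hρlt1.le) (hmm_nonneg n)]
  have htA : Tendsto (fun n => Metric.infDist (Y (n + 1)) A) atTop (𝓝 0) := by
    refine squeeze_zero (fun n => Metric.infDist_nonneg) hdAY ?_
    have h := ((tendsto_pow_atTop_nhds_zero_of_lt_one hρ0 hρlt1).const_mul m0).div_const laminf
    simpa using h
  have hcA : cbar ∈ A := by
    have hcont := ((Metric.continuous_infDist_pt A).tendsto cbar).comp hYtend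
    exact (hAclosed.mem_iff_infDist_zero hA).2 (tendsto_nhds_unique hcont htA)
  refine ⟨hρpos, hρlt1, cbar, ⟨hcA, hcB⟩, m0 + 2 * m0 / (1 - ρhat), ?_, ?_⟩
  · have h : 0 ≤ 2 * m0 / (1 - ρhat) := div_nonneg (by linarith) (by linarith)
    linarith
  · intro n
    have hb1 : ‖x n - cbar‖ ≤ (m0 + 2 * m0 / (1 - ρhat)) * ρhat ^ n := by
      rw [← dist_eq_norm]
      have h3 := hxc n
      have h5 : (m0 + 2 * m0 / (1 - ρhat)) * ρhat ^ n
          = m0 * ρhat ^ n + 2 * m0 * ρhat ^ n / (1 - ρhat) := by ring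
      have h6 : 0 ≤ m0 * ρhat ^ n := mul_nonneg hm0 (pow_nonneg hρ0 n)
      linarith
    have hb2 : ‖Y (n + 1) - cbar‖ ≤ (m0 + 2 * m0 / (1 - ρhat)) * ρhat ^ n := by
      rw [← dist_eq_norm]; exact hYc n
    exact max_le hb1 hb2
end

section
/- Suppose A and B are affine subspaces of X with A ∩ B ≠ ∅, and let S := aff(A ∪ B) be the affine span of A ∪ B. Let (λ_n) and (μ_n) be nonincreasing sequences in (0,1] with limits λ_∞ and μ_∞ satisfying 1 > max{λ_0, μ_0} ≥ min{λ_∞, μ_∞} > 0, and let y_{−1} ∈ S. Then there exists ρ ∈ (0,1) such that the MARP sequences (x_n) and (y_n) with starting point y_{−1} converge linearly with rate ρ to some point of A ∩ B. -/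
open Filter Topology

open scoped RealInnerProductSpace

/-- Squared-norm identity for a relaxed projection onto a subspace. -/
lemma relax_norm_sq {X : Type*} [NormedAddCommGroup X] [InnerProductSpace ℝ X]
    [FiniteDimensional ℝ X] (L : Submodule ℝ X) (l : ℝ) (w : X) :
    ‖(1 - l) • w + l • (Submodule.orthogonalProjectionOnto L w : X)‖ ^ 2
      = ‖w‖ ^ 2 - l * (2 - l) * ‖w - Submodule.orthogonalProjectionOnto L w‖ ^ 2 := by
  set d : X := w - Submodule.orthogonalProjectionOnto L w with hd
  have h1 : (1 - l) • w + l • (Submodule.orthogonalProjectionOnto L w : X) = w - l • d := by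
    rw [hd]; module
  have h3 : ⟪(Submodule.orthogonalProjectionOnto L w : X), d⟫ = 0 := by
    rw [real_inner_comm]
    exact Submodule.starProjection_inner_eq_zero w _ (Submodule.orthogonalProjectionOnto L w).2
  have h2 : ⟪w, d⟫ = ‖d‖ ^ 2 := by
    have hw : w = d + (Submodule.orthogonalProjectionOnto L w : X) := by rw [hd]; abel
    rw [hw, inner_add_left, h3, real_inner_self_eq_norm_sq]
    ring
  rw [h1, norm_sub_sq_real, real_inner_smul_right, h2, norm_smul]
  rw [mul_pow, Real.norm_eq_abs, sq_abs]
  ring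

/-- Uniqueness of nearest points on an affine subspace. -/
lemma projSet_eq_affine {X : Type*} [NormedAddCommGroup X] [InnerProductSpace ℝ X]
    [FiniteDimensional ℝ X]
    (L : Submodule ℝ X) (c : X) (A : Set X)
    (hA : ∀ z, z ∈ A ↔ ∃ w ∈ L, z = c + w) (y u : X) (hu : u ∈ projSet A y) :
    u = c + Submodule.orthogonalProjectionOnto L (y - c) := by
  obtain ⟨huA, hnorm⟩ := hu
  obtain ⟨w, hw, rfl⟩ := (hA u).1 huA
  set q : X := c + Submodule.orthogonalProjectionOnto L (y - c) with hq
  have hqA : q ∈ A := (hA q).2 ⟨_, (Submodule.orthogonalProjectionOnto L (y - c)).2, rfl⟩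
  have h1 : ‖y - (c + w)‖ ≤ ‖y - q‖ := by
    rw [hnorm, ← dist_eq_norm]
    exact Metric.infDist_le_dist_of_mem hqA
  have h2 : q - (c + w) ∈ L := by
    have hmem := L.sub_mem (Submodule.orthogonalProjectionOnto L (y - c)).2 hw
    have he : q - (c + w) = (Submodule.orthogonalProjectionOnto L (y - c) : X) - w := by rw [hq]; abel
    rwa [he]
  have horth : ⟪y - q, q - (c + w)⟫ = 0 := by
    have h3 : y - q = (y - c) - Submodule.orthogonalProjectionOnto L (y - c) := by rw [hq]; abel
    rw [h3]
    exact Submodule.starProjection_inner_eq_zero (y - c) _ h2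
  have hpyth : ‖y - (c + w)‖ ^ 2 = ‖y - q‖ ^ 2 + ‖q - (c + w)‖ ^ 2 := by
    have he : y - (c + w) = (y - q) + (q - (c + w)) := by abel
    rw [he, norm_add_sq_real, horth]; ring
  have hz : ‖q - (c + w)‖ = 0 := by
    nlinarith [norm_nonneg (q - (c + w)), norm_nonneg (y - q), norm_nonneg (y - (c + w))]
  have hqe := norm_sub_eq_zero_iff.mp hz
  rw [← hqe]

set_option maxHeartbeats 1000000 in
/-- Example 5.11 (two affine subspaces): the MARP converges linearly to a point
of the intersection. -/
theorem marp_two_affine_subspaces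
    {X : Type*} [NormedAddCommGroup X] [InnerProductSpace ℝ X] [FiniteDimensional ℝ X]
    (A B : Set X)
    (hAaff : ∃ (v : X) (L : Submodule ℝ X), A = (fun w => v + w) '' (L : Set X))
    (hBaff : ∃ (v : X) (L : Submodule ℝ X), B = (fun w => v + w) '' (L : Set X))
    (hAB : (A ∩ B).Nonempty)
    (S : Set X) (hS : S = (affineSpan ℝ (A ∪ B) : Set X))
    (lam mu : ℕ → ℝ) (hlam : ∀ n, lam n ∈ Set.Ioc (0 : ℝ) 1)
    (hmu : ∀ n, mu n ∈ Set.Ioc (0 : ℝ) 1)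
    (hlam_mono : ∀ n : ℕ, lam (n + 1) ≤ lam n) (hmu_mono : ∀ n : ℕ, mu (n + 1) ≤ mu n)
    (laminf muinf : ℝ)
    (hlaminf : Tendsto lam atTop (nhds laminf)) (hmuinf : Tendsto mu atTop (nhds muinf))
    (hα₀lt : max (lam 0) (mu 0) < 1) (hαinf : 0 < min laminf muinf)
    (a x b Y : ℕ → X) (hMARP : IsMARP A B lam mu a x b Y) (hstart : Y 0 ∈ S) :
    ∃ ρ : ℝ, ρ ∈ Set.Ioo (0 : ℝ) 1 ∧
      ∃ cbar ∈ A ∩ B, ∃ M : ℝ, 0 ≤ M ∧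
        ∀ n : ℕ, max (‖x n - cbar‖) (‖Y (n + 1) - cbar‖) ≤ M * ρ ^ n := by
  classical
  obtain ⟨c, hcA, hcB⟩ := hAB
  obtain ⟨vA, LA, hAeq⟩ := hAaff
  obtain ⟨vB, LB, hBeq⟩ := hBaff
  -- canonical descriptions of A and B based at the common point c
  have hA' : ∀ z, z ∈ A ↔ ∃ w ∈ LA, z = c + w := by
    have hcA' := hcA
    rw [hAeq] at hcA'
    obtain ⟨l0, hl0, hc⟩ := hcA'
    have hc' : vA + l0 = c := hc
    intro z
    constructor
    · intro hz
      rw [hAeq] at hz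
      obtain ⟨w, hw, hwz⟩ := hz
      have hwz' : vA + w = z := hwz
      exact ⟨w - l0, LA.sub_mem hw hl0, by rw [← hwz', ← hc']; abel⟩
    · rintro ⟨w, hw, rfl⟩
      rw [hAeq]
      exact ⟨l0 + w, LA.add_mem hl0 hw, by show vA + (l0 + w) = c + w; rw [← hc']; abel⟩
  have hB' : ∀ z, z ∈ B ↔ ∃ w ∈ LB, z = c + w := by
    have hcB' := hcB
    rw [hBeq] at hcB'
    obtain ⟨l0, hl0, hc⟩ := hcB'
    have hc' : vB + l0 = c := hc
    intro z
    constructor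
    · intro hz
      rw [hBeq] at hz
      obtain ⟨w, hw, hwz⟩ := hz
      have hwz' : vB + w = z := hwz
      exact ⟨w - l0, LB.sub_mem hw hl0, by rw [← hwz', ← hc']; abel⟩
    · rintro ⟨w, hw, rfl⟩
      rw [hBeq]
      exact ⟨l0 + w, LB.add_mem hl0 hw, by show vB + (l0 + w) = c + w; rw [← hc']; abel⟩
  -- projections and relaxed operators
  obtain ⟨pA, hpAdef⟩ : ∃ f : X → X, f = fun w => (Submodule.orthogonalProjectionOnto LA w : X) := ⟨_, rfl⟩
  obtain ⟨pB, hpBdef⟩ : ∃ f : X → X, f = fun w => (Submodule.orthogonalProjectionOnto LB w : X) := ⟨_, rfl⟩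
  set QA : ℝ → X → X := fun l w => (1 - l) • w + l • pA w with hQAdef
  set QB : ℝ → X → X := fun m w => (1 - m) • w + m • pB w with hQBdef
  set T : ℝ → ℝ → X → X := fun l m w => QB m (QA l w) with hTdef
  set W : Submodule ℝ X := (LA ⊔ LB) ⊓ (LA ⊓ LB)ᗮ with hWdef
  have hpAmem : ∀ w, pA w ∈ LA := by
    intro w; rw [hpAdef]; exact (Submodule.orthogonalProjectionOnto LA w).2
  have hpBmem : ∀ w, pB w ∈ LB := by
    intro w; rw [hpBdef]; exact (Submodule.orthogonalProjectionOnto LB w).2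
  have hpAorth : ∀ w, ∀ z ∈ LA, ⟪w - pA w, z⟫ = 0 := by
    intro w z hz; rw [hpAdef]; exact Submodule.starProjection_inner_eq_zero w z hz
  have hpBorth : ∀ w, ∀ z ∈ LB, ⟪w - pB w, z⟫ = 0 := by
    intro w z hz; rw [hpBdef]; exact Submodule.starProjection_inner_eq_zero w z hz
  have hpAid : ∀ w ∈ LA, pA w = w := by
    intro w hw; rw [hpAdef]; exact Submodule.starProjection_eq_self_iff.2 hw
  have hpBid : ∀ w ∈ LB, pB w = w := by
    intro w hw; rw [hpBdef]; exact Submodule.starProjection_eq_self_iff.2 hw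
  have hpAsub : ∀ u v : X, pA (u - v) = pA u - pA v := by
    intro u v; simp only [hpAdef, map_sub, Submodule.coe_sub]
  have hpBsub : ∀ u v : X, pB (u - v) = pB u - pB v := by
    intro u v; simp only [hpBdef, map_sub, Submodule.coe_sub]
  have hpAsmul : ∀ (t : ℝ) (u : X), pA (t • u) = t • pA u := by
    intro t u; simp only [hpAdef, map_smul, Submodule.coe_smul]
  have hpBsmul : ∀ (t : ℝ) (u : X), pB (t • u) = t • pB u := by
    intro t u; simp only [hpBdef, map_smul, Submodule.coe_smul]
  have hpA0 : pA 0 = 0 := by simp only [hpAdef, map_zero, Submodule.coe_zero]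
  have hpB0 : pB 0 = 0 := by simp only [hpBdef, map_zero, Submodule.coe_zero]
  have hQAsq : ∀ (l : ℝ) (w : X), ‖QA l w‖ ^ 2 = ‖w‖ ^ 2 - l * (2 - l) * ‖w - pA w‖ ^ 2 := by
    intro l w
    show ‖(1 - l) • w + l • pA w‖ ^ 2 = ‖w‖ ^ 2 - l * (2 - l) * ‖w - pA w‖ ^ 2
    rw [hpAdef]; exact relax_norm_sq LA l w
  have hQBsq : ∀ (m : ℝ) (w : X), ‖QB m w‖ ^ 2 = ‖w‖ ^ 2 - m * (2 - m) * ‖w - pB w‖ ^ 2 := by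
    intro m w
    show ‖(1 - m) • w + m • pB w‖ ^ 2 = ‖w‖ ^ 2 - m * (2 - m) * ‖w - pB w‖ ^ 2
    rw [hpBdef]; exact relax_norm_sq LB m w
  have hQAne : ∀ l : ℝ, 0 ≤ l → l ≤ 1 → ∀ w : X, ‖QA l w‖ ≤ ‖w‖ := by
    intro l h0 h1 w
    have hsq := hQAsq l w
    have hnn : 0 ≤ l * (2 - l) * ‖w - pA w‖ ^ 2 :=
      mul_nonneg (mul_nonneg h0 (by linarith)) (sq_nonneg _)
    nlinarith [norm_nonneg (QA l w), norm_nonneg w]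
  -- W-invariance
  have hpAW : ∀ w ∈ W, pA w ∈ W := by
    intro w hw
    obtain ⟨hw1, hw2⟩ := Submodule.mem_inf.1 hw
    refine Submodule.mem_inf.2 ⟨Submodule.mem_sup_left (hpAmem w), (Submodule.mem_orthogonal _ _).2 ?_⟩
    intro z hz
    have hz1 : z ∈ LA := (Submodule.mem_inf.1 hz).1
    have ha0 : ⟪z, w - pA w⟫ = 0 := by rw [real_inner_comm]; exact hpAorth w z hz1
    have ha1 : ⟪z, w⟫ = 0 := (Submodule.mem_orthogonal _ _).1 hw2 z hz
    have he : ⟪z, pA w⟫ = ⟪z, w⟫ - ⟪z, w - pA w⟫ := by rw [inner_sub_right]; ring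
    rw [he, ha0, ha1]; ring
  have hpBW : ∀ w ∈ W, pB w ∈ W := by
    intro w hw
    obtain ⟨hw1, hw2⟩ := Submodule.mem_inf.1 hw
    refine Submodule.mem_inf.2 ⟨Submodule.mem_sup_right (hpBmem w), (Submodule.mem_orthogonal _ _).2 ?_⟩
    intro z hz
    have hz1 : z ∈ LB := (Submodule.mem_inf.1 hz).2
    have ha0 : ⟪z, w - pB w⟫ = 0 := by rw [real_inner_comm]; exact hpBorth w z hz1
    have ha1 : ⟪z, w⟫ = 0 := (Submodule.mem_orthogonal _ _).1 hw2 z hz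
    have he : ⟪z, pB w⟫ = ⟪z, w⟫ - ⟪z, w - pB w⟫ := by rw [inner_sub_right]; ring
    rw [he, ha0, ha1]; ring
  have hQAW : ∀ (l : ℝ), ∀ w ∈ W, QA l w ∈ W := fun l w hw =>
    W.add_mem (W.smul_mem _ hw) (W.smul_mem _ (hpAW w hw))
  have hQBW : ∀ (m : ℝ), ∀ w ∈ W, QB m w ∈ W := fun m w hw =>
    W.add_mem (W.smul_mem _ hw) (W.smul_mem _ (hpBW w hw))
  -- interval facts
  have hlam_anti : Antitone lam := antitone_nat_of_succ_le hlam_mono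
  have hmu_anti : Antitone mu := antitone_nat_of_succ_le hmu_mono
  have hlam_lb : ∀ n, laminf ≤ lam n := fun n =>
    le_of_tendsto hlaminf (Filter.eventually_atTop.2 ⟨n, fun m hm => hlam_anti hm⟩)
  have hmu_lb : ∀ n, muinf ≤ mu n := fun n =>
    le_of_tendsto hmuinf (Filter.eventually_atTop.2 ⟨n, fun m hm => hmu_anti hm⟩)
  have hlaminf_pos : 0 < laminf := lt_of_lt_of_le hαinf (min_le_left _ _)
  have hmuinf_pos : 0 < muinf := lt_of_lt_of_le hαinf (min_le_right _ _)
  have hlam0lt : lam 0 < 1 := lt_of_le_of_lt (le_max_left _ _) hα₀lt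
  have hmu0lt : mu 0 < 1 := lt_of_le_of_lt (le_max_right _ _) hα₀lt
  have hlam_mem : ∀ n, lam n ∈ Set.Icc laminf (lam 0) :=
    fun n => ⟨hlam_lb n, hlam_anti (Nat.zero_le n)⟩
  have hmu_mem : ∀ n, mu n ∈ Set.Icc muinf (mu 0) :=
    fun n => ⟨hmu_lb n, hmu_anti (Nat.zero_le n)⟩
  -- the strict contraction estimate on the unit sphere of W
  have hstrict : ∀ l ∈ Set.Icc laminf (lam 0), ∀ m ∈ Set.Icc muinf (mu 0),
      ∀ v ∈ W, ‖v‖ = 1 → ‖T l m v‖ < 1 := by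
    intro l hl m hm v hvW hv1
    have hl0 : 0 < l := lt_of_lt_of_le hlaminf_pos hl.1
    have hl1 : l < 1 := lt_of_le_of_lt hl.2 hlam0lt
    have hm0 : 0 < m := lt_of_lt_of_le hmuinf_pos hm.1
    have hm1 : m < 1 := lt_of_le_of_lt hm.2 hmu0lt
    have h1 : ‖QA l v‖ ^ 2 = 1 - l * (2 - l) * ‖v - pA v‖ ^ 2 := by
      rw [hQAsq, hv1]; ring
    have h2 : ‖T l m v‖ ^ 2
        = ‖QA l v‖ ^ 2 - m * (2 - m) * ‖QA l v - pB (QA l v)‖ ^ 2 := hQBsq m (QA l v)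
    have key2 : ‖T l m v‖ ^ 2 < 1 := by
      by_cases hdA : v - pA v = 0
      · have hpAv : pA v = v := (sub_eq_zero.mp hdA).symm
        have hu : QA l v = v := by
          show (1 - l) • v + l • pA v = v
          rw [hpAv]; module
        by_cases hdB : QA l v - pB (QA l v) = 0
        · exfalso
          have hvLA : v ∈ LA := hpAv ▸ hpAmem v
          have hvLB : v ∈ LB := by
            have hh : pB (QA l v) = QA l v := (sub_eq_zero.mp hdB).symm
            rw [hu] at hh
            exact hh ▸ hpBmem v
          have hvW2 := (Submodule.mem_inf.1 hvW).2
          have h0 : ⟪v, v⟫ = 0 :=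
            (Submodule.mem_orthogonal _ _).1 hvW2 v (Submodule.mem_inf.2 ⟨hvLA, hvLB⟩)
          have hv0 : v = 0 := inner_self_eq_zero.1 h0
          rw [hv0] at hv1
          simp at hv1
        · rw [hu] at hdB
          have hdBpos : 0 < ‖v - pB v‖ := norm_pos_iff.2 hdB
          rw [hu, hv1] at h2
          nlinarith [mul_pos (mul_pos hm0 (by linarith : (0:ℝ) < 2 - m)) (pow_pos hdBpos 2)]
      · have hdApos : 0 < ‖v - pA v‖ := norm_pos_iff.2 hdA
        have hQAlt : ‖QA l v‖ ^ 2 < 1 := by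
          nlinarith [mul_pos (mul_pos hl0 (by linarith : (0:ℝ) < 2 - l)) (pow_pos hdApos 2)]
        have hKge : 0 ≤ m * (2 - m) * ‖QA l v - pB (QA l v)‖ ^ 2 :=
          mul_nonneg (mul_nonneg hm0.le (by linarith)) (sq_nonneg _)
        linarith
    nlinarith [norm_nonneg (T l m v)]
  -- homogeneity of T
  have hQAsmul' : ∀ (l t : ℝ) (u : X), QA l (t • u) = t • QA l u := by
    intro l t u
    show (1 - l) • (t • u) + l • pA (t • u) = t • ((1 - l) • u + l • pA u)
    rw [hpAsmul]; module
  have hQBsmul' : ∀ (m t : ℝ) (u : X), QB m (t • u) = t • QB m u := by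
    intro m t u
    show (1 - m) • (t • u) + m • pB (t • u) = t • ((1 - m) • u + m • pB u)
    rw [hpBsmul]; module
  have hT0 : ∀ l m : ℝ, T l m 0 = 0 := by
    intro l m
    show QB m (QA l 0) = 0
    have h1 : QA l (0 : X) = 0 := by
      show (1 - l) • (0 : X) + l • pA 0 = 0
      rw [hpA0]; simp
    rw [h1]
    show (1 - m) • (0 : X) + m • pB 0 = 0
    rw [hpB0]; simp
  -- the uniform contraction constant via compactness
  have key : ∃ ρ ∈ Set.Ioo (0:ℝ) 1, ∀ n : ℕ, ∀ w ∈ W, ‖T (lam n) (mu n) w‖ ≤ ρ * ‖w‖ := by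
    by_cases hWtriv : ∀ w ∈ W, w = (0:X)
    · refine ⟨1/2, by norm_num, ?_⟩
      intro n w hw
      rw [hWtriv w hw, hT0]
      simp
    · push_neg at hWtriv
      obtain ⟨w0, hw0W, hw0ne⟩ := hWtriv
      have hw0norm : ‖w0‖ ≠ 0 := norm_ne_zero_iff.2 hw0ne
      set v0 : X := ‖w0‖⁻¹ • w0 with hv0
      have hv0n : ‖v0‖ = 1 := by
        rw [hv0, norm_smul, Real.norm_eq_abs, abs_of_nonneg (inv_nonneg.2 (norm_nonneg _)),
          inv_mul_cancel₀ hw0norm]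
      have hv0W : v0 ∈ W := W.smul_mem _ hw0W
      set Ksp : Set X := Metric.sphere (0:X) 1 ∩ (W : Set X) with hKspdef
      set K : Set (ℝ × ℝ × X) :=
        (Set.Icc laminf (lam 0)) ×ˢ ((Set.Icc muinf (mu 0)) ×ˢ Ksp) with hKdef
      have hKc : IsCompact K :=
        (isCompact_Icc).prod ((isCompact_Icc).prod
          ((isCompact_sphere (0:X) 1).inter_right W.closed_of_finiteDimensional))
      have hKne : K.Nonempty :=
        ⟨(laminf, muinf, v0), ⟨⟨le_refl _, hlam_lb 0⟩, ⟨le_refl _, hmu_lb 0⟩,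
          ⟨by simpa [mem_sphere_zero_iff_norm] using hv0n, hv0W⟩⟩⟩
      have hpAc : Continuous pA := by
        rw [hpAdef]; exact continuous_subtype_val.comp (Submodule.orthogonalProjectionOnto LA).continuous
      have hpBc : Continuous pB := by
        rw [hpBdef]; exact continuous_subtype_val.comp (Submodule.orthogonalProjectionOnto LB).continuous
      have hQc : Continuous fun p : ℝ × ℝ × X => QA p.1 p.2.2 := by
        show Continuous fun p : ℝ × ℝ × X => (1 - p.1) • p.2.2 + p.1 • pA p.2.2
        exact ((continuous_const.sub continuous_fst).smul (continuous_snd.snd)).add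
          (continuous_fst.smul (hpAc.comp continuous_snd.snd))
      have hgc : Continuous fun p : ℝ × ℝ × X => ‖T p.1 p.2.1 p.2.2‖ := by
        show Continuous fun p : ℝ × ℝ × X =>
          ‖(1 - p.2.1) • (QA p.1 p.2.2) + p.2.1 • pB (QA p.1 p.2.2)‖
        exact (((continuous_const.sub continuous_snd.fst).smul hQc).add
          ((continuous_snd.fst).smul (hpBc.comp hQc))).norm
      obtain ⟨z, hzK, hzmax⟩ := hKc.exists_isMaxOn hKne hgc.continuousOn
      obtain ⟨hz1, hz2, hz3⟩ := hzK
      have hz3' : ‖z.2.2‖ = 1 := mem_sphere_zero_iff_norm.1 hz3.1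
      have hzlt : ‖T z.1 z.2.1 z.2.2‖ < 1 := hstrict z.1 hz1 z.2.1 hz2 z.2.2 hz3.2 hz3'
      set ρ : ℝ := max (‖T z.1 z.2.1 z.2.2‖) (1/2) with hρdef
      refine ⟨ρ, ⟨lt_of_lt_of_le (by norm_num) (le_max_right _ _),
        max_lt hzlt (by norm_num)⟩, ?_⟩
      intro n w hw
      by_cases hw0 : w = 0
      · rw [hw0, hT0]; simp [mul_nonneg (le_trans (by norm_num) (le_max_right (‖T z.1 z.2.1 z.2.2‖) (1/2)))]
      · have hwnorm : ‖w‖ ≠ 0 := norm_ne_zero_iff.2 hw0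
        set v : X := ‖w‖⁻¹ • w with hvdef
        have hvn : ‖v‖ = 1 := by
          rw [hvdef, norm_smul, Real.norm_eq_abs, abs_of_nonneg (inv_nonneg.2 (norm_nonneg _)),
            inv_mul_cancel₀ hwnorm]
        have hvW : v ∈ W := W.smul_mem _ hw
        have hweq : w = ‖w‖ • v := by rw [hvdef, smul_inv_smul₀ hwnorm]
        have hTm : T (lam n) (mu n) w = ‖w‖ • T (lam n) (mu n) v := by
          conv_lhs => rw [hweq]
          show QB (mu n) (QA (lam n) (‖w‖ • v)) = ‖w‖ • QB (mu n) (QA (lam n) v)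
          rw [hQAsmul', hQBsmul']
        have hmemK : (lam n, mu n, v) ∈ K :=
          ⟨hlam_mem n, hmu_mem n, ⟨by simpa [mem_sphere_zero_iff_norm] using hvn, hvW⟩⟩
        have hle : ‖T (lam n) (mu n) v‖ ≤ ρ :=
          le_trans (hzmax hmemK) (le_max_left _ _)
        calc ‖T (lam n) (mu n) w‖ = ‖w‖ * ‖T (lam n) (mu n) v‖ := by
              rw [hTm, norm_smul, Real.norm_eq_abs, abs_of_nonneg (norm_nonneg w)]
          _ ≤ ‖w‖ * ρ := mul_le_mul_of_nonneg_left hle (norm_nonneg w)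
          _ = ρ * ‖w‖ := mul_comm _ _
  -- the affine span fact
  have hspan : ∀ s ∈ S, s - c ∈ LA ⊔ LB := by
    intro s hs
    rw [hS] at hs
    have hQ : affineSpan ℝ (A ∪ B) ≤ AffineSubspace.mk' c (LA ⊔ LB) := by
      rw [affineSpan_le]
      rintro z (hz | hz)
      · obtain ⟨w, hw, rfl⟩ := (hA' z).1 hz
        refine AffineSubspace.mem_mk'.2 ?_
        simpa using Submodule.mem_sup_left hw
      · obtain ⟨w, hw, rfl⟩ := (hB' z).1 hz
        refine AffineSubspace.mem_mk'.2 ?_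
        simpa using Submodule.mem_sup_right hw
    have hmem := hQ hs
    have h2 := AffineSubspace.mem_mk'.1 hmem
    simpa using h2
  -- the limit point
  obtain ⟨pbar, hpbardef⟩ : ∃ pp : X, pp = (Submodule.orthogonalProjectionOnto (LA ⊓ LB) (Y 0 - c) : X) :=
    ⟨_, rfl⟩
  set cbar : X := c + pbar with hcbardef
  have hpbarmem : pbar ∈ LA ⊓ LB := by
    rw [hpbardef]; exact (Submodule.orthogonalProjectionOnto (LA ⊓ LB) (Y 0 - c)).2
  have hcbarA : cbar ∈ A := (hA' cbar).2 ⟨pbar, hpbarmem.1, hcbardef⟩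
  have hcbarB : cbar ∈ B := (hB' cbar).2 ⟨pbar, hpbarmem.2, hcbardef⟩
  have hYdiff : Y 0 - cbar = (Y 0 - c) - pbar := by rw [hcbardef]; abel
  have hY0W : Y 0 - cbar ∈ W := by
    refine Submodule.mem_inf.2 ⟨?_, ?_⟩
    · have h1 : Y 0 - c ∈ LA ⊔ LB := hspan (Y 0) hstart
      have h2 : pbar ∈ LA ⊔ LB := Submodule.mem_sup_left hpbarmem.1
      rw [hYdiff]
      exact Submodule.sub_mem _ h1 h2
    · have h3 := Submodule.sub_starProjection_mem_orthogonal (K := LA ⊓ LB) (Y 0 - c)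
      rw [hYdiff, hpbardef]
      exact h3
  -- the recurrences
  have hxrec : ∀ n, x n - cbar = QA (lam n) (Y n - cbar) := by
    intro n
    obtain ⟨han, hxn, -, -⟩ := hMARP n
    have haeq : a n = c + pA (Y n - c) := by
      rw [hpAdef]; exact projSet_eq_affine LA c A hA' (Y n) (a n) han
    have hpAp : pA pbar = pbar := hpAid pbar hpbarmem.1
    have hsplit : pA (Y n - cbar) = pA (Y n - c) - pbar := by
      have he : Y n - cbar = (Y n - c) - pbar := by rw [hcbardef]; abel
      rw [he, hpAsub, hpAp]
    show x n - cbar = (1 - lam n) • (Y n - cbar) + lam n • pA (Y n - cbar)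
    rw [hxn, haeq, hsplit, hcbardef]
    module
  have hyrec : ∀ n, Y (n + 1) - cbar = QB (mu n) (x n - cbar) := by
    intro n
    obtain ⟨-, -, hbn, hyn⟩ := hMARP n
    have hbeq : b n = c + pB (x n - c) := by
      rw [hpBdef]; exact projSet_eq_affine LB c B hB' (x n) (b n) hbn
    have hpBp : pB pbar = pbar := hpBid pbar hpbarmem.2
    have hsplit : pB (x n - cbar) = pB (x n - c) - pbar := by
      have he : x n - cbar = (x n - c) - pbar := by rw [hcbardef]; abel
      rw [he, hpBsub, hpBp]
    show Y (n + 1) - cbar = (1 - mu n) • (x n - cbar) + mu n • pB (x n - cbar)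
    rw [hyn, hbeq, hsplit, hcbardef]
    module
  -- the induction
  obtain ⟨ρ, hρ, hcontr⟩ := key
  have hM0 : 0 ≤ ‖Y 0 - cbar‖ := norm_nonneg _
  have main : ∀ n, Y n - cbar ∈ W ∧ ‖Y n - cbar‖ ≤ ρ ^ n * ‖Y 0 - cbar‖ := by
    intro n
    induction n with
    | zero => exact ⟨hY0W, by simp⟩
    | succ n ih =>
      have hTrec : Y (n + 1) - cbar = T (lam n) (mu n) (Y n - cbar) := by
        rw [hyrec n, hxrec n]
      constructor
      · rw [hTrec]
        exact hQBW (mu n) _ (hQAW (lam n) _ ih.1)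
      · rw [hTrec]
        calc ‖T (lam n) (mu n) (Y n - cbar)‖ ≤ ρ * ‖Y n - cbar‖ := hcontr n _ ih.1
          _ ≤ ρ * (ρ ^ n * ‖Y 0 - cbar‖) := mul_le_mul_of_nonneg_left ih.2 hρ.1.le
          _ = ρ ^ (n + 1) * ‖Y 0 - cbar‖ := by ring
  refine ⟨ρ, hρ, cbar, ⟨hcbarA, hcbarB⟩, ‖Y 0 - cbar‖, hM0, ?_⟩
  intro n
  have hxb : ‖x n - cbar‖ ≤ ρ ^ n * ‖Y 0 - cbar‖ := by
    rw [hxrec n]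
    exact le_trans (hQAne (lam n) (hlam n).1.le (hlam n).2 _) (main n).2
  have hyb : ‖Y (n + 1) - cbar‖ ≤ ρ ^ n * ‖Y 0 - cbar‖ := by
    have h1 := (main (n + 1)).2
    have h2 : ρ ^ (n + 1) * ‖Y 0 - cbar‖ ≤ ρ ^ n * ‖Y 0 - cbar‖ :=
      mul_le_mul_of_nonneg_right (pow_le_pow_of_le_one hρ.1.le hρ.2.le (Nat.le_succ n)) hM0
    linarith
  rw [mul_comm]
  exact max_le hxb hyb
end

section
/- Let S ⊆ X be both A-projection absorbing and B-projection absorbing, let (λ_n) and (μ_n) be nonincreasing sequences in (0,1] with limits λ_∞ and μ_∞, and assume 1 > α_0 := max{λ_0, μ_0} and min{λ_∞, μ_∞} > 0. Let c ∈ A ∩ B and suppose the CQ condition N_A^S(c) ∩ (−N_B^S(c)) ⊆ {0} holds. Let θ̄ be the limiting CQ-number at c associated with (A,S,B,S), assume θ̄ < 1, let θ ∈ (θ̄, 1), and let ρ̂ ∈ (0,1) be defined by ρ̂² := sup_{n∈ℕ} max{ (λ_{n+1}/λ_n)²·(λ_n² + (1−λ_n)² + 2θλ_n(1−λ_n)),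 (μ_{n+1}/μ_n)²·(μ_n² + (1−μ_n)² + 2θμ_n(1−μ_n)) }. Then there exists δ > 0 such that for every starting point y_{−1} ∈ S with ‖y_{−1} − c‖ ≤ δ, the MARP sequences (x_n) and (y_n) converge linearly with rate ρ̂ to a point of A ∩ B. -/
open Filter Topology RealInnerProductSpace

/-- The `D`-restricted proximal normal cone of `A` at `a`. -/
def pnCone {X : Type*} [NormedAddCommGroup X] [NormedSpace ℝ X]
    (A D : Set X) (a : X) : Set X :=
  {u | ∃ t : ℝ, 0 ≤ t ∧ ∃ z ∈ D, a ∈ projSet A z ∧ u = t • (z - a)}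

/-- The `D`-restricted normal cone of `A` at `a`. -/
def ncCone {X : Type*} [NormedAddCommGroup X] [NormedSpace ℝ X]
    (A D : Set X) (a : X) : Set X :=
  {u | ∃ (aseq useq : ℕ → X), (∀ k, aseq k ∈ A ∧ useq k ∈ pnCone A D (aseq k)) ∧
    Tendsto aseq atTop (nhds a) ∧ Tendsto useq atTop (nhds u)}

/-- The CQ-number at `c` associated with `(A,S,B,S)` and `δ`. -/
noncomputable def cqNumber {X : Type*} [NormedAddCommGroup X]
    [InnerProductSpace ℝ X] (A B S : Set X) (c : X) (δ : ℝ) : ℝ :=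
  sSup {r : ℝ | ∃ p ∈ A, ∃ q ∈ B, ∃ u ∈ pnCone A S p, ∃ v : X, -v ∈ pnCone B S q ∧
    ‖u‖ ≤ 1 ∧ ‖v‖ ≤ 1 ∧ ‖p - c‖ ≤ δ ∧ ‖q - c‖ ≤ δ ∧ r = ⟪u, v⟫}

section auxiliary

set_option linter.unusedSectionVars false
set_option linter.unusedVariables false

section scalarAux

lemma term_le_aux {l l' θ a b : ℝ} (hl : 0 < l) (hlb : l ≤ b) (hl' : 0 ≤ l') (hll : l' ≤ l)
    (ha : 0 < a) (hal : a ≤ l) (hb : b < 1) (hθ0 : 0 ≤ θ) (hθ1 : θ < 1) :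
    (l' / l) ^ 2 * (l ^ 2 + (1 - l) ^ 2 + 2 * θ * l * (1 - l)) ≤
      1 - 2 * (1 - θ) * (a * (1 - b)) := by
  have hr0 : 0 ≤ l' / l := div_nonneg hl' hl.le
  have hr1 : l' / l ≤ 1 := (div_le_one hl).mpr hll
  have hl1 : l < 1 := lt_of_le_of_lt hlb hb
  have hinner0 : 0 ≤ l ^ 2 + (1 - l) ^ 2 + 2 * θ * l * (1 - l) := by
    have := mul_nonneg (mul_nonneg (mul_nonneg (by norm_num : (0:ℝ) ≤ 2) hθ0) hl.le)
      (by linarith : (0:ℝ) ≤ 1 - l)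
    nlinarith
  have h1 : (l' / l) ^ 2 * (l ^ 2 + (1 - l) ^ 2 + 2 * θ * l * (1 - l)) ≤
      l ^ 2 + (1 - l) ^ 2 + 2 * θ * l * (1 - l) := by
    have : (l' / l) ^ 2 ≤ 1 := pow_le_one₀ hr0 hr1
    nlinarith
  have h2 : a * (1 - b) ≤ l * (1 - l) :=
    mul_le_mul hal (by linarith) (by linarith) hl.le
  nlinarith [mul_le_mul_of_nonneg_left h2 (by linarith : (0:ℝ) ≤ 2 * (1 - θ))]

lemma term_pos_aux {l l' θ : ℝ} (hl : 0 < l) (hl1 : l ≤ 1) (hl' : 0 < l') (hθ0 : 0 ≤ θ) :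
    0 < (l' / l) ^ 2 * (l ^ 2 + (1 - l) ^ 2 + 2 * θ * l * (1 - l)) := by
  have h1 : 0 < (l' / l) ^ 2 := by positivity
  have h2 : 0 < l ^ 2 + (1 - l) ^ 2 + 2 * θ * l * (1 - l) := by
    have := mul_nonneg (mul_nonneg (mul_nonneg (by norm_num : (0:ℝ) ≤ 2) hθ0) hl.le)
      (by linarith : (0:ℝ) ≤ 1 - l)
    nlinarith
  exact mul_pos h1 h2

lemma rate_of_div {l l' inner ρ : ℝ} (hl : 0 < l) (h : (l' / l) ^ 2 * inner ≤ ρ ^ 2) :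
    l' ^ 2 * inner ≤ ρ ^ 2 * l ^ 2 := by
  have hl2 : (0:ℝ) < l ^ 2 := by positivity
  have h' := mul_le_mul_of_nonneg_right h hl2.le
  calc l' ^ 2 * inner = (l' / l) ^ 2 * inner * l ^ 2 := by field_simp
    _ ≤ ρ ^ 2 * l ^ 2 := h'

lemma scalar_step {lam lam' mu θ ρ α β γ : ℝ} (hlam : 0 < lam) (hlam1 : lam ≤ 1)
    (hlam' : 0 ≤ lam') (hmu : 0 ≤ mu) (hθ0 : 0 ≤ θ) (hρ : 0 ≤ ρ)
    (hrate : lam' ^ 2 * (lam ^ 2 + (1 - lam) ^ 2 + 2 * θ * lam * (1 - lam)) ≤ ρ ^ 2 * lam ^ 2)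
    (hα : 0 ≤ α) (hβ : 0 ≤ β) (hγ : 0 ≤ γ)
    (hγsq : γ ^ 2 ≤ (1 - lam) ^ 2 * α ^ 2 + mu ^ 2 * β ^ 2 + 2 * θ * mu * (1 - lam) * (α * β)) :
    lam' * γ ≤ ρ * max (lam * α) (mu * β) := by
  set m := max (lam * α) (mu * β) with hm
  have hm0 : 0 ≤ m := le_max_of_le_left (by positivity)
  have h1 : lam * α ≤ m := le_max_left _ _
  have h2 : mu * β ≤ m := le_max_right _ _
  have hl1 : 0 ≤ 1 - lam := by linarith
  have h3 : (lam * α) ^ 2 ≤ m ^ 2 := pow_le_pow_left₀ (by positivity) h1 2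
  have h4 : (mu * β) ^ 2 ≤ m ^ 2 := pow_le_pow_left₀ (by positivity) h2 2
  have h5 : (lam * α) * (mu * β) ≤ m ^ 2 := by
    calc (lam * α) * (mu * β) ≤ m * m := mul_le_mul h1 h2 (by positivity) hm0
      _ = m ^ 2 := (sq m).symm
  have key : lam ^ 2 * γ ^ 2 ≤ m ^ 2 * (lam ^ 2 + (1 - lam) ^ 2 + 2 * θ * lam * (1 - lam)) := by
    nlinarith [mul_le_mul_of_nonneg_left h3 (sq_nonneg (1 - lam)),
      mul_le_mul_of_nonneg_left h4 (sq_nonneg lam),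
      mul_le_mul_of_nonneg_left h5
        (mul_nonneg (mul_nonneg (by linarith : (0:ℝ) ≤ 2 * θ) hlam.le) hl1),
      mul_le_mul_of_nonneg_left hγsq (sq_nonneg lam)]
  have key2 : (lam' * γ) ^ 2 * lam ^ 2 ≤ (ρ * m) ^ 2 * lam ^ 2 := by
    have c1 : lam' ^ 2 * (lam ^ 2 * γ ^ 2) ≤
        lam' ^ 2 * (m ^ 2 * (lam ^ 2 + (1 - lam) ^ 2 + 2 * θ * lam * (1 - lam))) :=
      mul_le_mul_of_nonneg_left key (by positivity)
    have c2 : m ^ 2 * (lam' ^ 2 * (lam ^ 2 + (1 - lam) ^ 2 + 2 * θ * lam * (1 - lam))) ≤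
        m ^ 2 * (ρ ^ 2 * lam ^ 2) := mul_le_mul_of_nonneg_left hrate (by positivity)
    nlinarith
  have key3 : (lam' * γ) ^ 2 ≤ (ρ * m) ^ 2 :=
    le_of_mul_le_mul_right key2 (by positivity)
  exact le_of_pow_le_pow_left₀ (by norm_num) (by positivity) key3

end scalarAux

variable {X : Type*} [NormedAddCommGroup X] [InnerProductSpace ℝ X]

lemma projSet_norm_le {C : Set X} {u p z : X} (h : p ∈ projSet C u) (hz : z ∈ C) :
    ‖u - p‖ ≤ ‖u - z‖ := by
  rw [h.2, ← dist_eq_norm]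
  exact Metric.infDist_le_dist_of_mem hz

lemma cqSet_bddAbove (A B S : Set X) (c : X) (δ : ℝ) :
    BddAbove {r : ℝ | ∃ p ∈ A, ∃ q ∈ B, ∃ u ∈ pnCone A S p, ∃ v : X, -v ∈ pnCone B S q ∧
      ‖u‖ ≤ 1 ∧ ‖v‖ ≤ 1 ∧ ‖p - c‖ ≤ δ ∧ ‖q - c‖ ≤ δ ∧ r = ⟪u, v⟫} := by
  refine ⟨1, fun r hr => ?_⟩
  obtain ⟨p, _, q, _, u, _, v, _, hu1, hv1, _, _, rfl⟩ := hr
  calc ⟪u, v⟫ ≤ ‖u‖ * ‖v‖ := real_inner_le_norm u v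
    _ ≤ 1 := mul_le_one₀ hu1 (norm_nonneg _) hv1

lemma cqNumber_nonneg (A B S : Set X) (c : X) (δ : ℝ) : 0 ≤ cqNumber A B S c δ := by
  unfold cqNumber
  set E := {r : ℝ | ∃ p ∈ A, ∃ q ∈ B, ∃ u ∈ pnCone A S p, ∃ v : X, -v ∈ pnCone B S q ∧
      ‖u‖ ≤ 1 ∧ ‖v‖ ≤ 1 ∧ ‖p - c‖ ≤ δ ∧ ‖q - c‖ ≤ δ ∧ r = ⟪u, v⟫} with hE
  rcases E.eq_empty_or_nonempty with h | h
  · rw [h, Real.sSup_empty]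
  · obtain ⟨r, hr⟩ := h
    obtain ⟨p, hp, q, hq, u, hu, v, hv, hu1, hv1, hpc, hqc, rfl⟩ := hr
    have h0 : (0 : ℝ) ∈ E := by
      obtain ⟨t, ht, z, hz, hpz, hut⟩ := hu
      refine ⟨p, hp, q, hq, 0, ⟨0, le_refl _, z, hz, hpz, by simp⟩, v, hv, by simp, hv1,
        hpc, hqc, by simp⟩
    exact le_csSup (cqSet_bddAbove A B S c δ) h0

lemma cq_pair (A B S : Set X) (c : X) (δ₀ θ : ℝ) (hθ0 : 0 ≤ θ)
    (hcq : cqNumber A B S c δ₀ ≤ θ) {p q u w : X}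
    (hp : p ∈ A) (hq : q ∈ B)
    (hu : u ∈ pnCone A S p) (hw : w ∈ pnCone B S q)
    (hpc : ‖p - c‖ ≤ δ₀) (hqc : ‖q - c‖ ≤ δ₀) :
    ⟪u, -w⟫ ≤ θ * (‖u‖ * ‖w‖) := by
  rcases eq_or_ne u 0 with rfl | hu0
  · simp [hθ0, mul_nonneg, norm_nonneg]
  rcases eq_or_ne w 0 with rfl | hw0
  · simp [hθ0, mul_nonneg, norm_nonneg]
  have hun : (0:ℝ) < ‖u‖ := norm_pos_iff.mpr hu0
  have hwn : (0:ℝ) < ‖w‖ := norm_pos_iff.mpr hw0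
  set u' := ‖u‖⁻¹ • u with hu'
  set w' := ‖w‖⁻¹ • w with hw'
  have hu'mem : u' ∈ pnCone A S p := by
    obtain ⟨t, ht, z, hz, hpz, rfl⟩ := hu
    exact ⟨‖t • (z - p)‖⁻¹ * t, mul_nonneg (inv_nonneg.mpr (norm_nonneg _)) ht, z, hz, hpz,
      by rw [hu', mul_smul]⟩
  have hw'mem : w' ∈ pnCone B S q := by
    obtain ⟨t, ht, z, hz, hpz, rfl⟩ := hw
    exact ⟨‖t • (z - q)‖⁻¹ * t, mul_nonneg (inv_nonneg.mpr (norm_nonneg _)) ht, z, hz, hpz,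
      by rw [hw', mul_smul]⟩
  have hu'n : ‖u'‖ = 1 := by
    rw [hu', norm_smul, norm_inv, norm_norm, inv_mul_cancel₀ hun.ne']
  have hw'n : ‖w'‖ = 1 := by
    rw [hw', norm_smul, norm_inv, norm_norm, inv_mul_cancel₀ hwn.ne']
  have hmem : ⟪u', -w'⟫ ∈ {r : ℝ | ∃ p ∈ A, ∃ q ∈ B, ∃ u ∈ pnCone A S p, ∃ v : X,
      -v ∈ pnCone B S q ∧ ‖u‖ ≤ 1 ∧ ‖v‖ ≤ 1 ∧ ‖p - c‖ ≤ δ₀ ∧ ‖q - c‖ ≤ δ₀ ∧ r = ⟪u, v⟫} := by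
    refine ⟨p, hp, q, hq, u', hu'mem, -w', by simpa using hw'mem, le_of_eq hu'n,
      by simp [hw'n], hpc, hqc, rfl⟩
  have hle : ⟪u', -w'⟫ ≤ θ := le_trans (le_csSup (cqSet_bddAbove A B S c δ₀) hmem) hcq
  have hexp : ⟪u, -w⟫ = (‖u‖ * ‖w‖) * ⟪u', -w'⟫ := by
    rw [hu', hw', ← smul_neg, real_inner_smul_left, real_inner_smul_right]
    field_simp
  rw [hexp]
  calc (‖u‖ * ‖w‖) * ⟪u', -w'⟫ ≤ (‖u‖ * ‖w‖) * θ :=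
        mul_le_mul_of_nonneg_left hle (by positivity)
    _ = θ * (‖u‖ * ‖w‖) := mul_comm _ _

lemma norm_comb_sq {u w : X} {s t θ : ℝ} (hs : 0 ≤ s) (ht : 0 ≤ t)
    (hcq : ⟪u, -w⟫ ≤ θ * (‖u‖ * ‖w‖)) :
    ‖s • u - t • w‖ ^ 2 ≤ s ^ 2 * ‖u‖ ^ 2 + t ^ 2 * ‖w‖ ^ 2 + 2 * θ * t * s * (‖u‖ * ‖w‖) := by
  have h1 : ‖s • u - t • w‖ ^ 2 =
      s ^ 2 * ‖u‖ ^ 2 - 2 * (s * t) * ⟪u, w⟫ + t ^ 2 * ‖w‖ ^ 2 := by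
    rw [@norm_sub_sq_real, real_inner_smul_left, real_inner_smul_right, norm_smul, norm_smul]
    rw [Real.norm_eq_abs, Real.norm_eq_abs, abs_of_nonneg hs, abs_of_nonneg ht]
    ring
  have h2 : -⟪u, w⟫ ≤ θ * (‖u‖ * ‖w‖) := by rwa [← inner_neg_right]
  nlinarith [mul_nonneg hs ht]

end auxiliary

set_option maxHeartbeats 2000000 in
/-- Theorem 5.12 (local convergence of the MARP via the CQ condition). -/
theorem marp_local_convergence_via_CQ
    {X : Type*} [NormedAddCommGroup X] [InnerProductSpace ℝ X] [FiniteDimensional ℝ X]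
    (A B : Set X) (hA : A.Nonempty) (hAclosed : IsClosed A)
    (hB : B.Nonempty) (hBclosed : IsClosed B)
    (S : Set X) (hSA : ProjAbsorbing A S) (hSB : ProjAbsorbing B S)
    (lam mu : ℕ → ℝ) (hlam : ∀ n, lam n ∈ Set.Ioc (0 : ℝ) 1)
    (hmu : ∀ n, mu n ∈ Set.Ioc (0 : ℝ) 1)
    (hlam_mono : ∀ n : ℕ, lam (n + 1) ≤ lam n) (hmu_mono : ∀ n : ℕ, mu (n + 1) ≤ mu n)
    (laminf muinf : ℝ)
    (hlaminf : Tendsto lam atTop (nhds laminf)) (hmuinf : Tendsto mu atTop (nhds muinf))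
    (hα₀lt : max (lam 0) (mu 0) < 1) (hαinf : 0 < min laminf muinf)
    (c : X) (hc : c ∈ A ∩ B)
    (hCQ : ncCone A S c ∩ (-(ncCone B S c)) ⊆ {0})
    (θbar : ℝ)
    (hθbar : Tendsto (fun δ => cqNumber A B S c δ) (nhdsWithin 0 (Set.Ioi 0)) (nhds θbar))
    (hθbar1 : θbar < 1)
    (θ : ℝ) (hθ : θ ∈ Set.Ioo θbar 1)
    (ρhat : ℝ)
    (hρhat : ρhat = Real.sqrt (⨆ n : ℕ, max
      ((lam (n + 1) / lam n) ^ 2 *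
        ((lam n) ^ 2 + (1 - lam n) ^ 2 + 2 * θ * lam n * (1 - lam n)))
      ((mu (n + 1) / mu n) ^ 2 *
        ((mu n) ^ 2 + (1 - mu n) ^ 2 + 2 * θ * mu n * (1 - mu n))))) :
    0 < ρhat ∧ ρhat < 1 ∧
    ∃ δ : ℝ, 0 < δ ∧
      ∀ a x b Y : ℕ → X, IsMARP A B lam mu a x b Y → Y 0 ∈ S → ‖Y 0 - c‖ ≤ δ →
        ∃ cbar ∈ A ∩ B, ∃ M : ℝ, 0 ≤ M ∧
          ∀ n : ℕ, max (‖x n - cbar‖) (‖Y (n + 1) - cbar‖) ≤ M * ρhat ^ n := by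
  obtain ⟨hcA, hcB⟩ := hc
  have hθ1 : θ < 1 := hθ.2
  have hθ0 : 0 ≤ θ := by
    have hbar0 : 0 ≤ θbar := ge_of_tendsto' hθbar (fun δ => cqNumber_nonneg A B S c δ)
    linarith [hθ.1]
  have hlamAnti : Antitone lam := antitone_nat_of_succ_le hlam_mono
  have hmuAnti : Antitone mu := antitone_nat_of_succ_le hmu_mono
  have hlaminf0 : 0 < laminf := lt_of_lt_of_le hαinf (min_le_left _ _)
  have hmuinf0 : 0 < muinf := lt_of_lt_of_le hαinf (min_le_right _ _)
  have hlam_ge : ∀ n, laminf ≤ lam n := fun n =>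
    le_of_tendsto hlaminf (eventually_atTop.mpr ⟨n, fun m hm => hlamAnti hm⟩)
  have hmu_ge : ∀ n, muinf ≤ mu n := fun n =>
    le_of_tendsto hmuinf (eventually_atTop.mpr ⟨n, fun m hm => hmuAnti hm⟩)
  have hlam0lt : lam 0 < 1 := lt_of_le_of_lt (le_max_left _ _) hα₀lt
  have hmu0lt : mu 0 < 1 := lt_of_le_of_lt (le_max_right _ _) hα₀lt
  set F : ℕ → ℝ := fun n => max
      ((lam (n + 1) / lam n) ^ 2 *
        ((lam n) ^ 2 + (1 - lam n) ^ 2 + 2 * θ * lam n * (1 - lam n)))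
      ((mu (n + 1) / mu n) ^ 2 *
        ((mu n) ^ 2 + (1 - mu n) ^ 2 + 2 * θ * mu n * (1 - mu n))) with hFdef
  set eps : ℝ := 2 * (1 - θ) * min (laminf * (1 - lam 0)) (muinf * (1 - mu 0)) with hepsdef
  have heps : 0 < eps := by
    apply mul_pos (by linarith)
    exact lt_min (mul_pos hlaminf0 (by linarith)) (mul_pos hmuinf0 (by linarith))
  have hFle : ∀ n, F n ≤ 1 - eps := by
    intro n
    have hminL : eps ≤ 2 * (1 - θ) * (laminf * (1 - lam 0)) :=
      mul_le_mul_of_nonneg_left (min_le_left _ _) (by linarith)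
    have hminM : eps ≤ 2 * (1 - θ) * (muinf * (1 - mu 0)) :=
      mul_le_mul_of_nonneg_left (min_le_right _ _) (by linarith)
    refine max_le ?_ ?_
    · have h := term_le_aux (l := lam n) (l' := lam (n + 1)) (θ := θ) (a := laminf)
        (b := lam 0) (hlam n).1 (hlamAnti (Nat.zero_le n)) (hlam (n + 1)).1.le
        (hlam_mono n) hlaminf0 (hlam_ge n) hlam0lt hθ0 hθ1
      linarith
    · have h := term_le_aux (l := mu n) (l' := mu (n + 1)) (θ := θ) (a := muinf)
        (b := mu 0) (hmu n).1 (hmuAnti (Nat.zero_le n)) (hmu (n + 1)).1.le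
        (hmu_mono n) hmuinf0 (hmu_ge n) hmu0lt hθ0 hθ1
      linarith
  have hF0 : 0 < F 0 :=
    lt_of_lt_of_le (term_pos_aux (hlam 0).1 (hlam 0).2 (hlam 1).1 hθ0) (le_max_left _ _)
  have hbdd : BddAbove (Set.range F) := ⟨1 - eps, by rintro _ ⟨n, rfl⟩; exact hFle n⟩
  set s := ⨆ n, F n with hsdef
  have hsF : ∀ n, F n ≤ s := fun n => le_ciSup hbdd n
  have hs0 : 0 < s := lt_of_lt_of_le hF0 (hsF 0)
  have hsle : s ≤ 1 - eps := ciSup_le hFle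
  have hρ : ρhat = Real.sqrt s := hρhat
  have hρ2 : ρhat ^ 2 = s := by rw [hρ]; exact Real.sq_sqrt hs0.le
  have hρpos : 0 < ρhat := by rw [hρ]; exact Real.sqrt_pos.mpr hs0
  have hρlt1 : ρhat < 1 := by
    rw [hρ]
    have hs1 : s < 1 := by linarith
    calc Real.sqrt s < Real.sqrt 1 := Real.sqrt_lt_sqrt hs0.le hs1
      _ = 1 := Real.sqrt_one
  have hrateL : ∀ n, lam (n + 1) ^ 2 *
      ((lam n) ^ 2 + (1 - lam n) ^ 2 + 2 * θ * lam n * (1 - lam n)) ≤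
        ρhat ^ 2 * (lam n) ^ 2 := fun n =>
    rate_of_div (hlam n).1 (by rw [hρ2]; exact le_trans (le_max_left _ _) (hsF n))
  have hrateM : ∀ n, mu (n + 1) ^ 2 *
      ((mu n) ^ 2 + (1 - mu n) ^ 2 + 2 * θ * mu n * (1 - mu n)) ≤
        ρhat ^ 2 * (mu n) ^ 2 := fun n =>
    rate_of_div (hmu n).1 (by rw [hρ2]; exact le_trans (le_max_right _ _) (hsF n))
  obtain ⟨δ₀, hδ₀pos, hδ₀⟩ : ∃ δ₀ : ℝ, 0 < δ₀ ∧ cqNumber A B S c δ₀ ≤ θ := by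
    have h1 : ∀ᶠ d in nhdsWithin 0 (Set.Ioi 0), cqNumber A B S c d < θ :=
      hθbar.eventually_lt_const hθ.1
    obtain ⟨ε, hε, hsub⟩ := Metric.mem_nhdsWithin_iff.mp h1
    refine ⟨ε / 2, by linarith, le_of_lt (hsub ⟨?_, ?_⟩)⟩
    · simp only [Metric.mem_ball, Real.dist_eq, sub_zero]
      rw [abs_of_nonneg (by linarith)]
      linarith
    · exact Set.mem_Ioi.mpr (by linarith)
  have h1ρ : 0 < 1 - ρhat := by linarith
  set C0 : ℝ := 1 + 4 / (1 - ρhat) with hC0def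
  have hC0pos : 0 < C0 := by rw [hC0def]; positivity
  have h4C0 : (0:ℝ) < 4 * C0 := by nlinarith
  refine ⟨hρpos, hρlt1, δ₀ / (4 * C0), div_pos hδ₀pos h4C0, ?_⟩
  set δ := δ₀ / (4 * C0) with hδdef
  intro a x b Y hM hY0S hY0c
  have ha : ∀ n, a n ∈ projSet A (Y n) := fun n => (hM n).1
  have hx : ∀ n, x n = (1 - lam n) • Y n + lam n • a n := fun n => (hM n).2.1
  have hbp : ∀ n, b n ∈ projSet B (x n) := fun n => (hM n).2.2.1
  have hY : ∀ n, Y (n + 1) = (1 - mu n) • x n + mu n • b n := fun n => (hM n).2.2.2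
  have hxY : ∀ n, ‖x n - Y n‖ = lam n * ‖Y n - a n‖ := by
    intro n
    have hid : x n - Y n = lam n • (a n - Y n) := by rw [hx n]; module
    rw [hid, norm_smul, Real.norm_eq_abs, abs_of_nonneg (hlam n).1.le, norm_sub_rev]
  have hYx : ∀ n, ‖Y (n + 1) - x n‖ = mu n * ‖x n - b n‖ := by
    intro n
    have hid : Y (n + 1) - x n = mu n • (b n - x n) := by rw [hY n]; module
    rw [hid, norm_smul, Real.norm_eq_abs, abs_of_nonneg (hmu n).1.le, norm_sub_rev]
  have hxS : ∀ n, Y n ∈ S → x n ∈ S := fun n hYSn =>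
    hSA (Y n) hYSn (a n) (ha n)
      ⟨1 - lam n, lam n, by linarith [(hlam n).2], (hlam n).1.le, by ring, (hx n).symm⟩
  have hYSstep : ∀ n, x n ∈ S → Y (n + 1) ∈ S := fun n hxSn =>
    hSB (x n) hxSn (b n) (hbp n)
      ⟨1 - mu n, mu n, by linarith [(hmu n).2], (hmu n).1.le, by ring, (hY n).symm⟩
  set M0 : ℝ := max (lam 0 * ‖Y 0 - a 0‖) (mu 0 * ‖x 0 - b 0‖) with hM0def
  have hM0nonneg : 0 ≤ M0 :=
    le_max_of_le_left (mul_nonneg (hlam 0).1.le (norm_nonneg _))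
  have hαle : ∀ n, ‖Y n - a n‖ ≤ ‖Y n - c‖ := fun n => projSet_norm_le (ha n) hcA
  have hβle : ∀ n, ‖x n - b n‖ ≤ ‖x n - c‖ := fun n => projSet_norm_le (hbp n) hcB
  have haclose : ∀ n, ‖a n - c‖ ≤ 2 * ‖Y n - c‖ := by
    intro n
    have h1 : ‖a n - c‖ ≤ ‖a n - Y n‖ + ‖Y n - c‖ := norm_sub_le_norm_sub_add_norm_sub _ _ _
    have h2 : ‖a n - Y n‖ = ‖Y n - a n‖ := norm_sub_rev _ _
    linarith [hαle n]
  have hxclose : ∀ n, ‖x n - c‖ ≤ 2 * ‖Y n - c‖ := by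
    intro n
    have hid : x n - c = (1 - lam n) • (Y n - c) + lam n • (a n - c) := by rw [hx n]; module
    have h1 : ‖x n - c‖ ≤ ‖(1 - lam n) • (Y n - c)‖ + ‖lam n • (a n - c)‖ := by
      rw [hid]; exact norm_add_le _ _
    rw [norm_smul, norm_smul, Real.norm_eq_abs, Real.norm_eq_abs,
      abs_of_nonneg (by linarith [(hlam n).2] : (0:ℝ) ≤ 1 - lam n),
      abs_of_nonneg (hlam n).1.le] at h1
    nlinarith [haclose n, (hlam n).1, (hlam n).2, norm_nonneg (Y n - c), norm_nonneg (a n - c)]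
  have hbclose : ∀ n, ‖b n - c‖ ≤ 4 * ‖Y n - c‖ := by
    intro n
    have h1 : ‖b n - c‖ ≤ ‖b n - x n‖ + ‖x n - c‖ := norm_sub_le_norm_sub_add_norm_sub _ _ _
    have h2 : ‖b n - x n‖ = ‖x n - b n‖ := norm_sub_rev _ _
    linarith [hβle n, hxclose n]
  set E : ℝ := 2 * M0 / (1 - ρhat) with hEdef
  have hEnonneg : 0 ≤ E := by
    rw [hEdef]; exact div_nonneg (by linarith) h1ρ.le
  have hδpos : 0 < δ := by rw [hδdef]; exact div_pos hδ₀pos h4C0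
  have hM0le : M0 ≤ 2 * δ := by
    have h1 : ‖Y 0 - a 0‖ ≤ δ := le_trans (hαle 0) hY0c
    have h2 : ‖x 0 - b 0‖ ≤ 2 * δ := le_trans (hβle 0) (le_trans (hxclose 0) (by linarith))
    rw [hM0def]
    apply max_le
    · calc lam 0 * ‖Y 0 - a 0‖ ≤ 1 * ‖Y 0 - a 0‖ :=
            mul_le_mul_of_nonneg_right (hlam 0).2 (norm_nonneg _)
        _ = ‖Y 0 - a 0‖ := one_mul _
        _ ≤ δ := h1
        _ ≤ 2 * δ := by linarith
    · calc mu 0 * ‖x 0 - b 0‖ ≤ 1 * ‖x 0 - b 0‖ :=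
            mul_le_mul_of_nonneg_right (hmu 0).2 (norm_nonneg _)
        _ = ‖x 0 - b 0‖ := one_mul _
        _ ≤ 2 * δ := h2
  have hδEδ₀ : δ + E ≤ δ₀ / 4 := by
    have hδC : δ * C0 = δ₀ / 4 := by
      rw [hδdef]
      field_simp
    have hEle : E ≤ 4 * δ / (1 - ρhat) := by
      rw [hEdef]
      exact (div_le_div_iff_of_pos_right h1ρ).mpr (by linarith)
    have hsum : δ + 4 * δ / (1 - ρhat) = δ * C0 := by
      rw [hC0def]; field_simp
    linarith
  -- the main invariant, by induction
  have hkey : ∀ n : ℕ, (Y n ∈ S ∧ x n ∈ S) ∧ ‖Y n - c‖ ≤ δ + E * (1 - ρhat ^ n) ∧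
      max (lam n * ‖Y n - a n‖) (mu n * ‖x n - b n‖) ≤ M0 * ρhat ^ n := by
    intro n
    induction n with
    | zero =>
      refine ⟨⟨hY0S, hxS 0 hY0S⟩, by simpa using hY0c, ?_⟩
      rw [pow_zero, mul_one, hM0def]
    | succ n ih =>
      obtain ⟨⟨hYnS, hxnS⟩, hYnc, hMfn⟩ := ih
      have hYn1S : Y (n + 1) ∈ S := hYSstep n hxnS
      have hxn1S : x (n + 1) ∈ S := hxS (n + 1) hYn1S
      have hρn : (0:ℝ) ≤ ρhat ^ n := by positivity
      have hρn1 : (0:ℝ) ≤ ρhat ^ (n + 1) := by positivity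
      have hρnle : ρhat ^ n ≤ 1 := pow_le_one₀ hρpos.le hρlt1.le
      have hYncE : ‖Y n - c‖ ≤ δ + E := by nlinarith
      have hYn1c : ‖Y (n + 1) - c‖ ≤ δ + E * (1 - ρhat ^ (n + 1)) := by
        have t1 : ‖Y (n + 1) - c‖ ≤ ‖Y (n + 1) - x n‖ + ‖x n - c‖ :=
          norm_sub_le_norm_sub_add_norm_sub _ _ _
        have t1' : ‖x n - c‖ ≤ ‖x n - Y n‖ + ‖Y n - c‖ :=
          norm_sub_le_norm_sub_add_norm_sub _ _ _
        have t2 : ‖x n - Y n‖ ≤ M0 * ρhat ^ n := by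
          rw [hxY n]; exact le_trans (le_max_left _ _) hMfn
        have t3 : ‖Y (n + 1) - x n‖ ≤ M0 * ρhat ^ n := by
          rw [hYx n]; exact le_trans (le_max_right _ _) hMfn
        have hE2 : E * (1 - ρhat) = 2 * M0 := by
          rw [hEdef]; field_simp
        have heq : E * (1 - ρhat ^ (n + 1)) =
            E * (1 - ρhat ^ n) + (E * (1 - ρhat)) * ρhat ^ n := by
          rw [pow_succ]; ring
        rw [hE2] at heq
        linarith
      have hYn1cE : ‖Y (n + 1) - c‖ ≤ δ + E := by
        have hρn1le : ρhat ^ (n + 1) ≤ 1 := pow_le_one₀ hρpos.le hρlt1.le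
        nlinarith
      have hδ4 : ‖Y n - c‖ ≤ δ₀ / 4 := le_trans hYncE hδEδ₀
      have hδ4' : ‖Y (n + 1) - c‖ ≤ δ₀ / 4 := le_trans hYn1cE hδEδ₀
      have han : ‖a n - c‖ ≤ δ₀ := by linarith [haclose n]
      have hbn : ‖b n - c‖ ≤ δ₀ := by linarith [hbclose n]
      have han1 : ‖a (n + 1) - c‖ ≤ δ₀ := by linarith [haclose (n + 1)]
      have huA : (Y n - a n) ∈ pnCone A S (a n) :=
        ⟨1, zero_le_one, Y n, hYnS, ha n, (one_smul ℝ _).symm⟩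
      have hwB : (x n - b n) ∈ pnCone B S (b n) :=
        ⟨1, zero_le_one, x n, hxnS, hbp n, (one_smul ℝ _).symm⟩
      have huA1 : (Y (n + 1) - a (n + 1)) ∈ pnCone A S (a (n + 1)) :=
        ⟨1, zero_le_one, Y (n + 1), hYn1S, ha (n + 1), (one_smul ℝ _).symm⟩
      have hcq1 : ⟪Y n - a n, -(x n - b n)⟫ ≤ θ * (‖Y n - a n‖ * ‖x n - b n‖) :=
        cq_pair A B S c δ₀ θ hθ0 hδ₀ (ha n).1 (hbp n).1 huA hwB han hbn
      have hid1 : Y (n + 1) - a n = (1 - lam n) • (Y n - a n) - mu n • (x n - b n) := by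
        rw [hY n, hx n]; module
      have hsq1 : ‖Y (n + 1) - a n‖ ^ 2 ≤
          (1 - lam n) ^ 2 * ‖Y n - a n‖ ^ 2 + mu n ^ 2 * ‖x n - b n‖ ^ 2 +
            2 * θ * mu n * (1 - lam n) * (‖Y n - a n‖ * ‖x n - b n‖) := by
        calc ‖Y (n + 1) - a n‖ ^ 2
            = ‖(1 - lam n) • (Y n - a n) - mu n • (x n - b n)‖ ^ 2 := by rw [hid1]
          _ ≤ _ := norm_comb_sq (by linarith [(hlam n).2]) (hmu n).1.le hcq1
      have hγle : ‖Y (n + 1) - a (n + 1)‖ ≤ ‖Y (n + 1) - a n‖ :=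
        projSet_norm_le (ha (n + 1)) (ha n).1
      have hsq1' : ‖Y (n + 1) - a (n + 1)‖ ^ 2 ≤
          (1 - lam n) ^ 2 * ‖Y n - a n‖ ^ 2 + mu n ^ 2 * ‖x n - b n‖ ^ 2 +
            2 * θ * mu n * (1 - lam n) * (‖Y n - a n‖ * ‖x n - b n‖) :=
        le_trans (pow_le_pow_left₀ (norm_nonneg _) hγle 2) hsq1
      have hI : lam (n + 1) * ‖Y (n + 1) - a (n + 1)‖ ≤
          ρhat * max (lam n * ‖Y n - a n‖) (mu n * ‖x n - b n‖) :=
        scalar_step (hlam n).1 (hlam n).2 (hlam (n + 1)).1.le (hmu n).1.le hθ0 hρpos.le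
          (hrateL n) (norm_nonneg _) (norm_nonneg _) (norm_nonneg _) hsq1'
      have hcq2 : ⟪x n - b n, -(Y (n + 1) - a (n + 1))⟫ ≤
          θ * (‖x n - b n‖ * ‖Y (n + 1) - a (n + 1)‖) := by
        have h := cq_pair A B S c δ₀ θ hθ0 hδ₀ (ha (n + 1)).1 (hbp n).1 huA1 hwB han1 hbn
        have hsym : ⟪x n - b n, -(Y (n + 1) - a (n + 1))⟫ =
            ⟪Y (n + 1) - a (n + 1), -(x n - b n)⟫ := by
          rw [inner_neg_right, inner_neg_right, real_inner_comm]
        rw [hsym]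
        exact h.trans_eq (by ring)
      have hid2 : x (n + 1) - b n =
          (1 - mu n) • (x n - b n) - lam (n + 1) • (Y (n + 1) - a (n + 1)) := by
        rw [hx (n + 1), hY n]; module
      have hsq2 : ‖x (n + 1) - b n‖ ^ 2 ≤
          (1 - mu n) ^ 2 * ‖x n - b n‖ ^ 2 + lam (n + 1) ^ 2 * ‖Y (n + 1) - a (n + 1)‖ ^ 2 +
            2 * θ * lam (n + 1) * (1 - mu n) * (‖x n - b n‖ * ‖Y (n + 1) - a (n + 1)‖) := by
        calc ‖x (n + 1) - b n‖ ^ 2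
            = ‖(1 - mu n) • (x n - b n) - lam (n + 1) • (Y (n + 1) - a (n + 1))‖ ^ 2 := by
              rw [hid2]
          _ ≤ _ := norm_comb_sq (by linarith [(hmu n).2]) (hlam (n + 1)).1.le hcq2
      have hβle2 : ‖x (n + 1) - b (n + 1)‖ ≤ ‖x (n + 1) - b n‖ :=
        projSet_norm_le (hbp (n + 1)) (hbp n).1
      have hsq2' : ‖x (n + 1) - b (n + 1)‖ ^ 2 ≤
          (1 - mu n) ^ 2 * ‖x n - b n‖ ^ 2 + lam (n + 1) ^ 2 * ‖Y (n + 1) - a (n + 1)‖ ^ 2 +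
            2 * θ * lam (n + 1) * (1 - mu n) * (‖x n - b n‖ * ‖Y (n + 1) - a (n + 1)‖) :=
        le_trans (pow_le_pow_left₀ (norm_nonneg _) hβle2 2) hsq2
      have hII0 : mu (n + 1) * ‖x (n + 1) - b (n + 1)‖ ≤
          ρhat * max (mu n * ‖x n - b n‖) (lam (n + 1) * ‖Y (n + 1) - a (n + 1)‖) :=
        scalar_step (hmu n).1 (hmu n).2 (hmu (n + 1)).1.le (hlam (n + 1)).1.le hθ0 hρpos.le
          (hrateM n) (norm_nonneg _) (norm_nonneg _) (norm_nonneg _) hsq2'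
      have hMfnonneg : 0 ≤ max (lam n * ‖Y n - a n‖) (mu n * ‖x n - b n‖) :=
        le_max_of_le_left (mul_nonneg (hlam n).1.le (norm_nonneg _))
      have hmax2 : max (mu n * ‖x n - b n‖) (lam (n + 1) * ‖Y (n + 1) - a (n + 1)‖) ≤
          max (lam n * ‖Y n - a n‖) (mu n * ‖x n - b n‖) := by
        apply max_le (le_max_right _ _)
        calc lam (n + 1) * ‖Y (n + 1) - a (n + 1)‖
            ≤ ρhat * max (lam n * ‖Y n - a n‖) (mu n * ‖x n - b n‖) := hI
          _ ≤ 1 * max (lam n * ‖Y n - a n‖) (mu n * ‖x n - b n‖) :=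
              mul_le_mul_of_nonneg_right hρlt1.le hMfnonneg
          _ = _ := one_mul _
      have hII : mu (n + 1) * ‖x (n + 1) - b (n + 1)‖ ≤
          ρhat * max (lam n * ‖Y n - a n‖) (mu n * ‖x n - b n‖) :=
        le_trans hII0 (mul_le_mul_of_nonneg_left hmax2 hρpos.le)
      have hMf1 : max (lam (n + 1) * ‖Y (n + 1) - a (n + 1)‖)
          (mu (n + 1) * ‖x (n + 1) - b (n + 1)‖) ≤ M0 * ρhat ^ (n + 1) := by
        have hstep : max (lam (n + 1) * ‖Y (n + 1) - a (n + 1)‖)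
            (mu (n + 1) * ‖x (n + 1) - b (n + 1)‖) ≤
              ρhat * max (lam n * ‖Y n - a n‖) (mu n * ‖x n - b n‖) := max_le hI hII
        have h2 : ρhat * max (lam n * ‖Y n - a n‖) (mu n * ‖x n - b n‖) ≤
            ρhat * (M0 * ρhat ^ n) := mul_le_mul_of_nonneg_left hMfn hρpos.le
        have heq : ρhat * (M0 * ρhat ^ n) = M0 * ρhat ^ (n + 1) := by ring
        linarith
      exact ⟨⟨hYn1S, hxn1S⟩, hYn1c, hMf1⟩
  have hMfle : ∀ n, max (lam n * ‖Y n - a n‖) (mu n * ‖x n - b n‖) ≤ M0 * ρhat ^ n :=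
    fun n => (hkey n).2.2
  have hstepd : ∀ n, dist (Y n) (Y (n + 1)) ≤ (2 * M0) * ρhat ^ n := by
    intro n
    rw [dist_eq_norm, norm_sub_rev]
    have t1 : ‖Y (n + 1) - Y n‖ ≤ ‖Y (n + 1) - x n‖ + ‖x n - Y n‖ :=
      norm_sub_le_norm_sub_add_norm_sub _ _ _
    have t2 : ‖x n - Y n‖ ≤ M0 * ρhat ^ n := by
      rw [hxY n]; exact le_trans (le_max_left _ _) (hMfle n)
    have t3 : ‖Y (n + 1) - x n‖ ≤ M0 * ρhat ^ n := by
      rw [hYx n]; exact le_trans (le_max_right _ _) (hMfle n)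
    linarith
  have hcauchy : CauchySeq Y := cauchySeq_of_le_geometric ρhat (2 * M0) hρlt1 hstepd
  obtain ⟨cbar, hcbar⟩ := cauchySeq_tendsto_of_complete hcauchy
  have hdist : ∀ n, dist (Y n) cbar ≤ (2 * M0) * ρhat ^ n / (1 - ρhat) := fun n =>
    dist_le_of_le_geometric_of_tendsto ρhat (2 * M0) hρlt1 hstepd hcbar n
  have hgeo : Tendsto (fun n : ℕ => ρhat ^ n) atTop (nhds 0) :=
    tendsto_pow_atTop_nhds_zero_of_lt_one hρpos.le hρlt1
  have hYcbar : ∀ n, ‖Y n - cbar‖ ≤ (2 * M0 / (1 - ρhat)) * ρhat ^ n := by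
    intro n
    have h1 := hdist n
    rw [dist_eq_norm] at h1
    have e1 : (2 * M0) * ρhat ^ n / (1 - ρhat) = (2 * M0 / (1 - ρhat)) * ρhat ^ n := by ring
    linarith [e1 ▸ h1]
  have hαbound : ∀ n, ‖Y n - a n‖ ≤ (M0 / laminf) * ρhat ^ n := by
    intro n
    have h1 : lam n * ‖Y n - a n‖ ≤ M0 * ρhat ^ n :=
      le_trans (le_max_left _ _) (hMfle n)
    have h2 : laminf * ‖Y n - a n‖ ≤ M0 * ρhat ^ n :=
      le_trans (mul_le_mul_of_nonneg_right (hlam_ge n) (norm_nonneg _)) h1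
    rw [div_mul_eq_mul_div, le_div_iff₀ hlaminf0]
    linarith [mul_comm laminf (‖Y n - a n‖)]
  have hβbound : ∀ n, ‖x n - b n‖ ≤ (M0 / muinf) * ρhat ^ n := by
    intro n
    have h1 : mu n * ‖x n - b n‖ ≤ M0 * ρhat ^ n :=
      le_trans (le_max_right _ _) (hMfle n)
    have h2 : muinf * ‖x n - b n‖ ≤ M0 * ρhat ^ n :=
      le_trans (mul_le_mul_of_nonneg_right (hmu_ge n) (norm_nonneg _)) h1
    rw [div_mul_eq_mul_div, le_div_iff₀ hmuinf0]
    linarith [mul_comm muinf (‖x n - b n‖)]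
  have hxcbar : ∀ n, ‖x n - cbar‖ ≤ (M0 + 2 * M0 / (1 - ρhat)) * ρhat ^ n := by
    intro n
    have t1 : ‖x n - cbar‖ ≤ ‖x n - Y n‖ + ‖Y n - cbar‖ :=
      norm_sub_le_norm_sub_add_norm_sub _ _ _
    have t2 : ‖x n - Y n‖ ≤ M0 * ρhat ^ n := by
      rw [hxY n]; exact le_trans (le_max_left _ _) (hMfle n)
    have t3 := hYcbar n
    nlinarith
  have hatend : Tendsto a atTop (nhds cbar) := by
    rw [tendsto_iff_norm_sub_tendsto_zero]
    apply squeeze_zero (fun n => norm_nonneg _)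
      (g := fun n => (M0 / laminf + 2 * M0 / (1 - ρhat)) * ρhat ^ n)
    · intro n
      have t1 : ‖a n - cbar‖ ≤ ‖a n - Y n‖ + ‖Y n - cbar‖ :=
        norm_sub_le_norm_sub_add_norm_sub _ _ _
      have t2 : ‖a n - Y n‖ = ‖Y n - a n‖ := norm_sub_rev _ _
      have t3 := hαbound n
      have t4 := hYcbar n
      nlinarith
    · simpa using hgeo.const_mul (M0 / laminf + 2 * M0 / (1 - ρhat))
  have hbtend : Tendsto b atTop (nhds cbar) := by
    rw [tendsto_iff_norm_sub_tendsto_zero]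
    apply squeeze_zero (fun n => norm_nonneg _)
      (g := fun n => (M0 / muinf + (M0 + 2 * M0 / (1 - ρhat))) * ρhat ^ n)
    · intro n
      have t1 : ‖b n - cbar‖ ≤ ‖b n - x n‖ + ‖x n - cbar‖ :=
        norm_sub_le_norm_sub_add_norm_sub _ _ _
      have t2 : ‖b n - x n‖ = ‖x n - b n‖ := norm_sub_rev _ _
      have t3 := hβbound n
      have t4 := hxcbar n
      nlinarith
    · simpa using hgeo.const_mul (M0 / muinf + (M0 + 2 * M0 / (1 - ρhat)))
  have hAmem : cbar ∈ A :=
    hAclosed.mem_of_tendsto hatend (Eventually.of_forall fun n => (ha n).1)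
  have hBmem : cbar ∈ B :=
    hBclosed.mem_of_tendsto hbtend (Eventually.of_forall fun n => (hbp n).1)
  refine ⟨cbar, ⟨hAmem, hBmem⟩, M0 + 2 * M0 / (1 - ρhat), ?_, ?_⟩
  · have : 0 ≤ 2 * M0 / (1 - ρhat) := div_nonneg (by linarith) h1ρ.le
    linarith
  · intro n
    have hρn : (0:ℝ) ≤ ρhat ^ n := by positivity
    apply max_le
    · exact hxcbar n
    · have h1 := hYcbar (n + 1)
      have e1 : (2 * M0 / (1 - ρhat)) * ρhat ^ (n + 1) =
          ((2 * M0 / (1 - ρhat)) * ρhat ^ n) * ρhat := by rw [pow_succ]; ring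
      have h2 : ((2 * M0 / (1 - ρhat)) * ρhat ^ n) * ρhat ≤
          ((2 * M0 / (1 - ρhat)) * ρhat ^ n) * 1 := by
        apply mul_le_mul_of_nonneg_left hρlt1.le
        have : 0 ≤ 2 * M0 / (1 - ρhat) := div_nonneg (by linarith) h1ρ.le
        positivity
      have h3 : 0 ≤ M0 * ρhat ^ n := by positivity
      nlinarith [h1, e1 ▸ h2]
end

section
/- Let (λ_n) and (μ_n) be nonincreasing sequences in (0,1] with limits λ_∞ and μ_∞, and set α_∞ := min{λ_∞, μ_∞}. Let ε > 0 and θ ∈ [0,1) be such that (1−θ)α_∞ > 2ε, and assume α_∞ > 0. Define κ̂ := sup_{n∈ℕ} max{ (λ_{n+1}/λ_n)(θλ_n + 2ε + 1 − λ_n), (μ_{n+1}/μ_n)(θμ_n + 2ε + 1 − μ_n) }. Then 0 < κ̂ ≤ 1 − ((1−θ)α_∞ − 2ε) < 1. -/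
open Filter Topology

/-- Lemma 6.3: bound on the rate constant κ̂. -/
theorem kappa_rate_constant_bound
    (lam mu : ℕ → ℝ) (hlam : ∀ n, lam n ∈ Set.Ioc (0 : ℝ) 1)
    (hmu : ∀ n, mu n ∈ Set.Ioc (0 : ℝ) 1)
    (hlam_mono : ∀ n : ℕ, lam (n + 1) ≤ lam n) (hmu_mono : ∀ n : ℕ, mu (n + 1) ≤ mu n)
    (laminf muinf : ℝ)
    (hlaminf : Tendsto lam atTop (nhds laminf)) (hmuinf : Tendsto mu atTop (nhds muinf))
    (αinf : ℝ) (hαinf : αinf = min laminf muinf) (hαinf_pos : 0 < αinf)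
    (ε : ℝ) (hε : 0 < ε) (θ : ℝ) (hθ : θ ∈ Set.Ico (0 : ℝ) 1)
    (hεθ : 2 * ε < (1 - θ) * αinf)
    (κhat : ℝ)
    (hκhat : κhat = ⨆ n : ℕ, max
      ((lam (n + 1) / lam n) * (θ * lam n + 2 * ε + 1 - lam n))
      ((mu (n + 1) / mu n) * (θ * mu n + 2 * ε + 1 - mu n))) :
    0 < κhat ∧ κhat ≤ 1 - ((1 - θ) * αinf - 2 * ε) ∧ 1 - ((1 - θ) * αinf - 2 * ε) < 1 := by
  obtain ⟨hθ0, hθ1⟩ := hθ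
  have hlam_anti : Antitone lam := antitone_nat_of_succ_le hlam_mono
  have hmu_anti : Antitone mu := antitone_nat_of_succ_le hmu_mono
  have hlam_ge : ∀ n, laminf ≤ lam n := fun n => hlam_anti.le_of_tendsto hlaminf n
  have hmu_ge : ∀ n, muinf ≤ mu n := fun n => hmu_anti.le_of_tendsto hmuinf n
  set B : ℝ := 1 - ((1 - θ) * αinf - 2 * ε) with hB
  have hkey : ∀ (f : ℕ → ℝ), (∀ n, f n ∈ Set.Ioc (0:ℝ) 1) → (∀ n, f (n+1) ≤ f n) →
      (∀ n, αinf ≤ f n) →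
      ∀ n, (f (n + 1) / f n) * (θ * f n + 2 * ε + 1 - f n) ≤ B := by
    intro f hf hfm hfge n
    have hfn := hf n
    have h1 : f (n + 1) / f n ≤ 1 := div_le_one_of_le₀ (hfm n) hfn.1.le
    have h1' : 0 < f (n + 1) / f n := div_pos (hf (n+1)).1 hfn.1
    have hterm : 0 ≤ θ * f n + 2 * ε + 1 - f n := by
      nlinarith [hfn.1, hfn.2]
    have hterm2 : θ * f n + 2 * ε + 1 - f n ≤ B := by
      have := hfge n
      nlinarith
    calc (f (n + 1) / f n) * (θ * f n + 2 * ε + 1 - f n)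
        ≤ 1 * (θ * f n + 2 * ε + 1 - f n) := mul_le_mul_of_nonneg_right h1 hterm
      _ ≤ B := by linarith
  have hlamB := hkey lam hlam hlam_mono (fun n => le_trans (hαinf ▸ min_le_left _ _) (hlam_ge n))
  have hmuB := hkey mu hmu hmu_mono (fun n => le_trans (hαinf ▸ min_le_right _ _) (hmu_ge n))
  have hbdd : BddAbove (Set.range fun n : ℕ => max
      ((lam (n + 1) / lam n) * (θ * lam n + 2 * ε + 1 - lam n))
      ((mu (n + 1) / mu n) * (θ * mu n + 2 * ε + 1 - mu n))) := by
    refine ⟨B, ?_⟩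
    rintro x ⟨n, rfl⟩
    exact max_le (hlamB n) (hmuB n)
  have hle : κhat ≤ B := by
    rw [hκhat]
    exact ciSup_le fun n => max_le (hlamB n) (hmuB n)
  have hpos : 0 < κhat := by
    have h0 : (0:ℝ) < (lam 1 / lam 0) * (θ * lam 0 + 2 * ε + 1 - lam 0) := by
      have h1 := hlam 0
      have h2 := hlam 1
      have : 0 < lam 1 / lam 0 := div_pos h2.1 h1.1
      have hterm : 0 < θ * lam 0 + 2 * ε + 1 - lam 0 := by nlinarith [h1.1, h1.2, mul_nonneg hθ0 h1.1.le]
      exact mul_pos this hterm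
    have := le_ciSup hbdd 0
    rw [hκhat]
    exact lt_of_lt_of_le (lt_of_lt_of_le h0 (le_max_left _ _)) this
  exact ⟨hpos, hle, by simp only [hB]; linarith⟩
end

section
/- Let a > 0, b > 0 and c < 0 be real numbers satisfying max{a, b − 2a} < −c < √(a² + (b−a)²) < b, and let A := {a, c} and B := {b, c} as subsets of ℝ. Then the MAP sequences starting from y_{−1} = 0 (i.e., the MARP sequences with λ_n = μ_n = 1 for all n) satisfy x_n = a and y_n = b for every n ∈ ℕ; in particular, they do not converge to the unique point c of A ∩ B. -/
open Filter Topology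

lemma projSet_pair_eq {p q y z : ℝ} (h : |y - p| < |y - q|)
    (hz : z ∈ projSet {p, q} y) : z = p := by
  obtain ⟨hzmem, hdist⟩ := hz
  have hle : Metric.infDist y ({p, q} : Set ℝ) ≤ dist y p :=
    Metric.infDist_le_dist_of_mem (by simp)
  rcases hzmem with rfl | rfl
  · rfl
  · exfalso
    rw [Real.norm_eq_abs] at hdist
    rw [Real.dist_eq] at hle
    rw [hdist] at h
    linarith [hle.trans_lt h]

/-- Proposition 7.2(i): the MAP cycles between `a` and `b`. -/
theorem map_cycles_two_doubletons
    (a b c : ℝ) (ha : 0 < a) (hb : 0 < b) (hc : c < 0)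
    (h1 : max a (b - 2 * a) < -c)
    (h2 : -c < Real.sqrt (a ^ 2 + (b - a) ^ 2))
    (h3 : Real.sqrt (a ^ 2 + (b - a) ^ 2) < b)
    (A B : Set ℝ) (hA : A = {a, c}) (hB : B = {b, c})
    (aa xx bb Y : ℕ → ℝ)
    (hMARP : IsMARP A B (fun _ => 1) (fun _ => 1) aa xx bb Y)
    (hstart : Y 0 = 0) :
    (∀ n : ℕ, xx n = a ∧ Y (n + 1) = b) ∧
    ¬ Tendsto xx atTop (nhds c) ∧ ¬ Tendsto (fun n => Y (n + 1)) atTop (nhds c) := by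
  have hac : a < -c := lt_of_le_of_lt (le_max_left _ _) h1
  have hb2a : b - 2 * a < -c := lt_of_le_of_lt (le_max_right _ _) h1
  have hcb : -c < b := h2.trans h3
  have hab : a < b := hac.trans hcb
  have key : ∀ n : ℕ, xx n = a ∧ Y (n + 1) = b := by
    intro n
    induction n with
    | zero =>
      obtain ⟨haP, hx, hbP, hY⟩ := hMARP 0
      have hxa : xx 0 = a := by
        rw [hx]; simp only [sub_self, zero_smul, one_smul, zero_add]
        refine projSet_pair_eq ?_ (hA ▸ haP)
        rw [hstart]
        rw [abs_of_nonpos (by linarith), abs_of_nonneg (by linarith)]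
        linarith
      refine ⟨hxa, ?_⟩
      rw [hY]; simp only [sub_self, zero_smul, one_smul, zero_add]
      refine projSet_pair_eq ?_ (hB ▸ hbP)
      rw [hxa, abs_of_nonpos (by linarith), abs_of_nonneg (by linarith)]
      linarith
    | succ n ih =>
      obtain ⟨haP, hx, hbP, hY⟩ := hMARP (n + 1)
      have hxa : xx (n + 1) = a := by
        rw [hx]; simp only [sub_self, zero_smul, one_smul, zero_add]
        refine projSet_pair_eq ?_ (hA ▸ haP)
        rw [ih.2, abs_of_nonneg (by linarith), abs_of_nonneg (by linarith)]
        linarith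
      refine ⟨hxa, ?_⟩
      rw [hY]; simp only [sub_self, zero_smul, one_smul, zero_add]
      refine projSet_pair_eq ?_ (hB ▸ hbP)
      rw [hxa, abs_of_nonpos (by linarith), abs_of_nonneg (by linarith)]
      linarith
  refine ⟨key, ?_, ?_⟩
  · intro h
    have : Tendsto xx atTop (nhds a) := by
      have : xx = fun _ => a := funext fun n => (key n).1
      rw [this]; exact tendsto_const_nhds
    have := tendsto_nhds_unique h this
    linarith
  · intro h
    have : Tendsto (fun n => Y (n + 1)) atTop (nhds b) := by
      have : (fun n => Y (n + 1)) = fun _ => b := funext fun n => (key n).2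
      rw [this]; exact tendsto_const_nhds
    have := tendsto_nhds_unique h this
    linarith
end

section
/- Let a > 0, b > 0 and c < 0 be real numbers satisfying max{a, b − 2a} < −c < √(a² + (b−a)²) < b, and let A := {a, c} and B := {b, c} as subsets of ℝ. Fix λ in the (nonempty) open interval ( (a + c + √(c² − a²))/(2a), (b + c)/(2a) ) ⊆ (0,1), and let λ_n = μ_n = λ for every n. Then the MARP sequences (x_n) and (y_n) with starting point y_{−1} = 0 converge linearly to c with rate 1 − λ; in particular they converge to the unique point of A ∩ B. -/
open Filter Topology

lemma proj_pair_left {p q v u : ℝ} (h : u ∈ projSet {p, q} v)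
    (hlt : |v - p| < |v - q|) : u = p := by
  obtain ⟨hm, he⟩ := h
  simp only [Set.mem_insert_iff, Set.mem_singleton_iff] at hm
  rcases hm with rfl | rfl
  · rfl
  · exfalso
    have hle : Metric.infDist v ({p, u} : Set ℝ) ≤ dist v p :=
      Metric.infDist_le_dist_of_mem (by simp)
    rw [Real.dist_eq] at hle
    rw [Real.norm_eq_abs] at he
    rw [← he] at hle
    linarith

set_option maxHeartbeats 1000000 in
/-- Proposition 7.2(ii): the λ-MARP converges linearly with rate `1 - λ` to the
unique point of `A ∩ B`. -/
theorem marp_converges_two_doubletons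
    (a b c : ℝ) (ha : 0 < a) (hb : 0 < b) (hc : c < 0)
    (h1 : max a (b - 2 * a) < -c)
    (h2 : -c < Real.sqrt (a ^ 2 + (b - a) ^ 2))
    (h3 : Real.sqrt (a ^ 2 + (b - a) ^ 2) < b)
    (A B : Set ℝ) (hA : A = {a, c}) (hB : B = {b, c})
    (lam : ℝ)
    (hlam : lam ∈ Set.Ioo ((a + c + Real.sqrt (c ^ 2 - a ^ 2)) / (2 * a)) ((b + c) / (2 * a)))
    (aa xx bb Y : ℕ → ℝ)
    (hMARP : IsMARP A B (fun _ => lam) (fun _ => lam) aa xx bb Y)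
    (hstart : Y 0 = 0) :
    (0 < lam ∧ lam < 1) ∧ A ∩ B = {c} ∧
    ∃ M : ℝ, 0 ≤ M ∧
      ∀ n : ℕ, max (|xx n - c|) (|Y (n + 1) - c|) ≤ M * (1 - lam) ^ n := by
  obtain ⟨hl1, hl2⟩ := hlam
  obtain ⟨S, hSdef⟩ : ∃ S, S = Real.sqrt (c ^ 2 - a ^ 2) := ⟨_, rfl⟩
  rw [← hSdef] at hl1
  have hca : a < -c := lt_of_le_of_lt (le_max_left _ _) h1
  have hba : b - 2 * a < -c := lt_of_le_of_lt (le_max_right _ _) h1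
  have hcb : -c < b := h2.trans h3
  have hac : a + c < 0 := by linarith
  have hc2a2 : (0:ℝ) ≤ c ^ 2 - a ^ 2 := by nlinarith
  have hS2 : S ^ 2 = c ^ 2 - a ^ 2 := by rw [hSdef]; exact Real.sq_sqrt hc2a2
  have hS0 : (0:ℝ) ≤ S := hSdef ▸ Real.sqrt_nonneg _
  have h2a : (0:ℝ) < 2 * a := by linarith
  have hSgt : -(a + c) < S := by
    nlinarith [hS2, hS0, hac, sq_nonneg (S + (a + c)), sq_nonneg (S - (a + c))]
  have hlam_pos : 0 < lam :=
    lt_trans (div_pos (by linarith) h2a) hl1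
  have hlam_lt1 : lam < 1 := by
    have : (b + c) / (2 * a) < 1 := (div_lt_one h2a).mpr (by linarith)
    linarith
  have hl1' : a + c + S < 2 * a * lam := by
    have := (div_lt_iff₀ h2a).mp hl1
    linarith
  have hl2' : 2 * a * lam < b + c := by
    have := (lt_div_iff₀ h2a).mp hl2
    linarith
  obtain ⟨ρ, hρdef⟩ : ∃ r, r = 1 - lam := ⟨_, rfl⟩
  have hρ0 : 0 < ρ := by rw [hρdef]; linarith
  have hρ1 : ρ < 1 := by rw [hρdef]; linarith
  obtain ⟨d, hddef⟩ : ∃ dd, dd = lam * a - c := ⟨_, rfl⟩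
  have hd : 0 < d := by
    have : 0 < lam * a := mul_pos hlam_pos ha
    rw [hddef]; linarith
  -- key inequalities
  have keyA : ρ * d < (a - c) / 2 := by
    rw [hρdef, hddef]
    nlinarith [hl1', hS2, hS0,
      mul_pos (show (0:ℝ) < 2 * a * lam - (a + c) - S by linarith)
        (show (0:ℝ) < 2 * a * lam - (a + c) + S by linarith)]
  have keyB : d < (b - c) / 2 := by
    rw [hddef]; nlinarith
  have hρle1 : ∀ m : ℕ, ρ ^ m ≤ 1 := fun m => pow_le_one₀ hρ0.le hρ1.le
  have hρpow : ∀ m : ℕ, 1 ≤ m → ρ ^ m ≤ ρ := by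
    intro m hm
    calc ρ ^ m ≤ ρ ^ 1 := pow_le_pow_of_le_one hρ0.le hρ1.le hm
    _ = ρ := pow_one ρ
  have main : ∀ n, xx n - c = ρ ^ (2 * n) * d ∧ Y (n + 1) - c = ρ ^ (2 * n + 1) * d := by
    intro n
    induction n with
    | zero =>
      obtain ⟨hA0, hx0, hB0, hY0⟩ := hMARP 0
      rw [hA] at hA0
      rw [hstart] at hx0 hA0
      have ha0 : aa 0 = a := by
        apply proj_pair_left hA0
        rw [abs_of_nonpos (by linarith), abs_of_nonneg (by linarith)]
        linarith
      rw [ha0] at hx0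
      simp only [smul_eq_mul, mul_zero, zero_add] at hx0
      have hb0 : bb 0 = c := by
        rw [hB, Set.pair_comm] at hB0
        apply proj_pair_left hB0
        rw [hx0]
        have hlaa : 0 < lam * a := mul_pos hlam_pos ha
        have hxc : 0 < lam * a - c := by linarith
        have hxb : lam * a - b < 0 := by linarith
        rw [abs_of_pos hxc, abs_of_neg hxb]
        linarith
      constructor
      · rw [hx0, hddef]; norm_num
      · rw [hY0, hx0, hb0]
        simp only [smul_eq_mul]
        rw [hρdef, hddef]
        norm_num
        ring
    | succ n ih =>
      obtain ⟨hAn, hxn, hBn, hYn⟩ := hMARP (n + 1)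
      have hYval : Y (n + 1) = c + ρ ^ (2 * n + 1) * d := by linarith [ih.2]
      have hple : ρ ^ (2 * n + 1) * d ≤ ρ * d :=
        mul_le_mul_of_nonneg_right (hρpow _ (by omega)) hd.le
      have hppos : 0 < ρ ^ (2 * n + 1) * d := mul_pos (pow_pos hρ0 _) hd
      have han : aa (n + 1) = c := by
        rw [hA, Set.pair_comm] at hAn
        apply proj_pair_left hAn
        rw [hYval]
        have e1 : c + ρ ^ (2 * n + 1) * d - c = ρ ^ (2 * n + 1) * d := by ring
        rw [e1, abs_of_pos hppos, abs_of_neg (by linarith : c + ρ ^ (2 * n + 1) * d - a < 0)]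
        linarith
      rw [han, hYval] at hxn
      simp only [smul_eq_mul] at hxn
      have hpow2 : ρ ^ (2 * n + 2) = ρ ^ (2 * n + 1) * ρ := pow_succ ρ (2 * n + 1)
      have hxval : xx (n + 1) = c + ρ ^ (2 * n + 2) * d := by
        rw [hxn, hpow2, hρdef]
        ring
      have hqpos : 0 < ρ ^ (2 * n + 2) * d := mul_pos (pow_pos hρ0 _) hd
      have hqle : ρ ^ (2 * n + 2) * d ≤ d := by
        nlinarith [hρle1 (2 * n + 2)]
      have hbn : bb (n + 1) = c := by
        rw [hB, Set.pair_comm] at hBn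
        apply proj_pair_left hBn
        rw [hxval]
        have e1 : c + ρ ^ (2 * n + 2) * d - c = ρ ^ (2 * n + 2) * d := by ring
        rw [e1, abs_of_pos hqpos, abs_of_neg (by linarith : c + ρ ^ (2 * n + 2) * d - b < 0)]
        linarith
      rw [hbn, hxval] at hYn
      simp only [smul_eq_mul] at hYn
      have hpow3 : ρ ^ (2 * n + 3) = ρ ^ (2 * n + 2) * ρ := pow_succ ρ (2 * n + 2)
      have hYval2 : Y (n + 1 + 1) = c + ρ ^ (2 * n + 3) * d := by
        rw [hYn, hpow3, hρdef]
        ring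
      constructor
      · rw [hxval]
        have e : 2 * (n + 1) = 2 * n + 2 := by ring
        rw [e]; ring
      · rw [hYval2]
        have e : 2 * (n + 1) + 1 = 2 * n + 3 := by ring
        rw [e]; ring
  refine ⟨⟨hlam_pos, hlam_lt1⟩, ?_, ?_⟩
  · have hab : a ≠ b := by intro h; rw [h] at hca; linarith
    ext x
    simp only [hA, hB, Set.mem_inter_iff, Set.mem_insert_iff, Set.mem_singleton_iff]
    constructor
    · rintro ⟨rfl | rfl, h2 | h2⟩ <;> tauto
    · rintro rfl; exact ⟨Or.inr rfl, Or.inr rfl⟩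
  · refine ⟨d, hd.le, fun n => ?_⟩
    rw [← hρdef]
    obtain ⟨hx, hY⟩ := main n
    have hpow1 : ρ ^ (2 * n) ≤ ρ ^ n := pow_le_pow_of_le_one hρ0.le hρ1.le (by omega)
    have hpow2 : ρ ^ (2 * n + 1) ≤ ρ ^ n := pow_le_pow_of_le_one hρ0.le hρ1.le (by omega)
    have h1' : |xx n - c| ≤ d * ρ ^ n := by
      rw [hx, abs_of_nonneg (mul_nonneg (pow_pos hρ0 _).le hd.le)]
      calc ρ ^ (2 * n) * d ≤ ρ ^ n * d := mul_le_mul_of_nonneg_right hpow1 hd.le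
      _ = d * ρ ^ n := by ring
    have h2' : |Y (n + 1) - c| ≤ d * ρ ^ n := by
      rw [hY, abs_of_nonneg (mul_nonneg (pow_pos hρ0 _).le hd.le)]
      calc ρ ^ (2 * n + 1) * d ≤ ρ ^ n * d := mul_le_mul_of_nonneg_right hpow2 hd.le
      _ = d * ρ ^ n := by ring
    exact max_le h1' h2'
end
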